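/- arXiv:2405.16614 — 8 statements merged into one kernel-verified Lean document; each statement's English description precedes it below -/
import Mathlib

section
/- Let 0 < β < 1, α > 0, λ > 0. Then the function y ↦ (e^{iξy} − 1)·α·e^{−λy}·y^{−1−β} is integrable on (0,∞) for every real ξ, and ∫₀^∞ (e^{iξy} − 1)·α·e^{−λy}·y^{−1−β} dy = α·Γ(−β)·((λ − iξ)^β − λ^β), where z^β denotes the principal branch of the complex power and Γ is the Gamma function (extended to −β ∈ (−1,0) by the functional equation). -/
open MeasureTheory Set Filter Complex Topology

namespace TemperedAux

lemma intOn_rpow_exp {p lam : ℝ} (hp : -1 < p) (hlam : 0 < lam) :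
    IntegrableOn (fun t : ℝ => t ^ p * Real.exp (-(lam * t))) (Ioi 0) := by
  have h0 : (0:ℝ) < p + 1 := by linarith
  have h := Real.GammaIntegral_convergent h0
  simp only [add_sub_cancel_right] at h
  have h2 : IntegrableOn (fun t : ℝ => Real.exp (-(lam * t)) * (lam * t) ^ p) (Ioi 0) := by
    have := (integrableOn_Ioi_comp_mul_left_iff
      (fun x : ℝ => Real.exp (-x) * x ^ p) 0 hlam).mpr
    simpa using this (by simpa using h)
  have h3 := h2.const_mul (lam ^ (-p))
  refine IntegrableOn.congr_fun h3 (fun t ht => ?_) measurableSet_Ioi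
  rw [mem_Ioi] at ht
  rw [Real.mul_rpow hlam.le ht.le, Real.rpow_neg hlam.le]
  field_simp

lemma norm_integrand {t : ℝ} (p lam : ℝ) (ht : 0 < t) (ξ : ℝ) :
    ‖((t ^ p : ℝ) : ℂ) * Complex.exp ((Complex.I * ξ - lam) * t)‖
      = t ^ p * Real.exp (-(lam * t)) := by
  rw [norm_mul, Complex.norm_real, Real.norm_eq_abs, Complex.norm_exp]
  congr 1
  · exact abs_of_nonneg (Real.rpow_nonneg ht.le p)
  · congr 1
    simp [Complex.sub_re, Complex.mul_re, Complex.mul_im]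


lemma meas_integrand (p lam : ℝ) (ξ : ℝ) :
    AEStronglyMeasurable
      (fun t : ℝ => ((t ^ p : ℝ) : ℂ) * Complex.exp ((Complex.I * ξ - lam) * t))
      (volume.restrict (Ioi 0)) := by
  apply Measurable.aestronglyMeasurable
  fun_prop

lemma intOn_cpow_cexp {p lam : ℝ} (hp : -1 < p) (hlam : 0 < lam) (ξ : ℝ) :
    IntegrableOn
      (fun t : ℝ => ((t ^ p : ℝ) : ℂ) * Complex.exp ((Complex.I * ξ - lam) * t)) (Ioi 0) := by
  refine Integrable.mono' (intOn_rpow_exp hp hlam) (meas_integrand p lam ξ) ?_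
  filter_upwards [ae_restrict_mem measurableSet_Ioi] with t ht
  rw [norm_integrand p lam ht ξ]


lemma hasDerivAt_cexp_lin (w : ℂ) (t : ℝ) :
    HasDerivAt (fun t : ℝ => Complex.exp (w * t)) (w * Complex.exp (w * t)) t := by
  have h1 : HasDerivAt (fun t : ℝ => w * (t : ℂ)) w t := by
    simpa using ((hasDerivAt_id t).ofReal_comp.const_mul w)
  simpa [mul_comm] using h1.cexp

lemma hasDerivAt_rpow_cast {s t : ℝ} (ht : 0 < t) :
    HasDerivAt (fun t : ℝ => ((t ^ s : ℝ) : ℂ)) ((s * t ^ (s - 1) : ℝ) : ℂ) t :=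
  (Real.hasDerivAt_rpow_const (Or.inl ht.ne')).ofReal_comp

lemma ibp_cexp {s lam : ℝ} (hs : 0 < s) (hlam : 0 < lam) (ξ : ℝ) :
    (s : ℂ) * (∫ t in Ioi (0:ℝ),
        ((t ^ (s - 1) : ℝ) : ℂ) * Complex.exp ((Complex.I * ξ - lam) * t))
      + (Complex.I * ξ - lam) * (∫ t in Ioi (0:ℝ),
        ((t ^ s : ℝ) : ℂ) * Complex.exp ((Complex.I * ξ - lam) * t)) = 0 := by
  set w : ℂ := Complex.I * ξ - lam with hw
  have hint1 : IntegrableOn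
      (fun t : ℝ => (s : ℂ) * (((t ^ (s-1) : ℝ) : ℂ) * Complex.exp (w * t))) (Ioi 0) :=
    (intOn_cpow_cexp (by linarith) hlam ξ).const_mul _
  have hint2 : IntegrableOn
      (fun t : ℝ => w * (((t ^ s : ℝ) : ℂ) * Complex.exp (w * t))) (Ioi 0) :=
    (intOn_cpow_cexp (by linarith) hlam ξ).const_mul _
  have key := integral_Ioi_of_hasDerivAt_of_tendsto
    (f := fun t : ℝ => ((t ^ s : ℝ) : ℂ) * Complex.exp (w * t))
    (f' := fun t : ℝ => (s : ℂ) * (((t ^ (s-1) : ℝ) : ℂ) * Complex.exp (w * t))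
      + w * (((t ^ s : ℝ) : ℂ) * Complex.exp (w * t)))
    (a := 0) (m := 0) ?_ ?_ (hint1.add hint2) ?_
  · rw [integral_add hint1 hint2, MeasureTheory.integral_const_mul, MeasureTheory.integral_const_mul] at key
    simpa [Real.zero_rpow hs.ne'] using key
  · -- continuity at 0 within Ici 0
    apply ContinuousWithinAt.mul
    · exact ((Complex.continuous_ofReal.continuousAt.comp
        (Real.continuousAt_rpow_const 0 s (Or.inr hs.le)))).continuousWithinAt
    · exact (Complex.continuous_exp.comp (by fun_prop)).continuousWithinAt
  · intro t ht
    rw [mem_Ioi] at ht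
    have := (hasDerivAt_rpow_cast (s := s) ht).mul (hasDerivAt_cexp_lin w t)
    refine this.congr_deriv (Eq.symm ?_)
    push_cast
    ring
  · -- tendsto 0 at top
    refine squeeze_zero_norm' (a := fun t : ℝ => t ^ s * Real.exp (-(lam * t))) ?_ ?_
    · filter_upwards [eventually_gt_atTop (0:ℝ)] with t ht
      exact le_of_eq (norm_integrand s lam ht ξ)
    · simpa [neg_mul] using tendsto_rpow_mul_exp_neg_mul_atTop_nhds_zero s lam hlam


lemma key_integral {s lam : ℝ} (hs : 0 < s) (hlam : 0 < lam) (ξ : ℝ) :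
    ∫ t in Ioi (0:ℝ), ((t ^ (s - 1) : ℝ) : ℂ) * Complex.exp ((Complex.I * ξ - lam) * t)
      = (Real.Gamma s : ℂ) * ((lam : ℂ) - Complex.I * ξ) ^ (-(s : ℂ)) := by
  set u : ℝ → ℂ := fun x => (lam : ℂ) - Complex.I * x with hu
  have hure : ∀ x : ℝ, 0 < (u x).re := by
    intro x
    simp [hu, Complex.sub_re, Complex.mul_re]
    exact hlam
  have hune : ∀ x : ℝ, u x ≠ 0 := by
    intro x h0
    have := hure x
    rw [h0] at this
    simp at this
  -- derivative of the parametrized integral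
  have hD : ∀ x₀ : ℝ, HasDerivAt
      (fun x : ℝ => ∫ t in Ioi (0:ℝ),
        ((t ^ (s - 1) : ℝ) : ℂ) * Complex.exp ((Complex.I * x - lam) * t))
      (Complex.I * ((s : ℂ) * (∫ t in Ioi (0:ℝ),
        ((t ^ (s - 1) : ℝ) : ℂ) * Complex.exp ((Complex.I * x₀ - lam) * t)) / u x₀)) x₀ := by
    intro x₀
    have main := hasDerivAt_integral_of_dominated_loc_of_deriv_le
      (μ := volume.restrict (Ioi 0)) (x₀ := x₀)
      (F := fun (x : ℝ) (t : ℝ) =>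
        ((t ^ (s - 1) : ℝ) : ℂ) * Complex.exp ((Complex.I * x - lam) * t))
      (F' := fun (x : ℝ) (t : ℝ) =>
        ((t ^ (s - 1) : ℝ) : ℂ) * (Complex.I * t * Complex.exp ((Complex.I * x - lam) * t)))
      (bound := fun t : ℝ => t ^ s * Real.exp (-(lam * t)))
      (Metric.ball_mem_nhds x₀ one_pos)
      (Eventually.of_forall fun x => meas_integrand (s - 1) lam x)
      (intOn_cpow_cexp (by linarith) hlam x₀)
      (by apply Measurable.aestronglyMeasurable; fun_prop)
      ?_ (intOn_rpow_exp (by linarith) hlam) ?_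
    · obtain ⟨-, hd⟩ := main
      have e1 : (∫ t in Ioi (0:ℝ),
            ((t ^ (s - 1) : ℝ) : ℂ) * (Complex.I * t * Complex.exp ((Complex.I * x₀ - lam) * t)))
          = Complex.I * ∫ t in Ioi (0:ℝ),
            ((t ^ s : ℝ) : ℂ) * Complex.exp ((Complex.I * x₀ - lam) * t) := by
        rw [← MeasureTheory.integral_const_mul]
        refine setIntegral_congr_fun measurableSet_Ioi (fun t ht => ?_)
        rw [mem_Ioi] at ht
        have hts : (t : ℝ) ^ s = t ^ (s - 1) * t := by
          rw [← Real.rpow_add_one ht.ne' (s - 1)]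
          ring_nf
        rw [hts]
        push_cast
        ring
      have e2 := ibp_cexp hs hlam x₀
      have e3 : (∫ t in Ioi (0:ℝ),
            ((t ^ s : ℝ) : ℂ) * Complex.exp ((Complex.I * x₀ - lam) * t))
          = (s : ℂ) * (∫ t in Ioi (0:ℝ),
            ((t ^ (s - 1) : ℝ) : ℂ) * Complex.exp ((Complex.I * x₀ - lam) * t)) / u x₀ := by
        rw [eq_div_iff (hune x₀)]
        rw [show u x₀ = (lam : ℂ) - Complex.I * x₀ from rfl]
        linear_combination -e2
      rw [e1, e3] at hd
      exact hd
    · -- bound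
      filter_upwards [ae_restrict_mem measurableSet_Ioi] with t ht
      intro x _
      rw [mem_Ioi] at ht
      have hre : ((Complex.I * x - lam) * t).re = -(lam * t) := by
        simp [Complex.sub_re, Complex.mul_re, Complex.mul_im]
      rw [norm_mul, norm_mul, norm_mul,
        Complex.norm_real, Complex.norm_I, Complex.norm_real,
        Complex.norm_exp, hre, Real.norm_eq_abs, Real.norm_eq_abs,
        _root_.abs_of_nonneg (Real.rpow_nonneg ht.le _), _root_.abs_of_nonneg ht.le]
      have hts : (t : ℝ) ^ s = t ^ (s - 1) * t := by
        rw [← Real.rpow_add_one ht.ne' (s - 1)]; ring_nf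
      rw [hts]
      ring_nf
      exact le_refl _
    · -- differentiability in x
      filter_upwards [ae_restrict_mem measurableSet_Ioi] with t ht
      intro x _
      have hg : HasDerivAt (fun x : ℝ => (Complex.I * x - lam) * t) (Complex.I * t) x := by
        have h1 : HasDerivAt (fun x : ℝ => Complex.I * (x : ℂ)) Complex.I x := by
          simpa using ((hasDerivAt_id x).ofReal_comp.const_mul Complex.I)
        simpa using ((h1.sub_const (lam : ℂ)).mul_const (t : ℂ))
      have := (hg.cexp).const_mul ((t ^ (s - 1) : ℝ) : ℂ)
      refine this.congr_deriv (Eq.symm ?_)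
      ring
  -- the function u x ^ s * (integral) has zero derivative
  have hDφ : ∀ x : ℝ, HasDerivAt
      (fun x : ℝ => u x ^ (s : ℂ) * ∫ t in Ioi (0:ℝ),
        ((t ^ (s - 1) : ℝ) : ℂ) * Complex.exp ((Complex.I * x - lam) * t)) 0 x := by
    intro x
    have hu' : HasDerivAt u (-Complex.I) x := by
      have h1 : HasDerivAt (fun x : ℝ => Complex.I * (x : ℂ)) Complex.I x := by
        simpa using ((hasDerivAt_id x).ofReal_comp.const_mul Complex.I)
      simpa using (h1.const_sub (lam : ℂ))
    have hsl : u x ∈ Complex.slitPlane := Complex.mem_slitPlane_iff.mpr (Or.inl (hure x))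
    have hcp := ((Complex.hasStrictDerivAt_cpow_const (c := (s : ℂ)) hsl).hasDerivAt).comp x hu'
    have hmul := hcp.mul (hD x)
    refine hmul.congr_deriv (Eq.symm ?_)
    have hsplit : u x ^ (s : ℂ) = u x ^ ((s : ℂ) - 1) * u x := by
      conv_lhs => rw [show (s : ℂ) = ((s : ℂ) - 1) + 1 by ring]
      rw [Complex.cpow_add _ _ (hune x), Complex.cpow_one]
    simp only [Function.comp_apply]
    rw [hsplit]
    field_simp [hune x]
    ring
  -- constancy
  have hconst : u ξ ^ (s : ℂ) * (∫ t in Ioi (0:ℝ),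
        ((t ^ (s - 1) : ℝ) : ℂ) * Complex.exp ((Complex.I * ξ - lam) * t))
      = u 0 ^ (s : ℂ) * (∫ t in Ioi (0:ℝ),
        ((t ^ (s - 1) : ℝ) : ℂ) * Complex.exp ((Complex.I * (0:ℝ) - lam) * t)) :=
    is_const_of_deriv_eq_zero (fun y => (hDφ y).differentiableAt)
      (fun y => (hDφ y).deriv) ξ 0
  -- value at 0
  have hu0 : u 0 = (lam : ℂ) := by
    simp [hu]
  have h0 : (∫ t in Ioi (0:ℝ),
        ((t ^ (s - 1) : ℝ) : ℂ) * Complex.exp ((Complex.I * (0:ℝ) - lam) * t))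
      = (1 / (lam : ℂ)) ^ (s : ℂ) * Complex.Gamma s := by
    rw [← integral_cpow_mul_exp_neg_mul_Ioi
      (show 0 < (Complex.ofReal s).re by simpa using hs) hlam]
    refine setIntegral_congr_fun measurableSet_Ioi (fun t ht => ?_)
    rw [mem_Ioi] at ht
    have harg : (Complex.I * ((0:ℝ) : ℂ) - lam) * t = -((lam : ℂ) * t) := by
      push_cast
      ring
    rw [harg, Complex.ofReal_cpow ht.le]
    push_cast
    ring
  have hcancel : (lam : ℂ) ^ (s : ℂ) * (1 / (lam : ℂ)) ^ (s : ℂ) = 1 := by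
    have h1 : (1 / (lam : ℂ)) = ((1 / lam : ℝ) : ℂ) := by push_cast; ring
    rw [h1, ← Complex.mul_cpow_ofReal_nonneg hlam.le (by positivity),
      ← Complex.ofReal_mul, mul_one_div, div_self hlam.ne']
    simp
  rw [hu0, h0, ← mul_assoc, hcancel, one_mul, Complex.Gamma_ofReal] at hconst
  -- conclude
  have hfin := congrArg (fun z => u ξ ^ (-(s : ℂ)) * z) hconst
  rw [← mul_assoc, ← Complex.cpow_add _ _ (hune ξ), neg_add_cancel, Complex.cpow_zero,
    one_mul] at hfin
  rw [hfin, show ((lam : ℂ) - Complex.I * ξ) = u ξ from rfl]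
  ring


lemma norm_exp_I_sub_one_le (a : ℝ) : ‖Complex.exp (Complex.I * a) - 1‖ ≤ 2 * |a| := by
  have habs : ‖Complex.I * a‖ = |a| := by
    rw [norm_mul, Complex.norm_I, Complex.norm_real, one_mul, Real.norm_eq_abs]
  rcases le_or_gt (|a|) 1 with h | h
  · have := Complex.norm_exp_sub_one_le (x := Complex.I * a) (by rw [habs]; exact h)
    rw [habs] at this
    exact this
  · have h1 : ‖Complex.exp (Complex.I * a) - 1‖ ≤ 2 := by
      calc ‖Complex.exp (Complex.I * a) - 1‖
          ≤ ‖Complex.exp (Complex.I * a)‖ + ‖(1:ℂ)‖ := norm_sub_le _ _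
        _ = 2 := by
            rw [Complex.norm_exp]
            have : (Complex.I * (a:ℂ)).re = 0 := by simp
            rw [this]
            norm_num [Real.exp_zero]
    nlinarith

lemma exp_re_neg {lam y : ℝ} (ξ' : ℝ) :
    ((Complex.I * ξ' - lam) * y).re = -(lam * y) := by
  simp [Complex.sub_re, Complex.mul_re, Complex.mul_im]

lemma norm_cexp_lin (lam y : ℝ) (ξ' : ℝ) :
    ‖Complex.exp ((Complex.I * ξ' - lam) * y)‖ = Real.exp (-(lam * y)) := by
  rw [Complex.norm_exp, exp_re_neg]

lemma main_integrable {β α lam : ℝ} (hβ0 : 0 < β) (hβ1 : β < 1)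
    (hα : 0 < α) (hlam : 0 < lam) (ξ : ℝ) :
    IntegrableOn (fun y : ℝ =>
        (Complex.exp (Complex.I * ξ * y) - 1) *
          ((α * Real.exp (-lam * y) * y ^ (-1 - β) : ℝ) : ℂ)) (Ioi 0) := by
  have hbd := (intOn_rpow_exp (p := -β) (by linarith) hlam).const_mul (2 * (|ξ| + 1) * α)
  refine Integrable.mono' hbd ?_ ?_
  · apply Measurable.aestronglyMeasurable
    fun_prop
  · filter_upwards [ae_restrict_mem measurableSet_Ioi] with y hy
    rw [mem_Ioi] at hy
    have hE : (0:ℝ) < Real.exp (-lam * y) := Real.exp_pos _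
    have hyb : (0:ℝ) < y ^ (-β) := Real.rpow_pos_of_pos hy _
    rw [norm_mul]
    have hr : ‖((α * Real.exp (-lam * y) * y ^ (-1 - β) : ℝ) : ℂ)‖
        = α * Real.exp (-lam * y) * y ^ (-1 - β) := by
      rw [Complex.norm_real, Real.norm_eq_abs]
      have : (0:ℝ) ≤ α * Real.exp (-lam * y) * y ^ (-1 - β) := by positivity
      exact _root_.abs_of_nonneg this
    rw [hr]
    have hkey : y * y ^ (-1 - β) = y ^ (-β) := by
      nth_rewrite 1 [← Real.rpow_one y]
      rw [← Real.rpow_add hy]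
      ring_nf
    have hEeq : Real.exp (-lam * y) = Real.exp (-(lam * y)) := by ring_nf
    rcases le_or_gt y 1 with hy1 | hy1
    · have h1 : ‖Complex.exp (Complex.I * ξ * y) - 1‖ ≤ 2 * (|ξ| * y) := by
        have h3 : Complex.I * (ξ:ℂ) * (y:ℂ) = Complex.I * ((ξ * y : ℝ) : ℂ) := by
          push_cast; ring
        rw [h3]
        calc ‖Complex.exp (Complex.I * ((ξ * y : ℝ):ℂ)) - 1‖ ≤ 2 * |ξ * y| :=
              norm_exp_I_sub_one_le (ξ * y)
          _ = 2 * (|ξ| * y) := by rw [abs_mul, _root_.abs_of_pos hy]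
      calc ‖Complex.exp (Complex.I * ξ * y) - 1‖ * (α * Real.exp (-lam * y) * y ^ (-1 - β))
          ≤ (2 * (|ξ| * y)) * (α * Real.exp (-lam * y) * y ^ (-1 - β)) := by
            apply mul_le_mul_of_nonneg_right h1
            positivity
        _ = 2 * |ξ| * α * Real.exp (-lam * y) * (y * y ^ (-1 - β)) := by ring
        _ = 2 * |ξ| * α * Real.exp (-lam * y) * y ^ (-β) := by rw [hkey]
        _ ≤ 2 * (|ξ| + 1) * α * (y ^ (-β) * Real.exp (-(lam * y))) := by
            rw [← hEeq]
            nlinarith [mul_pos hα (mul_pos hyb hE), hE, hyb, abs_nonneg ξ]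
    · have h1 : ‖Complex.exp (Complex.I * ξ * y) - 1‖ ≤ 2 := by
        calc ‖Complex.exp (Complex.I * ξ * y) - 1‖
            ≤ ‖Complex.exp (Complex.I * ξ * y)‖ + ‖(1:ℂ)‖ := norm_sub_le _ _
          _ = 2 := by
              rw [Complex.norm_exp]
              have : (Complex.I * (ξ:ℂ) * (y:ℂ)).re = 0 := by
                simp [Complex.mul_re, Complex.mul_im]
              rw [this]
              norm_num [Real.exp_zero]
      have h2 : y ^ (-1 - β) ≤ y ^ (-β) :=
        Real.rpow_le_rpow_of_exponent_le hy1.le (by linarith)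
      calc ‖Complex.exp (Complex.I * ξ * y) - 1‖ * (α * Real.exp (-lam * y) * y ^ (-1 - β))
          ≤ 2 * (α * Real.exp (-lam * y) * y ^ (-1 - β)) := by
            apply mul_le_mul_of_nonneg_right h1
            positivity
        _ ≤ 2 * (α * Real.exp (-lam * y) * y ^ (-β)) := by
            have : (0:ℝ) ≤ α * Real.exp (-lam * y) := by positivity
            nlinarith
        _ ≤ 2 * (|ξ| + 1) * α * (y ^ (-β) * Real.exp (-(lam * y))) := by
            rw [← hEeq]
            nlinarith [mul_nonneg (abs_nonneg ξ) (mul_pos hα (mul_pos hyb hE)).le,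
              hE, hyb, abs_nonneg ξ]

end TemperedAux

open TemperedAux in
/-- The one-sided tempered stable Lévy density integrated against `e^{iξy} − 1`:
integrability on `(0,∞)` and the closed form `α Γ(−β) ((λ − iξ)^β − λ^β)`. -/
theorem tempered_stable_char_exponent (β α lam : ℝ) (hβ0 : 0 < β) (hβ1 : β < 1)
    (hα : 0 < α) (hlam : 0 < lam) (ξ : ℝ) :
    IntegrableOn (fun y : ℝ =>
        (Complex.exp (Complex.I * ξ * y) - 1) *
          ((α * Real.exp (-lam * y) * y ^ (-1 - β) : ℝ) : ℂ)) (Ioi 0) ∧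
    ∫ y in Ioi (0 : ℝ),
        (Complex.exp (Complex.I * ξ * y) - 1) *
          ((α * Real.exp (-lam * y) * y ^ (-1 - β) : ℝ) : ℂ)
      = (α : ℂ) * (Real.Gamma (-β) : ℂ) *
          (((lam : ℂ) - Complex.I * ξ) ^ (β : ℂ) - (lam : ℂ) ^ (β : ℂ)) := by
  have hβ' : (-1:ℝ) < -β := by linarith
  have hs : (0:ℝ) < 1 - β := by linarith
  have hαne : (α:ℂ) ≠ 0 := by exact_mod_cast hα.ne'
  have hβne : (β:ℂ) ≠ 0 := by exact_mod_cast hβ0.ne'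
  have hint := main_integrable hβ0 hβ1 hα hlam ξ
  refine ⟨hint, ?_⟩
  set u : ℝ → ℂ := fun y => Complex.exp ((Complex.I * ξ - lam) * y)
      - Complex.exp ((Complex.I * ((0:ℝ):ℂ) - lam) * y) with hu_def
  set u' : ℝ → ℂ := fun y => (Complex.I * ξ - lam) * Complex.exp ((Complex.I * ξ - lam) * y)
      - (Complex.I * ((0:ℝ):ℂ) - lam) * Complex.exp ((Complex.I * ((0:ℝ):ℂ) - lam) * y)
      with hu'_def
  set v : ℝ → ℂ := fun y => (-(1/β) : ℂ) * ((y ^ (-β) : ℝ) : ℂ) with hv_def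
  set v' : ℝ → ℂ := fun y => ((y ^ (-1 - β) : ℝ) : ℂ) with hv'_def
  have hu : ∀ y ∈ Ioi (0:ℝ), HasDerivAt u (u' y) y := by
    intro y _
    exact (hasDerivAt_cexp_lin _ y).sub (hasDerivAt_cexp_lin _ y)
  have hv : ∀ y ∈ Ioi (0:ℝ), HasDerivAt v (v' y) y := by
    intro y hy
    rw [mem_Ioi] at hy
    have h1 := (hasDerivAt_rpow_cast (s := -β) hy).const_mul (-(1/β) : ℂ)
    refine h1.congr_deriv (Eq.symm ?_)
    rw [hv'_def]
    simp only
    rw [show (-1 - β : ℝ) = -β - 1 by ring]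
    push_cast
    field_simp
  -- pointwise identity between the original integrand and α * (u * v')
  have hpt : ∀ y ∈ Ioi (0:ℝ),
      (Complex.exp (Complex.I * ξ * y) - 1) *
        ((α * Real.exp (-lam * y) * y ^ (-1 - β) : ℝ) : ℂ) = (α:ℂ) * (u y * v' y) := by
    intro y _
    rw [hu_def, hv'_def]
    simp only
    have e1 : Complex.exp ((Complex.I * ξ - lam) * y)
        = Complex.exp (Complex.I * ξ * y) * Complex.exp ((-lam * y : ℝ) : ℂ) := by
      rw [← Complex.exp_add]
      congr 1
      push_cast
      ring
    have e2 : Complex.exp ((Complex.I * ((0:ℝ):ℂ) - lam) * y)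
        = Complex.exp ((-lam * y : ℝ) : ℂ) := by
      congr 1
      push_cast
      ring
    rw [e1, e2]
    push_cast [Complex.ofReal_exp]
    ring
  have huv' : IntegrableOn (u * v') (Ioi 0) := by
    refine IntegrableOn.congr_fun (hint.const_mul ((α:ℂ)⁻¹)) (fun y hy => ?_) measurableSet_Ioi
    show (α:ℂ)⁻¹ * _ = u y * v' y
    rw [hpt y hy]
    field_simp
  have hu'v : IntegrableOn (u' * v) (Ioi 0) := by
    have hb := (intOn_rpow_exp (p := -β) hβ' hlam).const_mul
      ((‖Complex.I * ξ - lam‖ + lam) * (1/β))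
    refine Integrable.mono' hb ?_ ?_
    · apply Measurable.aestronglyMeasurable
      rw [hu'_def, hv_def]
      fun_prop
    · filter_upwards [ae_restrict_mem measurableSet_Ioi] with y hy
      rw [mem_Ioi] at hy
      have hnu : ‖u' y‖ ≤ (‖Complex.I * ξ - lam‖ + lam) * Real.exp (-(lam * y)) := by
        rw [hu'_def]
        simp only
        calc ‖_ - _‖ ≤ ‖(Complex.I * ξ - lam) * Complex.exp ((Complex.I * ξ - lam) * y)‖
              + ‖(Complex.I * ((0:ℝ):ℂ) - lam) * Complex.exp ((Complex.I * ((0:ℝ):ℂ) - lam) * y)‖ :=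
            norm_sub_le _ _
          _ = ‖Complex.I * ξ - lam‖ * Real.exp (-(lam * y))
              + ‖Complex.I * ((0:ℝ):ℂ) - lam‖ * Real.exp (-(lam * y)) := by
            rw [norm_mul, norm_mul, norm_cexp_lin lam y ξ, norm_cexp_lin lam y 0]
          _ ≤ _ := by
            have : ‖Complex.I * ((0:ℝ):ℂ) - lam‖ = lam := by
              rw [show Complex.I * ((0:ℝ):ℂ) - lam = ((-lam : ℝ) : ℂ) by push_cast; ring,
                Complex.norm_real, Real.norm_eq_abs, abs_of_neg (by linarith)]
              ring
            rw [this]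
            ring_nf
            exact le_refl _
      have hnv : ‖v y‖ = (1/β) * y ^ (-β) := by
        rw [hv_def]
        simp only [norm_mul, norm_neg, norm_div, norm_one, Complex.norm_real,
          Real.norm_eq_abs]
        rw [abs_of_pos hβ0, _root_.abs_of_nonneg (Real.rpow_nonneg hy.le _)]
      calc ‖(u' * v) y‖ = ‖u' y‖ * ‖v y‖ := by simp [Pi.mul_apply, norm_mul]
        _ ≤ ((‖Complex.I * ξ - lam‖ + lam) * Real.exp (-(lam * y)))
            * ((1/β) * y ^ (-β)) := by
          rw [hnv]
          apply mul_le_mul_of_nonneg_right hnu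
          positivity
        _ = (‖Complex.I * ξ - lam‖ + lam) * (1/β)
            * (y ^ (-β) * Real.exp (-(lam * y))) := by ring
  have h_zero : Tendsto (u * v) (𝓝[>] (0:ℝ)) (𝓝 (0:ℂ)) := by
    refine squeeze_zero_norm' (a := fun y : ℝ => 2 * |ξ| / β * y ^ (1 - β)) ?_ ?_
    · filter_upwards [self_mem_nhdsWithin] with y hy
      rw [mem_Ioi] at hy
      have hnu : ‖u y‖ ≤ 2 * |ξ| * y := by
        rw [hu_def]
        simp only
        have e1 : Complex.exp ((Complex.I * ξ - lam) * y)
            - Complex.exp ((Complex.I * ((0:ℝ):ℂ) - lam) * y)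
            = Complex.exp ((Complex.I * ((0:ℝ):ℂ) - lam) * y)
              * (Complex.exp (Complex.I * ((ξ * y : ℝ):ℂ)) - 1) := by
          rw [mul_sub, mul_one, ← Complex.exp_add]
          congr 2
          push_cast
          ring
        rw [e1, norm_mul, norm_cexp_lin lam y 0]
        have h2 := norm_exp_I_sub_one_le (ξ * y)
        have h3 : Real.exp (-(lam * y)) ≤ 1 := by
          rw [Real.exp_le_one_iff]
          nlinarith
        calc Real.exp (-(lam * y)) * ‖Complex.exp (Complex.I * ((ξ * y : ℝ):ℂ)) - 1‖
            ≤ 1 * (2 * |ξ * y|) :=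
              mul_le_mul h3 h2 (norm_nonneg _) one_pos.le
          _ = 2 * |ξ| * y := by rw [abs_mul, _root_.abs_of_pos hy]; ring
      have hnv : ‖v y‖ = (1/β) * y ^ (-β) := by
        rw [hv_def]
        simp only [norm_mul, norm_neg, norm_div, norm_one, Complex.norm_real,
          Real.norm_eq_abs]
        rw [abs_of_pos hβ0, _root_.abs_of_nonneg (Real.rpow_nonneg hy.le _)]
      have hkey2 : y * y ^ (-β) = y ^ (1 - β) := by
        nth_rewrite 1 [← Real.rpow_one y]
        rw [← Real.rpow_add hy]
        ring_nf
      calc ‖(u * v) y‖ = ‖u y‖ * ‖v y‖ := by simp [Pi.mul_apply, norm_mul]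
        _ ≤ (2 * |ξ| * y) * ((1/β) * y ^ (-β)) := by
          rw [hnv]
          apply mul_le_mul_of_nonneg_right hnu
          positivity
        _ = 2 * |ξ| / β * (y * y ^ (-β)) := by ring
        _ = 2 * |ξ| / β * y ^ (1 - β) := by rw [hkey2]
    · have hco := (Real.continuousAt_rpow_const 0 (1 - β) (Or.inr hs.le)).tendsto
      rw [Real.zero_rpow hs.ne'] at hco
      have hco2 : Tendsto (fun x : ℝ => x ^ (1 - β)) (𝓝[>] (0:ℝ)) (𝓝 0) :=
        hco.mono_left nhdsWithin_le_nhds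
      simpa using hco2.const_mul (2 * |ξ| / β)
  have h_infty : Tendsto (u * v) atTop (𝓝 (0:ℂ)) := by
    refine squeeze_zero_norm' (a := fun y : ℝ => 2 / β * (y ^ (-β) * Real.exp (-(lam * y)))) ?_ ?_
    · filter_upwards [eventually_gt_atTop (0:ℝ)] with y hy
      have hnu : ‖u y‖ ≤ 2 * Real.exp (-(lam * y)) := by
        rw [hu_def]
        simp only
        calc ‖_ - _‖ ≤ ‖Complex.exp ((Complex.I * ξ - lam) * y)‖
              + ‖Complex.exp ((Complex.I * ((0:ℝ):ℂ) - lam) * y)‖ := norm_sub_le _ _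
          _ = Real.exp (-(lam * y)) + Real.exp (-(lam * y)) := by
            rw [norm_cexp_lin lam y ξ, norm_cexp_lin lam y 0]
          _ = 2 * Real.exp (-(lam * y)) := by ring
      have hnv : ‖v y‖ = (1/β) * y ^ (-β) := by
        rw [hv_def]
        simp only [norm_mul, norm_neg, norm_div, norm_one, Complex.norm_real,
          Real.norm_eq_abs]
        rw [abs_of_pos hβ0, _root_.abs_of_nonneg (Real.rpow_nonneg hy.le _)]
      calc ‖(u * v) y‖ = ‖u y‖ * ‖v y‖ := by simp [Pi.mul_apply, norm_mul]
        _ ≤ (2 * Real.exp (-(lam * y))) * ((1/β) * y ^ (-β)) := by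
          rw [hnv]
          apply mul_le_mul_of_nonneg_right hnu
          positivity
        _ = 2 / β * (y ^ (-β) * Real.exp (-(lam * y))) := by ring
    · have := (tendsto_rpow_mul_exp_neg_mul_atTop_nhds_zero (-β) lam hlam).const_mul (2 / β)
      simpa [neg_mul] using this
  have hibp := integral_Ioi_mul_deriv_eq_deriv_mul hu hv huv' hu'v h_zero h_infty
  -- rewrite the target integral
  have htarget : (∫ y in Ioi (0:ℝ),
        (Complex.exp (Complex.I * ξ * y) - 1) *
          ((α * Real.exp (-lam * y) * y ^ (-1 - β) : ℝ) : ℂ))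
      = (α:ℂ) * ∫ y in Ioi (0:ℝ), u y * v' y := by
    rw [← MeasureTheory.integral_const_mul]
    exact setIntegral_congr_fun measurableSet_Ioi (fun y hy => hpt y hy)
  -- evaluate ∫ u' v
  have hA1 := key_integral (s := 1 - β) hs hlam ξ
  have hA0 := key_integral (s := 1 - β) hs hlam 0
  simp only [show (1:ℝ) - β - 1 = -β from by ring] at hA1 hA0
  have hsub : (∫ y in Ioi (0:ℝ), u' y * v y)
      = (-(1/β) : ℂ) * ((Complex.I * ξ - lam)
          * (∫ t in Ioi (0:ℝ), ((t ^ (-β) : ℝ):ℂ) * Complex.exp ((Complex.I * ξ - lam) * t))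
        - (Complex.I * ((0:ℝ):ℂ) - lam)
          * (∫ t in Ioi (0:ℝ), ((t ^ (-β) : ℝ):ℂ)
              * Complex.exp ((Complex.I * ((0:ℝ):ℂ) - lam) * t))) := by
    have heq : EqOn (fun y : ℝ => u' y * v y)
        (fun y : ℝ => (-(1/β) : ℂ) * ((Complex.I * ξ - lam)
            * (((y ^ (-β) : ℝ):ℂ) * Complex.exp ((Complex.I * ξ - lam) * y))
          - (Complex.I * ((0:ℝ):ℂ) - lam)
            * (((y ^ (-β) : ℝ):ℂ) * Complex.exp ((Complex.I * ((0:ℝ):ℂ) - lam) * y)))) (Ioi 0) := by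
      intro y _
      rw [hu'_def, hv_def]
      simp only
      ring
    rw [setIntegral_congr_fun measurableSet_Ioi heq, MeasureTheory.integral_const_mul,
      integral_sub ((intOn_cpow_cexp hβ' hlam ξ).const_mul _)
        ((intOn_cpow_cexp hβ' hlam 0).const_mul _),
      MeasureTheory.integral_const_mul, MeasureTheory.integral_const_mul]
  rw [htarget, hibp, hsub, hA1, hA0]
  -- final algebra
  have hzne : ((lam:ℂ) - Complex.I * ξ) ≠ 0 := by
    intro h0
    have : ((lam:ℂ) - Complex.I * ξ).re = 0 := by rw [h0]; simp
    simp [Complex.sub_re, Complex.mul_re] at this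
    exact hlam.ne' this
  have hlne : ((lam:ℂ)) ≠ 0 := by exact_mod_cast hlam.ne'
  have f2 : ((lam:ℂ) - Complex.I * ((0:ℝ):ℂ)) = (lam:ℂ) := by push_cast; ring
  have hGc : ((Real.Gamma (1 - β) : ℝ) : ℂ) = -(β:ℂ) * ((Real.Gamma (-β) : ℝ):ℂ) := by
    have := Real.Gamma_add_one (show (-β : ℝ) ≠ 0 by linarith)
    rw [show (-β + 1 : ℝ) = 1 - β by ring] at this
    rw [this]
    push_cast
    ring
  have fexp : (-(((1 - β : ℝ)):ℂ)) = (β:ℂ) - 1 := by push_cast; ring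
  rw [f2, hGc]
  simp only [fexp, Complex.ofReal_zero, mul_zero, zero_sub]
  have f3 : ∀ z : ℂ, z ≠ 0 → z ^ ((β:ℂ) - 1) * z = z ^ (β:ℂ) := by
    intro z hz
    nth_rewrite 2 [← Complex.cpow_one z]
    rw [← Complex.cpow_add _ _ hz]
    ring_nf
  have e5 := f3 _ hzne
  have e6 := f3 _ hlne
  field_simp
  linear_combination (((Real.Gamma (-β) : ℝ):ℂ)) * e5
    - (((Real.Gamma (-β) : ℝ):ℂ)) * e6
end

section
/- Let 0 < β₊ < 1, 0 < β₋ < 1, α₊, α₋ > 0, λ₊, λ₋ > 0, μ ∈ ℝ. For every real ξ, μξi + ∫₀^∞ (e^{iξy} − 1)·α₊·e^{−λ₊y}·y^{−1−β₊} dy + ∫₀^∞ (e^{−iξy} − 1)·α₋·e^{−λ₋y}·y^{−1−β₋} dy = μξi + α₊·Γ(−β₊)·((λ₊ − iξ)^{β₊} − λ₊^{β₊}) + α₋·Γ(−β₋)·((λ₋ + iξ)^{β₋} − λ₋^{β₋}). -/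
open MeasureTheory Set

section GTSproofAux
open Complex Filter Metric Topology


namespace GTSaux

/-- basic integrand -/
noncomputable def E (s lam ξ : ℝ) (y : ℝ) : ℂ :=
  ((y ^ s : ℝ) : ℂ) * Complex.exp ((Complex.I * ξ - lam) * y)

lemma norm_E {s lam ξ y : ℝ} (hy : 0 < y) :
    ‖E s lam ξ y‖ = y ^ s * Real.exp (-lam * y) := by
  unfold E
  rw [norm_mul, Complex.norm_real, Real.norm_eq_abs,
    Complex.norm_exp, _root_.abs_of_nonneg (Real.rpow_nonneg hy.le s)]
  congr 2
  simp [Complex.mul_re, Complex.sub_re, Complex.mul_im, Complex.sub_im]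

lemma cont_E (s lam ξ : ℝ) : ContinuousOn (E s lam ξ) (Ioi 0) := by
  intro y hy
  have h1 : ContinuousAt (fun y : ℝ => y ^ s) y :=
    Real.continuousAt_rpow_const y s (Or.inl (ne_of_gt hy))
  exact ((Complex.continuous_ofReal.continuousAt.comp h1).mul
    (Complex.continuous_exp.continuousAt.comp
      ((continuous_const.mul Complex.continuous_ofReal).continuousAt))).continuousWithinAt

lemma intE_real {s lam : ℝ} (hs : -1 < s) (hl : 0 < lam) :
    IntegrableOn (fun y : ℝ => y ^ s * Real.exp (-lam * y)) (Ioi 0) := by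
  simpa using integrableOn_rpow_mul_exp_neg_mul_rpow hs one_pos hl

lemma intE {s lam : ℝ} (hs : -1 < s) (hl : 0 < lam) (ξ : ℝ) :
    IntegrableOn (E s lam ξ) (Ioi 0) := by
  refine (intE_real hs hl).mono' ((cont_E s lam ξ).aestronglyMeasurable measurableSet_Ioi) ?_
  filter_upwards [ae_restrict_mem measurableSet_Ioi] with y hy
  rw [norm_E hy]

lemma ibp {c lam : ℝ} (hc : 0 < c) (hl : 0 < lam) (ξ : ℝ) :
    ((lam : ℂ) - Complex.I * ξ) * ∫ y in Ioi (0:ℝ), E c lam ξ y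
      = (c : ℂ) * ∫ y in Ioi (0:ℝ), E (c-1) lam ξ y := by
  set w : ℂ := Complex.I * ξ - lam with hw
  have hf0 : E c lam ξ 0 = 0 := by
    simp [E, Real.zero_rpow hc.ne']
  have hderiv : ∀ y ∈ Ioi (0:ℝ), HasDerivAt (E c lam ξ)
      ((c:ℂ) * E (c-1) lam ξ y + w * E c lam ξ y) y := by
    intro y hy
    have h1 : HasDerivAt (fun y : ℝ => ((y ^ c : ℝ) : ℂ)) ((c * y ^ (c-1) : ℝ) : ℂ) y :=
      (Real.hasDerivAt_rpow_const (Or.inl (ne_of_gt hy))).ofReal_comp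
    have h2 : HasDerivAt (fun y : ℝ => Complex.exp (w * y)) (Complex.exp (w * y) * w) y := by
      have h3 : HasDerivAt (fun y : ℝ => w * (y:ℂ)) w y := by
        simpa using (Complex.ofRealCLM.hasDerivAt (x := y)).const_mul w
      exact h3.cexp
    have := h1.mul h2
    refine this.congr_deriv (Eq.symm ?_)
    unfold E
    push_cast
    ring
  have hcont : ContinuousWithinAt (E c lam ξ) (Ici 0) 0 := by
    apply ContinuousWithinAt.mul
    · exact (Complex.continuous_ofReal.continuousAt.comp
        (Real.continuousAt_rpow_const 0 c (Or.inr hc.le))).continuousWithinAt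
    · exact (Complex.continuous_exp.comp
        (continuous_const.mul Complex.continuous_ofReal)).continuousWithinAt
  have hint1 : IntegrableOn (E (c-1) lam ξ) (Ioi 0) := intE (by linarith) hl ξ
  have hint2 : IntegrableOn (E c lam ξ) (Ioi 0) := intE (by linarith) hl ξ
  have f'int : IntegrableOn (fun y => (c:ℂ) * E (c-1) lam ξ y + w * E c lam ξ y) (Ioi 0) :=
    (hint1.const_mul _).add (hint2.const_mul _)
  have htend : Tendsto (E c lam ξ) atTop (𝓝 0) := by
    rw [tendsto_zero_iff_norm_tendsto_zero]
    apply (tendsto_rpow_mul_exp_neg_mul_atTop_nhds_zero c lam hl).congr'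
    filter_upwards [eventually_gt_atTop (0:ℝ)] with y hy
    rw [norm_E hy]
  have key := integral_Ioi_of_hasDerivAt_of_tendsto hcont hderiv f'int htend
  rw [hf0, sub_zero] at key
  rw [integral_add (hint1.const_mul _) (hint2.const_mul _),
    integral_const_mul, integral_const_mul] at key
  have : w = -((lam : ℂ) - Complex.I * ξ) := by rw [hw]; ring
  rw [this] at key
  linear_combination -key

lemma hasDerivAt_E {s lam : ℝ} (y : ℝ) (x : ℝ) :
    HasDerivAt (fun x : ℝ => E s lam x y) (Complex.I * y * E s lam x y) x := by
  have h1 : HasDerivAt (fun x : ℝ => ((Complex.I * x - lam) * y : ℂ)) (Complex.I * y) x := by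
    have h0 : HasDerivAt (fun x : ℝ => (Complex.I * x : ℂ)) Complex.I x := by
      simpa using (Complex.ofRealCLM.hasDerivAt (x := x)).const_mul Complex.I
    simpa using (h0.sub_const (lam : ℂ)).mul_const (y : ℂ)
  have := (h1.cexp).const_mul ((y ^ s : ℝ) : ℂ)
  refine this.congr_deriv (Eq.symm ?_)
  unfold E
  ring

lemma norm_deriv_E {s lam ξ : ℝ} {y : ℝ} (hy : 0 < y) :
    ‖Complex.I * y * E s lam ξ y‖ = y ^ (s+1) * Real.exp (-lam * y) := by
  rw [norm_mul, norm_mul, norm_E hy, Complex.norm_I,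
    Complex.norm_real, Real.norm_eq_abs, abs_of_pos hy,
    Real.rpow_add hy, Real.rpow_one]
  ring

lemma hasDerivAt_intE {s lam : ℝ} (hs : -1 < s) (hl : 0 < lam) (ξ : ℝ) :
    HasDerivAt (fun ξ : ℝ => ∫ y in Ioi (0:ℝ), E s lam ξ y)
      (Complex.I * ∫ y in Ioi (0:ℝ), E (s+1) lam ξ y) ξ := by
  have hbd : Integrable (fun y : ℝ => y ^ (s+1) * Real.exp (-lam * y))
      (volume.restrict (Ioi 0)) := intE_real (by linarith) hl
  have main := hasDerivAt_integral_of_dominated_loc_of_lip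
    (F := fun x y => E s lam x y) (F' := fun y => Complex.I * y * E s lam ξ y)
    (x₀ := ξ) (s := Metric.ball ξ 1) (bound := fun y => y ^ (s+1) * Real.exp (-lam * y))
    (Metric.ball_mem_nhds ξ one_pos)
    (Eventually.of_forall (fun x => (cont_E s lam x).aestronglyMeasurable measurableSet_Ioi))
    (intE hs hl ξ)
    (((continuous_const.mul Complex.continuous_ofReal).continuousOn.mul
      (cont_E s lam ξ)).aestronglyMeasurable measurableSet_Ioi)
    ?_ hbd ?_
  · have heq : ∫ y in Ioi (0:ℝ), Complex.I * y * E s lam ξ y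
        = Complex.I * ∫ y in Ioi (0:ℝ), E (s+1) lam ξ y := by
      rw [← integral_const_mul]
      refine setIntegral_congr_fun measurableSet_Ioi (fun y hy => ?_)
      unfold E
      rw [Real.rpow_add hy, Real.rpow_one]
      push_cast
      ring
    rw [← heq]
    exact main.2
  · filter_upwards [ae_restrict_mem measurableSet_Ioi] with y hy
    refine (convex_ball ξ 1).lipschitzOnWith_of_nnnorm_hasDerivWithin_le
      (f' := fun x => Complex.I * y * E s lam x y)
      (fun x _ => (hasDerivAt_E y x).hasDerivWithinAt) (fun x _ => ?_)
    have h1 : ‖Complex.I * y * E s lam x y‖ ≤ |y ^ (s+1) * Real.exp (-lam * y)| := by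
      rw [norm_deriv_E hy]
      exact le_abs_self _
    rw [← NNReal.coe_le_coe, coe_nnnorm, Real.coe_nnabs]
    exact h1
  · filter_upwards [ae_restrict_mem measurableSet_Ioi] with y hy
    exact hasDerivAt_E y ξ

lemma slit {lam : ℝ} (hl : 0 < lam) (ξ : ℝ) :
    ((lam:ℂ) - Complex.I * ξ) ∈ Complex.slitPlane := by
  rw [Complex.mem_slitPlane_iff]
  left
  simp [Complex.sub_re, Complex.mul_re]
  exact hl

lemma bne {lam : ℝ} (hl : 0 < lam) (ξ : ℝ) : ((lam:ℂ) - Complex.I * ξ) ≠ 0 :=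
  Complex.slitPlane_ne_zero (slit hl ξ)

lemma intE_mul_cpow {β lam : ℝ} (hβ0 : 0 < β) (hβ1 : β < 1) (hl : 0 < lam) (ξ : ℝ) :
    (∫ y in Ioi (0:ℝ), E (-β) lam ξ y) * ((lam:ℂ) - Complex.I*ξ) ^ (((1-β : ℝ)) : ℂ)
      = ((Real.Gamma (1-β) : ℝ) : ℂ) := by
  set c : ℂ := (((1-β : ℝ)) : ℂ) with hc
  set Φ : ℝ → ℂ := fun ξ =>
    (∫ y in Ioi (0:ℝ), E (-β) lam ξ y) * ((lam:ℂ) - Complex.I*ξ) ^ c with hΦdef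
  have hΦ : ∀ x : ℝ, HasDerivAt Φ 0 x := by
    intro x
    have hA := hasDerivAt_intE (s := -β) (by linarith) hl x
    have hB : HasDerivAt (fun x : ℝ => ((lam:ℂ) - Complex.I*x) ^ c)
        (c * ((lam:ℂ) - Complex.I*x) ^ (c-1) * (-Complex.I)) x := by
      have hg : HasDerivAt (fun z : ℂ => ((lam:ℂ) - Complex.I*z) ^ c)
          (c * ((lam:ℂ) - Complex.I*(x:ℂ)) ^ (c-1) * (-Complex.I)) (x : ℂ) := by
        have hinner : HasDerivAt (fun z : ℂ => (lam:ℂ) - Complex.I*z) (-Complex.I) (x:ℂ) := by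
          simpa using ((hasDerivAt_id (x:ℂ)).const_mul Complex.I).const_sub (lam:ℂ)
        exact hinner.cpow_const (slit hl x)
      exact hg.comp_ofReal
    have := hA.mul hB
    have hibp := ibp (c := 1-β) (by linarith) hl x
    have hE : (-β) + 1 = 1 - β := by ring
    have hE2 : (1:ℝ) - β - 1 = -β := by ring
    rw [hE] at this
    rw [hE2] at hibp
    refine this.congr_deriv (Eq.symm ?_)
    have hsplit : ((lam:ℂ) - Complex.I*x) ^ c
        = ((lam:ℂ) - Complex.I*x) ^ (c-1) * ((lam:ℂ) - Complex.I*x) := by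
      nth_rewrite 1 [show c = (c-1) + 1 by ring]
      rw [Complex.cpow_add _ _ (bne hl x), Complex.cpow_one]
    rw [hsplit]
    linear_combination (-(Complex.I) * ((lam:ℂ) - Complex.I*x) ^ (c-1)) * hibp
  have hconst : Φ ξ = Φ 0 :=
    is_const_of_deriv_eq_zero (fun x => (hΦ x).differentiableAt)
      (fun x => (hΦ x).deriv) ξ 0
  have h0int : ∫ y in Ioi (0:ℝ), E (-β) lam 0 y
      = ((∫ y in Ioi (0:ℝ), y ^ ((1-β)-1) * Real.exp (-(lam * y)) : ℝ) : ℂ) := by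
    rw [show ((∫ y in Ioi (0:ℝ), y ^ ((1-β)-1) * Real.exp (-(lam * y)) : ℝ) : ℂ)
      = ∫ y in Ioi (0:ℝ), ((y ^ ((1-β)-1) * Real.exp (-(lam * y)) : ℝ) : ℂ)
      from (integral_ofReal (𝕜 := ℂ)).symm]
    refine setIntegral_congr_fun measurableSet_Ioi (fun y hy => ?_)
    unfold E
    rw [show ((Complex.I * (0:ℝ) - lam) * y : ℂ) = ((-(lam * y) : ℝ) : ℂ) by push_cast; ring,
      ← Complex.ofReal_exp, show (1:ℝ)-β-1 = -β by ring]
    push_cast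
    ring
  have hval : Φ 0 = ((Real.Gamma (1-β) : ℝ) : ℂ) := by
    rw [hΦdef]
    simp only
    rw [h0int, Real.integral_rpow_mul_exp_neg_mul_Ioi (by linarith) hl]
    rw [show ((lam:ℂ) - Complex.I*(0:ℝ)) = ((lam:ℝ):ℂ) by push_cast; ring,
      ← Complex.ofReal_cpow hl.le, ← Complex.ofReal_mul]
    congr 1
    rw [mul_assoc, mul_comm (Real.Gamma (1-β)), ← mul_assoc,
      ← Real.mul_rpow (by positivity) hl.le, one_div, inv_mul_cancel₀ hl.ne',
      Real.one_rpow, one_mul]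
  exact hconst.trans hval

lemma norm_exp_I_sub_one (θ : ℝ) : ‖Complex.exp (Complex.I * θ) - 1‖ ≤ |θ| := by
  have hd : ∀ x : ℝ, HasDerivAt (fun t : ℝ => Complex.exp (Complex.I * t))
      (Complex.exp (Complex.I * x) * Complex.I) x := by
    intro x
    have h0 : HasDerivAt (fun t : ℝ => (Complex.I * t : ℂ)) Complex.I x := by
      simpa using (Complex.ofRealCLM.hasDerivAt (x := x)).const_mul Complex.I
    exact h0.cexp
  have lip : LipschitzWith 1 (fun t : ℝ => Complex.exp (Complex.I * t)) := by
    refine lipschitzWith_of_nnnorm_deriv_le (fun x => (hd x).differentiableAt) (fun x => ?_)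
    rw [(hd x).deriv, ← NNReal.coe_le_coe, coe_nnnorm]
    rw [norm_mul, Complex.norm_I, Complex.norm_exp]
    simp [Complex.mul_re]
  have := lip.dist_le_mul θ 0
  simpa [dist_eq_norm, Real.dist_eq] using this

/-- the tempered integrand -/
noncomputable def D (β lam ξ : ℝ) (y : ℝ) : ℂ :=
  (Complex.exp (Complex.I * ξ * y) - 1) * ((Real.exp (-lam * y) * y ^ (-1 - β) : ℝ) : ℂ)

lemma cont_D (β lam ξ : ℝ) : ContinuousOn (D β lam ξ) (Ioi 0) := by
  intro y hy
  have h1 : ContinuousAt (fun y : ℝ => y ^ (-1 - β)) y :=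
    Real.continuousAt_rpow_const y _ (Or.inl (ne_of_gt hy))
  have h2 : ContinuousAt (fun y : ℝ => Real.exp (-lam * y) * y ^ (-1 - β)) y :=
    ((Real.continuous_exp.comp (continuous_const.mul continuous_id)).continuousAt).mul h1
  exact (((Complex.continuous_exp.comp
      ((continuous_const.mul Complex.continuous_ofReal))).continuousAt.sub
      continuousAt_const).mul
    (Complex.continuous_ofReal.continuousAt.comp h2)).continuousWithinAt

lemma norm_D_le {β lam ξ : ℝ} {y : ℝ} (hy : 0 < y) :
    ‖D β lam ξ y‖ ≤ |ξ| * (y ^ (-β) * Real.exp (-lam * y)) := by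
  unfold D
  rw [norm_mul]
  have h1 : ‖Complex.exp (Complex.I * ξ * y) - 1‖ ≤ |ξ| * y := by
    have := norm_exp_I_sub_one (ξ * y)
    rw [show ((Complex.I * ξ * y : ℂ)) = Complex.I * ((ξ * y : ℝ) : ℂ) by push_cast; ring]
    calc ‖Complex.exp (Complex.I * ((ξ * y : ℝ):ℂ)) - 1‖ ≤ |ξ * y| := this
    _ = |ξ| * y := by rw [abs_mul, abs_of_pos hy]
  have h2 : ‖((Real.exp (-lam * y) * y ^ (-1 - β) : ℝ) : ℂ)‖
      = Real.exp (-lam * y) * y ^ (-1 - β) := by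
    rw [Complex.norm_real, Real.norm_eq_abs]
    exact abs_of_nonneg (by positivity)
  rw [h2]
  have h3 : (0:ℝ) ≤ Real.exp (-lam * y) * y ^ (-1 - β) := by positivity
  calc ‖Complex.exp (Complex.I * ξ * y) - 1‖ * (Real.exp (-lam * y) * y ^ (-1 - β))
      ≤ (|ξ| * y) * (Real.exp (-lam * y) * y ^ (-1 - β)) := by
        exact mul_le_mul_of_nonneg_right h1 h3
    _ = |ξ| * (y ^ (-β) * Real.exp (-lam * y)) := by
        rw [show (-β : ℝ) = 1 + (-1 - β) by ring, Real.rpow_add hy, Real.rpow_one]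
        ring

lemma int_D {β lam : ℝ} (hβ0 : 0 < β) (hβ1 : β < 1) (hl : 0 < lam) (ξ : ℝ) :
    IntegrableOn (D β lam ξ) (Ioi 0) := by
  have hbd : IntegrableOn (fun y : ℝ => |ξ| * (y ^ (-β) * Real.exp (-lam * y))) (Ioi 0) :=
    (intE_real (by linarith) hl).const_mul _
  refine hbd.mono' ((cont_D β lam ξ).aestronglyMeasurable measurableSet_Ioi) ?_
  filter_upwards [ae_restrict_mem measurableSet_Ioi] with y hy
  exact norm_D_le hy

lemma hasDerivAt_D {β lam : ℝ} {y : ℝ} (hy : 0 < y) (x : ℝ) :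
    HasDerivAt (fun x : ℝ => D β lam x y) (Complex.I * E (-β) lam x y) x := by
  have h0 : HasDerivAt (fun x : ℝ => (Complex.I * x * y : ℂ)) (Complex.I * y) x := by
    have : HasDerivAt (fun x : ℝ => (Complex.I * x : ℂ)) Complex.I x := by
      simpa using (Complex.ofRealCLM.hasDerivAt (x := x)).const_mul Complex.I
    simpa using this.mul_const (y : ℂ)
  have h1 := ((h0.cexp).sub_const 1).mul_const ((Real.exp (-lam * y) * y ^ (-1 - β) : ℝ) : ℂ)
  refine h1.congr_deriv (Eq.symm ?_)
  unfold E
  have he : Complex.exp ((Complex.I * x - lam) * y)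
      = Complex.exp (Complex.I * x * y) * ((Real.exp (-lam * y) : ℝ) : ℂ) := by
    rw [Complex.ofReal_exp, ← Complex.exp_add]
    congr 1
    push_cast
    ring
  have hy2 : ((y ^ (-β) : ℝ) : ℂ) = (y : ℂ) * ((y ^ (-1 - β) : ℝ) : ℂ) := by
    rw [show (-β : ℝ) = 1 + (-1 - β) by ring, Real.rpow_add hy, Real.rpow_one]
    push_cast
    ring
  rw [he, hy2]
  push_cast
  ring

lemma hasDerivAt_intD {β lam : ℝ} (hβ0 : 0 < β) (hβ1 : β < 1) (hl : 0 < lam) (ξ : ℝ) :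
    HasDerivAt (fun ξ : ℝ => ∫ y in Ioi (0:ℝ), D β lam ξ y)
      (Complex.I * ∫ y in Ioi (0:ℝ), E (-β) lam ξ y) ξ := by
  have hbd : Integrable (fun y : ℝ => y ^ (-β) * Real.exp (-lam * y))
      (volume.restrict (Ioi 0)) := intE_real (by linarith) hl
  have main := hasDerivAt_integral_of_dominated_loc_of_lip
    (F := fun x y => D β lam x y) (F' := fun y => Complex.I * E (-β) lam ξ y)
    (x₀ := ξ) (s := Metric.ball ξ 1) (bound := fun y => y ^ (-β) * Real.exp (-lam * y))
    (Metric.ball_mem_nhds ξ one_pos)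
    (Eventually.of_forall (fun x => (cont_D β lam x).aestronglyMeasurable measurableSet_Ioi))
    (int_D hβ0 hβ1 hl ξ)
    ((continuousOn_const.mul (cont_E (-β) lam ξ)).aestronglyMeasurable measurableSet_Ioi)
    ?_ hbd ?_
  · rw [← integral_const_mul]
    exact main.2
  · filter_upwards [ae_restrict_mem measurableSet_Ioi] with y hy
    refine (convex_ball ξ 1).lipschitzOnWith_of_nnnorm_hasDerivWithin_le
      (f' := fun x => Complex.I * E (-β) lam x y)
      (fun x _ => (hasDerivAt_D hy x).hasDerivWithinAt) (fun x _ => ?_)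
    rw [← NNReal.coe_le_coe, coe_nnnorm, Real.coe_nnabs]
    rw [norm_mul, Complex.norm_I, one_mul, norm_E hy]
    exact le_abs_self _
  · filter_upwards [ae_restrict_mem measurableSet_Ioi] with y hy
    exact hasDerivAt_D hy ξ

lemma main {β lam : ℝ} (hβ0 : 0 < β) (hβ1 : β < 1) (hl : 0 < lam) (ξ : ℝ) :
    ∫ y in Ioi (0:ℝ), D β lam ξ y
      = ((Real.Gamma (-β) : ℝ) : ℂ) *
        (((lam:ℂ) - Complex.I * ξ) ^ ((β : ℝ) : ℂ) - (lam:ℂ) ^ ((β : ℝ) : ℂ)) := by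
  set βc : ℂ := ((β : ℝ) : ℂ) with hβc
  set Γm : ℂ := ((Real.Gamma (-β) : ℝ) : ℂ) with hΓm
  set Ψ : ℝ → ℂ := fun x => (∫ y in Ioi (0:ℝ), D β lam x y)
    - Γm * (((lam:ℂ) - Complex.I * x) ^ βc - (lam:ℂ) ^ βc) with hΨdef
  have hΓ : Real.Gamma (1-β) = -β * Real.Gamma (-β) := by
    rw [show (1:ℝ)-β = -β+1 by ring, Real.Gamma_add_one (by linarith)]
  have hΨ : ∀ x : ℝ, HasDerivAt Ψ 0 x := by
    intro x
    have hF := hasDerivAt_intD hβ0 hβ1 hl x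
    have hB : HasDerivAt (fun x : ℝ => Γm * (((lam:ℂ) - Complex.I * x) ^ βc - (lam:ℂ) ^ βc))
        (Γm * (βc * ((lam:ℂ) - Complex.I * x) ^ (βc-1) * (-Complex.I))) x := by
      have hg : HasDerivAt (fun z : ℂ => ((lam:ℂ) - Complex.I * z) ^ βc)
          (βc * ((lam:ℂ) - Complex.I * (x:ℂ)) ^ (βc-1) * (-Complex.I)) (x:ℂ) := by
        have hinner : HasDerivAt (fun z : ℂ => (lam:ℂ) - Complex.I * z) (-Complex.I) (x:ℂ) := by
          simpa using ((hasDerivAt_id (x:ℂ)).const_mul Complex.I).const_sub (lam:ℂ)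
        exact hinner.cpow_const (slit hl x)
      exact ((hg.comp_ofReal).sub_const _).const_mul Γm
    have hd := hF.sub hB
    refine hd.congr_deriv (Eq.symm ?_)
    have hprod := intE_mul_cpow hβ0 hβ1 hl x
    have hexp : ((lam:ℂ) - Complex.I * x) ^ (βc - 1)
        = (((lam:ℂ) - Complex.I * x) ^ (((1-β : ℝ)) : ℂ))⁻¹ := by
      rw [← Complex.cpow_neg]
      congr 1
      push_cast [hβc]
      ring
    have hne : (((lam:ℂ) - Complex.I * x) ^ (((1-β : ℝ)) : ℂ)) ≠ 0 := by
      simp [Complex.cpow_eq_zero_iff, bne hl x]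
    have hA : ∫ y in Ioi (0:ℝ), E (-β) lam x y
        = ((Real.Gamma (1-β) : ℝ) : ℂ) * (((lam:ℂ) - Complex.I * x) ^ (βc - 1)) := by
      rw [hexp, mul_comm, ← eq_comm, inv_mul_eq_iff_eq_mul₀ hne, mul_comm]
      exact hprod.symm
    have hΓc : ((Real.Gamma (1-β) : ℝ) : ℂ) = -βc * Γm := by
      rw [hΓ, hΓm, hβc]; push_cast; ring
    rw [hA, hΓc]
    ring
  have hconst : Ψ ξ = Ψ 0 :=
    is_const_of_deriv_eq_zero (fun x => (hΨ x).differentiableAt)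
      (fun x => (hΨ x).deriv) ξ 0
  have hD0 : ∫ y in Ioi (0:ℝ), D β lam 0 y = 0 := by
    have h : ∀ y : ℝ, D β lam 0 y = 0 := fun y => by simp [D]
    simp [h]
  have hΨ0 : Ψ 0 = 0 := by
    rw [hΨdef]
    simp only
    rw [hD0, show ((lam:ℂ) - Complex.I * ((0:ℝ):ℂ)) = (lam:ℂ) by push_cast; ring]
    ring
  have hfin := hconst.trans hΨ0
  rw [hΨdef] at hfin
  simp only at hfin
  linear_combination hfin

end GTSaux



end GTSproofAux


/-- The characteristic exponent of the Generalized Tempered Stable distribution: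
`μξi + ∫ (e^{iξy}−1) M₊(dy) + ∫ (e^{−iξy}−1) M₋(dy)` equals the closed form. -/
theorem GTS_char_exponent (βp βm αp αm lamp lamm μ : ℝ)
    (hβp0 : 0 < βp) (hβp1 : βp < 1) (hβm0 : 0 < βm) (hβm1 : βm < 1)
    (hαp : 0 < αp) (hαm : 0 < αm) (hlamp : 0 < lamp) (hlamm : 0 < lamm) (ξ : ℝ) :
    (μ * ξ : ℂ) * Complex.I
      + (∫ y in Ioi (0 : ℝ),
          (Complex.exp (Complex.I * ξ * y) - 1) *
            ((αp * Real.exp (-lamp * y) * y ^ (-1 - βp) : ℝ) : ℂ))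
      + (∫ y in Ioi (0 : ℝ),
          (Complex.exp (-(Complex.I * ξ * y)) - 1) *
            ((αm * Real.exp (-lamm * y) * y ^ (-1 - βm) : ℝ) : ℂ))
    = (μ * ξ : ℂ) * Complex.I
      + (αp : ℂ) * (Real.Gamma (-βp) : ℂ) *
          (((lamp : ℂ) - Complex.I * ξ) ^ (βp : ℂ) - (lamp : ℂ) ^ (βp : ℂ))
      + (αm : ℂ) * (Real.Gamma (-βm) : ℂ) *
          (((lamm : ℂ) + Complex.I * ξ) ^ (βm : ℂ) - (lamm : ℂ) ^ (βm : ℂ)) := by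
  have hp : (∫ y in Ioi (0 : ℝ),
      (Complex.exp (Complex.I * ξ * y) - 1) *
        ((αp * Real.exp (-lamp * y) * y ^ (-1 - βp) : ℝ) : ℂ))
      = (αp : ℂ) * ∫ y in Ioi (0:ℝ), GTSaux.D βp lamp ξ y := by
    rw [← integral_const_mul]
    refine setIntegral_congr_fun measurableSet_Ioi (fun y _ => ?_)
    unfold GTSaux.D
    push_cast
    ring
  have hm : (∫ y in Ioi (0 : ℝ),
      (Complex.exp (-(Complex.I * ξ * y)) - 1) *
        ((αm * Real.exp (-lamm * y) * y ^ (-1 - βm) : ℝ) : ℂ))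
      = (αm : ℂ) * ∫ y in Ioi (0:ℝ), GTSaux.D βm lamm (-ξ) y := by
    rw [← integral_const_mul]
    refine setIntegral_congr_fun measurableSet_Ioi (fun y _ => ?_)
    unfold GTSaux.D
    rw [show (Complex.I * ((-ξ : ℝ) : ℂ) * y : ℂ) = -(Complex.I * ξ * y) by push_cast; ring]
    push_cast
    ring
  rw [hp, hm, GTSaux.main hβp0 hβp1 hlamp ξ, GTSaux.main hβm0 hβm1 hlamm (-ξ),
    show ((lamm:ℂ) - Complex.I * ((-ξ : ℝ) : ℂ)) = (lamm:ℂ) + Complex.I * ξ by push_cast; ring]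
  ring
end

section
/- Let 0 < β < 1, α > 0, λ > 0, and ξ > 0. Then ∫₀^∞ (e^{iξy} − 1)·α·e^{−λy}·y^{−1−β} dy = ∫₀^ξ (1/x)·( ∫₀^∞ (e^{ivx} − 1)·α·(β + λv)·v^{−1−β}·e^{−λv} dv ) dx, all integrals being absolutely convergent. -/
open MeasureTheory Set Filter Topology

section Aux

lemma hasDerivAt_expI (x : ℝ) (c : ℂ) :
    HasDerivAt (fun s : ℝ => Complex.exp (c * s)) (c * Complex.exp (c * x)) x := by
  have h1 : HasDerivAt (fun s : ℝ => c * (s:ℂ)) c x := by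
    simpa using ((hasDerivAt_id (x:ℂ)).const_mul c).comp_ofReal
  exact ((Complex.hasDerivAt_exp (c * x)).comp x h1).congr_deriv (mul_comm _ _)

lemma norm_expI_sub_one_le (t : ℝ) : ‖Complex.exp (Complex.I * t) - 1‖ ≤ |t| := by
  have key : Complex.exp (Complex.I * t) - 1
      = ∫ s in (0:ℝ)..t, Complex.I * Complex.exp (Complex.I * s) := by
    rw [intervalIntegral.integral_eq_sub_of_hasDerivAt (fun s _ => hasDerivAt_expI s Complex.I)]
    · simp
    · exact (Continuous.intervalIntegrable (by continuity) _ _)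
  rw [key]
  have := intervalIntegral.norm_integral_le_of_norm_le_const (C := 1)
    (f := fun s : ℝ => Complex.I * Complex.exp (Complex.I * s)) (a := 0) (b := t) ?_
  · simpa using this
  · intro s _
    simp [map_mul, Complex.norm_exp]

lemma gammaInt {lam : ℝ} (hlam : 0 < lam) {s : ℝ} (hs : -1 < s) :
    IntegrableOn (fun v : ℝ => v ^ s * Real.exp (-lam * v)) (Ioi 0) := by
  have := integrableOn_rpow_mul_exp_neg_mul_rpow hs zero_lt_one hlam
  simpa [Real.rpow_one] using this

lemma contOn_aux {α lam : ℝ} (s : ℝ) :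
    ContinuousOn (fun y : ℝ => ((α * Real.exp (-lam * y) * y ^ s : ℝ) : ℂ)) (Ioi 0) := by
  apply Complex.continuous_ofReal.comp_continuousOn
  exact (((continuous_const.mul (Real.continuous_exp.comp (by continuity))).continuousOn).mul
    (ContinuousOn.rpow_const continuousOn_id (fun y hy => Or.inl (ne_of_gt hy))))

lemma int1 {β α lam : ℝ} (hβ0 : 0 < β) (hβ1 : β < 1) (hα : 0 < α) (hlam : 0 < lam) (x : ℝ) :
    IntegrableOn (fun y : ℝ =>
        (Complex.exp (Complex.I * x * y) - 1) *
          ((α * Real.exp (-lam * y) * y ^ (-1 - β) : ℝ) : ℂ)) (Ioi 0) := by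
  apply Integrable.mono' (g := fun y : ℝ => (|x| * α) * (y ^ (-β) * Real.exp (-lam * y)))
    (((gammaInt hlam (by linarith : (-1:ℝ) < -β)).const_mul _))
  · exact ((Continuous.continuousOn (by continuity)).mul (contOn_aux (α:=α) (lam:=lam) _)
      ).aestronglyMeasurable measurableSet_Ioi
  · filter_upwards [ae_restrict_mem measurableSet_Ioi] with y hy
    have hy' : (0:ℝ) < y := hy
    rw [norm_mul]
    have h1 : ‖Complex.exp (Complex.I * x * y) - 1‖ ≤ |x| * y := by
      have := norm_expI_sub_one_le (x * y)
      rw [show Complex.I * (x:ℂ) * y = Complex.I * ((x * y : ℝ) : ℂ) by push_cast; ring]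
      calc ‖Complex.exp (Complex.I * ((x*y:ℝ):ℂ)) - 1‖ ≤ |x * y| := this
        _ = |x| * y := by rw [abs_mul, abs_of_pos hy']
    have h2 : ‖((α * Real.exp (-lam * y) * y ^ (-1 - β) : ℝ) : ℂ)‖
        = α * Real.exp (-lam * y) * y ^ (-1 - β) := by
      rw [Complex.norm_real, Real.norm_eq_abs, abs_of_pos]
      positivity
    rw [h2]
    calc ‖Complex.exp (Complex.I * x * y) - 1‖ * (α * Real.exp (-lam * y) * y ^ (-1-β))
        ≤ (|x| * y) * (α * Real.exp (-lam * y) * y ^ (-1-β)) := by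
          apply mul_le_mul_of_nonneg_right h1; positivity
      _ = (|x| * α) * (y ^ (-β) * Real.exp (-lam * y)) := by
          rw [show (-β : ℝ) = 1 + (-1-β) by ring, Real.rpow_add hy', Real.rpow_one]; ring

lemma contOn_g {β α lam : ℝ} :
    ContinuousOn (fun v : ℝ => ((α * (β + lam * v) * v ^ (-1 - β) * Real.exp (-lam * v) : ℝ) : ℂ))
      (Ioi 0) := by
  apply Complex.continuous_ofReal.comp_continuousOn
  exact (((continuous_const.mul (by continuity)).continuousOn.mul
    (ContinuousOn.rpow_const continuousOn_id (fun y hy => Or.inl (ne_of_gt hy)))).mul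
    (Real.continuous_exp.comp (by continuity)).continuousOn)

lemma int2 {β α lam : ℝ} (hβ0 : 0 < β) (hβ1 : β < 1) (hα : 0 < α) (hlam : 0 < lam) (x : ℝ) :
    IntegrableOn (fun v : ℝ =>
        (Complex.exp (Complex.I * x * v) - 1) *
          ((α * (β + lam * v) * v ^ (-1 - β) * Real.exp (-lam * v) : ℝ) : ℂ)) (Ioi 0) := by
  have hA := (gammaInt hlam (by linarith : (-1:ℝ) < -β)).const_mul β
  have hB := (gammaInt hlam (by linarith : (-1:ℝ) < 1-β)).const_mul lam
  apply Integrable.mono' (g := fun v : ℝ => (|x| * α) *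
      (β * (v ^ (-β) * Real.exp (-lam * v)) + lam * (v ^ (1-β) * Real.exp (-lam * v))))
    ((hA.add hB).const_mul _)
  · exact ((Continuous.continuousOn (by continuity)).mul contOn_g).aestronglyMeasurable
      measurableSet_Ioi
  · filter_upwards [ae_restrict_mem measurableSet_Ioi] with v hv
    have hv' : (0:ℝ) < v := hv
    have hβv : 0 < β + lam * v := by positivity
    rw [norm_mul]
    have h1 : ‖Complex.exp (Complex.I * x * v) - 1‖ ≤ |x| * v := by
      have := norm_expI_sub_one_le (x * v)
      rw [show Complex.I * (x:ℂ) * v = Complex.I * ((x * v : ℝ) : ℂ) by push_cast; ring]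
      calc ‖Complex.exp (Complex.I * ((x*v:ℝ):ℂ)) - 1‖ ≤ |x * v| := this
        _ = |x| * v := by rw [abs_mul, abs_of_pos hv']
    have h2 : ‖((α * (β + lam * v) * v ^ (-1 - β) * Real.exp (-lam * v) : ℝ) : ℂ)‖
        = α * (β + lam * v) * v ^ (-1 - β) * Real.exp (-lam * v) := by
      rw [Complex.norm_real, Real.norm_eq_abs, abs_of_pos]; positivity
    rw [h2]
    calc ‖Complex.exp (Complex.I * x * v) - 1‖ * (α * (β + lam*v) * v ^ (-1-β) * Real.exp (-lam*v))
        ≤ (|x| * v) * (α * (β + lam*v) * v ^ (-1-β) * Real.exp (-lam*v)) := by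
          apply mul_le_mul_of_nonneg_right h1; positivity
      _ = (|x| * α) * (β * (v ^ (-β) * Real.exp (-lam*v)) + lam * (v ^ (1-β) * Real.exp (-lam*v))) := by
          rw [show (-β : ℝ) = 1 + (-1-β) by ring, show (1-β : ℝ) = 1 + 1 + (-1-β) by ring,
            Real.rpow_add hv', Real.rpow_add hv', Real.rpow_add hv', Real.rpow_one]; ring

lemma contOn_ker {β α lam : ℝ} (x : ℝ) :
    ContinuousOn (fun v : ℝ =>
      Complex.exp (Complex.I * x * v) * ((α * v ^ (-β) * Real.exp (-lam * v) : ℝ) : ℂ)) (Ioi 0) := by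
  apply (Continuous.continuousOn (by continuity)).mul
  apply Complex.continuous_ofReal.comp_continuousOn
  exact ((continuousOn_const.mul (ContinuousOn.rpow_const continuousOn_id
    (fun y hy => Or.inl (ne_of_gt hy)))).mul (Real.continuous_exp.comp (by continuity)).continuousOn)

lemma intKer {β α lam : ℝ} (hβ0 : 0 < β) (hβ1 : β < 1) (hα : 0 < α) (hlam : 0 < lam) (x : ℝ) :
    IntegrableOn (fun v : ℝ =>
        Complex.exp (Complex.I * x * v) * ((α * v ^ (-β) * Real.exp (-lam * v) : ℝ) : ℂ)) (Ioi 0) := by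
  apply Integrable.mono' (g := fun v : ℝ => α * (v ^ (-β) * Real.exp (-lam * v)))
    ((gammaInt hlam (by linarith : (-1:ℝ) < -β)).const_mul _)
  · exact (contOn_ker x).aestronglyMeasurable measurableSet_Ioi
  · filter_upwards [ae_restrict_mem measurableSet_Ioi] with v hv
    have hv' : (0:ℝ) < v := hv
    rw [norm_mul]
    have hexp : ‖Complex.exp (Complex.I * x * v)‖ = 1 := by
      rw [show Complex.I * (x:ℂ) * v = ((x*v : ℝ):ℂ) * Complex.I by push_cast; ring]
      exact Complex.norm_exp_ofReal_mul_I _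
    rw [hexp, one_mul, Complex.norm_real, Real.norm_eq_abs, abs_of_pos (by positivity)]
    apply le_of_eq; ring

lemma hasDerivAt_r {β α lam : ℝ} {v : ℝ} (hv : 0 < v) :
    HasDerivAt (fun v : ℝ => α * v ^ (-β) * Real.exp (-lam * v))
      (-(α * (β + lam * v) * v ^ (-1 - β) * Real.exp (-lam * v))) v := by
  have h1 : HasDerivAt (fun v : ℝ => α * v ^ (-β)) (α * (-β * v ^ (-β - 1))) v :=
    (Real.hasDerivAt_rpow_const (Or.inl hv.ne')).const_mul α
  have h2 : HasDerivAt (fun v : ℝ => Real.exp (-lam * v)) (Real.exp (-lam * v) * (-lam)) v :=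
    by simpa using ((hasDerivAt_id v).const_mul (-lam)).exp
  have := h1.mul h2
  refine this.congr_deriv ?_
  have e1 : v ^ (-β - 1) = v ^ (-1 - β) := by ring_nf
  have e2 : v ^ (-β) = v * v ^ (-1 - β) := by
    rw [show (-β : ℝ) = 1 + (-1-β) by ring, Real.rpow_add hv, Real.rpow_one]
  rw [e1, e2]; ring

lemma ibp {β α lam : ℝ} (hβ0 : 0 < β) (hβ1 : β < 1) (hα : 0 < α) (hlam : 0 < lam) (x : ℝ) :
    ∫ v in Ioi (0:ℝ), (Complex.exp (Complex.I * x * v) - 1) *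
        ((α * (β + lam * v) * v ^ (-1 - β) * Real.exp (-lam * v) : ℝ) : ℂ)
      = (Complex.I * x) * ∫ v in Ioi (0:ℝ),
          Complex.exp (Complex.I * x * v) * ((α * v ^ (-β) * Real.exp (-lam * v) : ℝ) : ℂ) := by
  set G : ℝ → ℂ := fun v => (Complex.exp (Complex.I * x * v) - 1) *
      ((α * (β + lam * v) * v ^ (-1 - β) * Real.exp (-lam * v) : ℝ) : ℂ) with hGdef
  set K : ℝ → ℂ := fun v =>
      Complex.exp (Complex.I * x * v) * ((α * v ^ (-β) * Real.exp (-lam * v) : ℝ) : ℂ) with hKdef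
  set H : ℝ → ℂ := fun v => (Complex.exp (Complex.I * x * v) - 1) *
      ((α * v ^ (-β) * Real.exp (-lam * v) : ℝ) : ℂ) with hHdef
  have hKint : IntegrableOn K (Ioi 0) := intKer hβ0 hβ1 hα hlam x
  have hGint : IntegrableOn G (Ioi 0) := int2 hβ0 hβ1 hα hlam x
  have hderiv : ∀ v ∈ Ioi (0:ℝ), HasDerivAt H ((Complex.I * x) * K v - G v) v := by
    intro v hv
    have hu : HasDerivAt (fun v : ℝ => Complex.exp (Complex.I * x * v) - 1)
        ((Complex.I * x) * Complex.exp (Complex.I * x * v)) v :=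
      (hasDerivAt_expI v (Complex.I * x)).sub_const 1
    have hw := (hasDerivAt_r (β := β) (α := α) (lam := lam) hv).ofReal_comp
    have := hu.mul hw
    refine this.congr_deriv ?_
    simp only [hGdef, hKdef, Complex.ofReal_neg]
    ring
  have hint : IntegrableOn (fun v => (Complex.I * x) * K v - G v) (Ioi 0) :=
    (hKint.const_mul _).sub hGint
  have hcont : ContinuousWithinAt H (Ici 0) 0 := by
    have hH0 : H 0 = 0 := by simp [hHdef]
    rw [ContinuousWithinAt, hH0]
    apply squeeze_zero_norm' (a := fun v : ℝ => (|x| * α) * v ^ (1 - β))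
    · filter_upwards [self_mem_nhdsWithin] with v hv
      rcases eq_or_lt_of_le (mem_Ici.mp hv) with h0 | h0
      · rw [hHdef]; simp [← h0, Real.zero_rpow (by linarith : (1:ℝ) - β ≠ 0)]
      · have hb1 : ‖Complex.exp (Complex.I * x * v) - 1‖ ≤ |x| * v := by
          have := norm_expI_sub_one_le (x * v)
          rw [show Complex.I * (x:ℂ) * v = Complex.I * ((x * v : ℝ) : ℂ) by push_cast; ring]
          calc ‖Complex.exp (Complex.I * ((x*v:ℝ):ℂ)) - 1‖ ≤ |x * v| := this
            _ = |x| * v := by rw [abs_mul, abs_of_pos h0]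
        have hb2 : ‖((α * v ^ (-β) * Real.exp (-lam * v) : ℝ) : ℂ)‖ ≤ α * v ^ (-β) := by
          rw [Complex.norm_real, Real.norm_eq_abs, abs_of_pos (by positivity)]
          have : Real.exp (-lam * v) ≤ 1 := by
            rw [Real.exp_le_one_iff]; nlinarith
          exact mul_le_of_le_one_right (by positivity) this
        rw [hHdef]
        calc ‖(Complex.exp (Complex.I * x * v) - 1) * ((α * v ^ (-β) * Real.exp (-lam*v) : ℝ):ℂ)‖
            = ‖Complex.exp (Complex.I * x * v) - 1‖ * ‖((α * v ^ (-β) * Real.exp (-lam*v):ℝ):ℂ)‖ :=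
              norm_mul _ _
          _ ≤ (|x| * v) * (α * v ^ (-β)) := by
              apply mul_le_mul hb1 hb2 (norm_nonneg _) (by positivity)
          _ = (|x| * α) * (v ^ (1-β)) := by
              rw [show (1-β : ℝ) = 1 + (-β) by ring, Real.rpow_add h0, Real.rpow_one]; ring
    · have : Tendsto (fun v : ℝ => v ^ (1 - β)) (nhdsWithin 0 (Ici 0)) (𝓝 ((0:ℝ) ^ (1-β))) :=
        (Real.continuousAt_rpow_const 0 (1-β) (Or.inr (by linarith))).continuousWithinAt
      rw [Real.zero_rpow (by linarith : (1:ℝ) - β ≠ 0)] at this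
      simpa using this.const_mul (|x| * α)
  have htop : Tendsto H atTop (𝓝 0) := by
    apply squeeze_zero_norm' (a := fun v : ℝ => (2 * α) * v ^ (-β))
    · filter_upwards [eventually_gt_atTop (0:ℝ)] with v h0
      have hb1 : ‖Complex.exp (Complex.I * x * v) - 1‖ ≤ 2 := by
        calc ‖Complex.exp (Complex.I * x * v) - 1‖
            ≤ ‖Complex.exp (Complex.I * x * v)‖ + ‖(1:ℂ)‖ := norm_sub_le _ _
          _ = 2 := by
              rw [show Complex.I * (x:ℂ) * v = ((x * v : ℝ):ℂ) * Complex.I by push_cast; ring]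
              rw [Complex.norm_exp_ofReal_mul_I]; norm_num
      have hb2 : ‖((α * v ^ (-β) * Real.exp (-lam * v) : ℝ) : ℂ)‖ ≤ α * v ^ (-β) := by
        rw [Complex.norm_real, Real.norm_eq_abs, abs_of_pos (by positivity)]
        have : Real.exp (-lam * v) ≤ 1 := by rw [Real.exp_le_one_iff]; nlinarith
        exact mul_le_of_le_one_right (by positivity) this
      rw [hHdef]
      calc ‖(Complex.exp (Complex.I * x * v) - 1) * ((α * v ^ (-β) * Real.exp (-lam*v) : ℝ):ℂ)‖
          = ‖Complex.exp (Complex.I * x * v) - 1‖ * ‖((α * v ^ (-β) * Real.exp (-lam*v):ℝ):ℂ)‖ :=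
            norm_mul _ _
        _ ≤ 2 * (α * v ^ (-β)) := by
            apply mul_le_mul hb1 hb2 (norm_nonneg _) (by norm_num)
        _ = (2 * α) * v ^ (-β) := by ring
    · simpa using (tendsto_rpow_neg_atTop hβ0).const_mul (2 * α)
  have key := integral_Ioi_of_hasDerivAt_of_tendsto hcont hderiv hint htop
  have hH0 : H 0 = 0 := by simp [hHdef]
  rw [hH0, sub_zero, integral_sub (hKint.const_mul _) hGint,
    MeasureTheory.integral_const_mul] at key
  linear_combination -key

lemma xint {ξ v : ℝ} (hξ : 0 < ξ) (hv : 0 < v) :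
    ∫ x in Ioc (0:ℝ) ξ, Complex.I * Complex.exp (Complex.I * x * v)
      = (Complex.exp (Complex.I * ξ * v) - 1) / v := by
  have hvC : ((v:ℂ)) ≠ 0 := Complex.ofReal_ne_zero.mpr hv.ne'
  rw [← intervalIntegral.integral_of_le hξ.le]
  have hrw : ∀ x : ℝ, Complex.I * Complex.exp (Complex.I * x * v)
      = Complex.I * Complex.exp ((Complex.I * v) * x) := fun x => by
    rw [show Complex.I * (x:ℂ) * v = (Complex.I * v) * x by ring]
  simp_rw [hrw]
  have hder : ∀ x ∈ uIcc (0:ℝ) ξ, HasDerivAt (fun s : ℝ => (v:ℂ)⁻¹ * Complex.exp ((Complex.I*v) * s))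
      (Complex.I * Complex.exp ((Complex.I * v) * x)) x := by
    intro x _
    have := (hasDerivAt_expI x (Complex.I * v)).const_mul ((v:ℂ)⁻¹)
    refine this.congr_deriv ?_
    field_simp
  rw [intervalIntegral.integral_eq_sub_of_hasDerivAt hder
    ((Continuous.intervalIntegrable (by continuity) _ _))]
  rw [show (Complex.I * v) * (ξ:ℂ) = Complex.I * ξ * v by ring]
  push_cast
  field_simp
  simp

lemma prodInt {β α lam ξ : ℝ} (hβ0 : 0 < β) (hβ1 : β < 1) (hα : 0 < α) (hlam : 0 < lam)
    (hξ : 0 < ξ) :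
    Integrable (fun p : ℝ × ℝ => Complex.I * Complex.exp (Complex.I * p.1 * p.2) *
        ((α * p.2 ^ (-β) * Real.exp (-lam * p.2) : ℝ) : ℂ))
      ((volume.restrict (Ioc 0 ξ)).prod (volume.restrict (Ioi 0))) := by
  have hmeas : AEStronglyMeasurable (fun p : ℝ × ℝ =>
      Complex.I * Complex.exp (Complex.I * p.1 * p.2) *
        ((α * p.2 ^ (-β) * Real.exp (-lam * p.2) : ℝ) : ℂ))
      ((volume.restrict (Ioc 0 ξ)).prod (volume.restrict (Ioi 0))) := by
    rw [Measure.prod_restrict]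
    refine ContinuousOn.aestronglyMeasurable ?_ (measurableSet_Ioc.prod measurableSet_Ioi)
    apply ContinuousOn.mul
    · exact Continuous.continuousOn (by continuity)
    · apply Complex.continuous_ofReal.comp_continuousOn
      apply ContinuousOn.mul
      · exact continuousOn_const.mul (ContinuousOn.rpow_const (continuous_snd.continuousOn)
          (fun p hp => Or.inl (ne_of_gt hp.2)))
      · exact (Real.continuous_exp.comp (by continuity)).continuousOn
  rw [integrable_prod_iff hmeas]
  constructor
  · refine Eventually.of_forall (fun x => ?_)
    have := (intKer hβ0 hβ1 hα hlam x).const_mul Complex.I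
    simpa only [mul_assoc] using this
  · have hnorm : ∀ (x : ℝ) (v : ℝ),
        ‖Complex.I * Complex.exp (Complex.I * x * v) *
          ((α * v ^ (-β) * Real.exp (-lam * v) : ℝ) : ℂ)‖
        = ‖((α * v ^ (-β) * Real.exp (-lam * v) : ℝ) : ℂ)‖ := by
      intro x v
      rw [norm_mul, norm_mul]
      rw [show Complex.I * (x:ℂ) * v = ((x * v : ℝ):ℂ) * Complex.I by push_cast; ring]
      rw [Complex.norm_exp_ofReal_mul_I]
      simp
    refine Integrable.congr (f := fun _ : ℝ =>
        ∫ v in Ioi (0:ℝ), ‖((α * v ^ (-β) * Real.exp (-lam * v) : ℝ) : ℂ)‖)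
      (integrableOn_const measure_Ioc_lt_top.ne) ?_
    refine Eventually.of_forall (fun x => ?_)
    exact (integral_congr_ae (Eventually.of_forall (fun v => hnorm x v))).symm

end Aux

/-- Self-decomposability identity for the one-sided tempered stable law: its characteristic
exponent equals `∫₀^ξ (log φ_Y(x)) dx/x` where `φ_Y` is the characteristic function of the
background driving Lévy process, all integrals being absolutely convergent. -/
theorem tempered_stable_self_decomposable (β α lam ξ : ℝ) (hβ0 : 0 < β) (hβ1 : β < 1)
    (hα : 0 < α) (hlam : 0 < lam) (hξ : 0 < ξ) :
    IntegrableOn (fun y : ℝ =>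
        (Complex.exp (Complex.I * ξ * y) - 1) *
          ((α * Real.exp (-lam * y) * y ^ (-1 - β) : ℝ) : ℂ)) (Ioi 0) ∧
    (∀ x : ℝ, IntegrableOn (fun v : ℝ =>
        (Complex.exp (Complex.I * x * v) - 1) *
          ((α * (β + lam * v) * v ^ (-1 - β) * Real.exp (-lam * v) : ℝ) : ℂ)) (Ioi 0)) ∧
    IntegrableOn (fun x : ℝ =>
        (1 / (x : ℂ)) * ∫ v in Ioi (0 : ℝ),
          (Complex.exp (Complex.I * x * v) - 1) *
            ((α * (β + lam * v) * v ^ (-1 - β) * Real.exp (-lam * v) : ℝ) : ℂ)) (Ioc 0 ξ) ∧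
    ∫ y in Ioi (0 : ℝ),
        (Complex.exp (Complex.I * ξ * y) - 1) *
          ((α * Real.exp (-lam * y) * y ^ (-1 - β) : ℝ) : ℂ)
      = ∫ x in Ioc (0 : ℝ) ξ,
          (1 / (x : ℂ)) * ∫ v in Ioi (0 : ℝ),
            (Complex.exp (Complex.I * x * v) - 1) *
              ((α * (β + lam * v) * v ^ (-1 - β) * Real.exp (-lam * v) : ℝ) : ℂ) := by
  have hprod := prodInt hβ0 hβ1 hα hlam hξ
  -- pointwise identity on `Ioc 0 ξ` between the inner `F`-integral and the statement's integrand
  have hqeq : ∀ x ∈ Ioc (0:ℝ) ξ,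
      (∫ v in Ioi (0:ℝ), Complex.I * Complex.exp (Complex.I * x * v) *
          ((α * v ^ (-β) * Real.exp (-lam * v) : ℝ) : ℂ))
        = (1 / (x : ℂ)) * ∫ v in Ioi (0 : ℝ),
            (Complex.exp (Complex.I * x * v) - 1) *
              ((α * (β + lam * v) * v ^ (-1 - β) * Real.exp (-lam * v) : ℝ) : ℂ) := by
    intro x hx
    have hx0 : (x:ℂ) ≠ 0 := Complex.ofReal_ne_zero.mpr (ne_of_gt hx.1)
    have h1 : (∫ v in Ioi (0:ℝ), Complex.I * Complex.exp (Complex.I * x * v) *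
          ((α * v ^ (-β) * Real.exp (-lam * v) : ℝ) : ℂ))
        = Complex.I * ∫ v in Ioi (0:ℝ), Complex.exp (Complex.I * x * v) *
            ((α * v ^ (-β) * Real.exp (-lam * v) : ℝ) : ℂ) := by
      simp_rw [mul_assoc]
      exact MeasureTheory.integral_const_mul _ _
    rw [h1, ibp hβ0 hβ1 hα hlam x]
    field_simp
  refine ⟨int1 hβ0 hβ1 hα hlam ξ, fun x => int2 hβ0 hβ1 hα hlam x, ?_, ?_⟩
  · -- integrability of the outer integrand on `Ioc 0 ξ`
    apply (hprod.integral_prod_left).congr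
    filter_upwards [ae_restrict_mem measurableSet_Ioc] with x hx
    exact hqeq x hx
  · -- the main identity, via Fubini
    calc ∫ y in Ioi (0 : ℝ), (Complex.exp (Complex.I * ξ * y) - 1) *
            ((α * Real.exp (-lam * y) * y ^ (-1 - β) : ℝ) : ℂ)
        = ∫ v in Ioi (0:ℝ), ∫ x in Ioc (0:ℝ) ξ,
            Complex.I * Complex.exp (Complex.I * x * v) *
              ((α * v ^ (-β) * Real.exp (-lam * v) : ℝ) : ℂ) := by
          apply setIntegral_congr_fun measurableSet_Ioi
          intro v hv
          dsimp only
          have hv' : (0:ℝ) < v := hv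
          symm
          have hvC : ((v:ℂ)) ≠ 0 := Complex.ofReal_ne_zero.mpr hv'.ne'
          rw [MeasureTheory.integral_mul_const, xint hξ hv']
          have e2 : α * v ^ (-β) * Real.exp (-lam * v)
              = v * (α * Real.exp (-lam * v) * v ^ (-1-β)) := by
            rw [show (-β : ℝ) = 1 + (-1-β) by ring, Real.rpow_add hv', Real.rpow_one]; ring
          rw [e2]
          push_cast
          field_simp
      _ = ∫ x in Ioc (0:ℝ) ξ, ∫ v in Ioi (0:ℝ),
            Complex.I * Complex.exp (Complex.I * x * v) *
              ((α * v ^ (-β) * Real.exp (-lam * v) : ℝ) : ℂ) := by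
          exact (MeasureTheory.integral_integral_swap hprod).symm
      _ = ∫ x in Ioc (0 : ℝ) ξ, (1 / (x : ℂ)) * ∫ v in Ioi (0 : ℝ),
            (Complex.exp (Complex.I * x * v) - 1) *
              ((α * (β + lam * v) * v ^ (-1 - β) * Real.exp (-lam * v) : ℝ) : ℂ) := by
          exact setIntegral_congr_fun measurableSet_Ioc (fun x hx => hqeq x hx)
end

section
/- Let 0 < β < 1, α > 0, λ > 0. For every real x, the function v ↦ (e^{ivx} − 1)·α·(β + λv)·v^{−1−β}·e^{−λv} is integrable on (0,∞) and ∫₀^∞ (e^{ivx} − 1)·α·(β + λv)·v^{−1−β}·e^{−λv} dv = α·Γ(1−β)·(ix)/(λ − ix)^{1−β}, where (λ − ix)^{1−β} is the principal branch of the complex power. -/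
open MeasureTheory Set Filter

namespace BDLPaux

open Complex Filter

/-- `‖e^{iθ} - 1‖ ≤ |θ|`. -/
lemma norm_exp_I_mul_sub_one_le (θ : ℝ) : ‖Complex.exp (Complex.I * θ) - 1‖ ≤ |θ| := by
  have hd : ∀ y : ℝ, y ∈ (univ : Set ℝ) →
      HasDerivWithinAt (fun t : ℝ => Complex.exp (Complex.I * t))
        (Complex.exp (Complex.I * y) * Complex.I) univ y := by
    intro y _
    have h1 : HasDerivAt (fun z : ℂ => Complex.exp (Complex.I * z))
        (Complex.exp (Complex.I * (y : ℂ)) * Complex.I) (y : ℂ) := by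
      simpa using (((hasDerivAt_id ((y : ℝ) : ℂ)).const_mul Complex.I).cexp)
    exact (h1.comp_ofReal).hasDerivWithinAt
  have hb : ∀ y : ℝ, y ∈ (univ : Set ℝ) → ‖Complex.exp (Complex.I * y) * Complex.I‖ ≤ 1 := by
    intro y _
    rw [norm_mul, Complex.norm_I, Complex.norm_exp]
    simp
  have := Convex.norm_image_sub_le_of_norm_hasDerivWithin_le hd hb convex_univ
    (mem_univ (0 : ℝ)) (mem_univ θ)
  simpa using this

/-- Integrability of `v^b e^{-cv}` on `(0,∞)` for `b > -1`, `c > 0`. -/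
lemma integrableOn_rpow_mul_exp_neg {b c : ℝ} (hb : -1 < b) (hc : 0 < c) :
    IntegrableOn (fun v : ℝ => v ^ b * Real.exp (-(c * v))) (Ioi 0) := by
  have h1 : IntegrableOn (fun x : ℝ => Real.exp (-x) * x ^ b) (Ioi 0) := by
    simpa using Real.GammaIntegral_convergent (show (0:ℝ) < b + 1 by linarith)
  have h2 : IntegrableOn (fun v : ℝ => Real.exp (-(c * v)) * (c * v) ^ b) (Ioi 0) := by
    have h := (integrableOn_Ioi_comp_mul_left_iff
      (fun x : ℝ => Real.exp (-x) * x ^ b) 0 hc).mpr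
    simp only [mul_zero] at h
    exact h h1
  have h3 : IntegrableOn (fun v : ℝ => (c ^ b)⁻¹ * (Real.exp (-(c * v)) * (c * v) ^ b))
      (Ioi 0) := h2.const_mul ((c ^ b)⁻¹)
  refine IntegrableOn.congr_fun h3 (fun v hv => ?_) measurableSet_Ioi
  rw [mem_Ioi] at hv
  have hcb : (0:ℝ) < c ^ b := Real.rpow_pos_of_pos hc b
  rw [Real.mul_rpow hc.le hv.le]
  field_simp

/-- A.e.-strong measurability helper. -/
lemma aesm_cpow_mul_exp (p : ℝ) (w : ℂ) :
    AEStronglyMeasurable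
      (fun t : ℝ => ((t ^ p : ℝ) : ℂ) * Complex.exp (w * t))
      (volume.restrict (Ioi 0)) := by
  apply ContinuousOn.aestronglyMeasurable ?_ measurableSet_Ioi
  apply ContinuousOn.mul
  · exact Complex.continuous_ofReal.comp_continuousOn
      (fun t ht => (Real.continuousAt_rpow_const t p (Or.inl (ne_of_gt ht))).continuousWithinAt)
  · exact (Complex.continuous_exp.comp
      ((continuous_const.mul Complex.continuous_ofReal))).continuousOn

lemma norm_aux (p : ℝ) (w : ℂ) {t : ℝ} (ht : 0 < t) :
    ‖((t ^ p : ℝ) : ℂ) * Complex.exp (w * t)‖ = t ^ p * Real.exp (w.re * t) := by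
  rw [norm_mul, Complex.norm_real, Complex.norm_exp,
    Real.norm_eq_abs, _root_.abs_of_nonneg (Real.rpow_nonneg ht.le p)]
  congr 2
  simp [Complex.mul_re]

/-- Integrability of `t^{a-1} e^{-st}` for complex `s` with positive real part. -/
lemma integrableOn_cpow_mul_exp {a : ℝ} (ha : 0 < a) {s : ℂ} (hs : 0 < s.re) :
    IntegrableOn (fun t : ℝ => ((t ^ (a - 1) : ℝ) : ℂ) * Complex.exp (-(s * t))) (Ioi 0) := by
  refine Integrable.mono' (g := fun t : ℝ => t ^ (a - 1) * Real.exp (-(s.re * t)))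
    (integrableOn_rpow_mul_exp_neg (by linarith) hs) ?_ ?_
  · simpa [neg_mul] using aesm_cpow_mul_exp (a - 1) (-s)
  · filter_upwards [ae_restrict_mem measurableSet_Ioi] with t ht
    rw [mem_Ioi] at ht
    have := norm_aux (a - 1) (-s) ht
    rw [neg_mul] at this
    rw [this]
    simp

/-- The Gamma-type integral with complex scale parameter. -/
lemma integral_cpow_mul_exp {a : ℝ} (ha : 0 < a) {s : ℂ} (hs : 0 < s.re) :
    ∫ t in Ioi (0:ℝ), ((t ^ (a - 1) : ℝ) : ℂ) * Complex.exp (-(s * t))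
      = (Real.Gamma a : ℂ) * s ^ (-(a : ℂ)) := by
  set U : Set ℂ := {z | 0 < z.re} with hU
  have hUopen : IsOpen U := isOpen_lt continuous_const Complex.continuous_re
  have hUconn : IsPreconnected U := (convex_halfSpace_re_gt 0).isPreconnected
  have hfd : DifferentiableOn ℂ
      (fun z => ∫ t in Ioi (0:ℝ), ((t ^ (a - 1) : ℝ) : ℂ) * Complex.exp (-(z * t))) U := by
    intro z₀ hz₀
    have hz₀' : 0 < z₀.re := hz₀
    set ε := z₀.re / 2 with hε
    have hε0 : 0 < ε := by positivity
    have key := hasDerivAt_integral_of_dominated_loc_of_deriv_le (μ := volume.restrict (Ioi 0))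
      (F := fun (z : ℂ) (t : ℝ) => ((t ^ (a - 1) : ℝ) : ℂ) * Complex.exp (-(z * t)))
      (F' := fun (z : ℂ) (t : ℝ) =>
        ((t ^ (a - 1) : ℝ) : ℂ) * (Complex.exp (-(z * t)) * (-(t : ℂ))))
      (x₀ := z₀) (bound := fun t => t ^ a * Real.exp (-(ε * t))) (Metric.ball_mem_nhds z₀ hε0)
      (Eventually.of_forall fun z => by simpa [neg_mul] using aesm_cpow_mul_exp (a - 1) (-z))
      (integrableOn_cpow_mul_exp ha hz₀') ?_ ?_
      ((integrableOn_rpow_mul_exp_neg (by linarith) hε0)) ?_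
    · exact key.2.differentiableAt.differentiableWithinAt
    · -- measurability of F' z₀
      have : AEStronglyMeasurable
          (fun t : ℝ => ((t ^ a : ℝ) : ℂ) * Complex.exp ((-z₀) * t) * (-1 : ℂ))
          (volume.restrict (Ioi 0)) := (aesm_cpow_mul_exp a (-z₀)).mul_const _
      refine this.congr ?_
      filter_upwards [ae_restrict_mem measurableSet_Ioi] with t ht
      rw [mem_Ioi] at ht
      have h1 : ((t:ℝ) ^ a : ℝ) = t ^ (a - 1) * t := by
        rw [← Real.rpow_add_one ht.ne' (a - 1)]; ring_nf
      rw [h1]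
      push_cast
      ring_nf
    · -- bound
      filter_upwards [ae_restrict_mem measurableSet_Ioi] with t ht
      rw [mem_Ioi] at ht
      intro z hz
      have hzre : ε ≤ z.re := by
        have h1 : |z.re - z₀.re| ≤ ‖z - z₀‖ := by
          simpa using Complex.abs_re_le_norm (z - z₀)
        have h2 : ‖z - z₀‖ < ε := by
          simpa [Metric.mem_ball, Complex.dist_eq] using hz
        have := abs_sub_le_iff.mp (le_of_lt (lt_of_le_of_lt h1 h2))
        have h3 : z₀.re - z.re ≤ ε := this.2
        simp only [hε] at h3 ⊢
        linarith
      rw [norm_mul, norm_mul, norm_neg]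
      have h4 : ‖((t ^ (a - 1) : ℝ) : ℂ)‖ = t ^ (a - 1) := by
        rw [Complex.norm_real, Real.norm_eq_abs, _root_.abs_of_nonneg (Real.rpow_nonneg ht.le _)]
      have h5 : ‖Complex.exp (-(z * t))‖ ≤ Real.exp (-(ε * t)) := by
        rw [Complex.norm_exp]
        apply Real.exp_le_exp.mpr
        have : (-(z * (t:ℂ))).re = -(z.re * t) := by simp [Complex.mul_re]
        rw [this]
        have : ε * t ≤ z.re * t := mul_le_mul_of_nonneg_right hzre ht.le
        linarith
      have h6 : ‖((t:ℝ) : ℂ)‖ = t := by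
        rw [Complex.norm_real, Real.norm_eq_abs, _root_.abs_of_nonneg ht.le]
      rw [h4, h6]
      calc t ^ (a - 1) * (‖Complex.exp (-(z * t))‖ * t)
          ≤ t ^ (a - 1) * (Real.exp (-(ε * t)) * t) := by
            apply mul_le_mul_of_nonneg_left _ (Real.rpow_nonneg ht.le _)
            exact mul_le_mul_of_nonneg_right h5 ht.le
        _ = t ^ a * Real.exp (-(ε * t)) := by
            have hta : t ^ a = t ^ (a - 1) * t := by
              rw [← Real.rpow_add_one ht.ne']; ring_nf
            rw [hta]; ring
    · -- differentiability in z
      filter_upwards [ae_restrict_mem measurableSet_Ioi] with t ht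
      intro z hz
      have h1 : HasDerivAt (fun z : ℂ => -(z * (t:ℂ))) (-(t:ℂ)) z := by
        have h0 : HasDerivAt (fun z : ℂ => z * (t:ℂ)) (t:ℂ) z := by
          simpa using (hasDerivAt_id z).mul_const ((t:ℝ):ℂ)
        exact h0.neg
      exact (h1.cexp).const_mul _
  have hgd : DifferentiableOn ℂ (fun z => (Real.Gamma a : ℂ) * z ^ (-(a:ℂ))) U := by
    intro z hz
    refine DifferentiableAt.differentiableWithinAt (DifferentiableAt.const_mul ?_ _)
    exact ((hasDerivAt_id z).cpow_const (Complex.mem_slitPlane_iff.mpr (Or.inl hz))).differentiableAt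
  have hreal : ∀ r : ℝ, 0 < r →
      (∫ t in Ioi (0:ℝ), ((t ^ (a - 1) : ℝ) : ℂ) * Complex.exp (-((r:ℂ) * t)))
        = (Real.Gamma a : ℂ) * (r:ℂ) ^ (-(a:ℂ)) := by
    intro r hr
    have h1 : (∫ t in Ioi (0:ℝ), ((t ^ (a - 1) : ℝ) : ℂ) * Complex.exp (-((r:ℂ) * t)))
        = ∫ t in Ioi (0:ℝ), (t:ℂ) ^ ((a:ℂ) - 1) * Complex.exp (-((r:ℂ) * t)) := by
      refine setIntegral_congr_fun measurableSet_Ioi fun t ht => ?_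
      rw [mem_Ioi] at ht
      rw [Complex.ofReal_cpow ht.le]
      push_cast
      ring
    rw [h1, integral_cpow_mul_exp_neg_mul_Ioi (by simpa using ha) hr, Complex.Gamma_ofReal]
    have harg : ((r:ℂ)).arg ≠ Real.pi := by
      rw [Complex.arg_ofReal_of_nonneg hr.le]
      exact Real.pi_ne_zero.symm
    rw [one_div, Complex.inv_cpow _ _ harg, ← Complex.cpow_neg]
    ring
  have heq := (hfd.analyticOnNhd hUopen).eqOn_of_preconnected_of_frequently_eq
    (hgd.analyticOnNhd hUopen) hUconn (show (1:ℂ) ∈ U by simp [hU]) ?_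
  · exact heq hs
  · -- frequently equal near 1
    have htend : Tendsto (fun n : ℕ => ((1 + 1/(n+1) : ℝ) : ℂ)) atTop (nhdsWithin 1 {(1:ℂ)}ᶜ) := by
      apply tendsto_nhdsWithin_of_tendsto_nhds_of_eventually_within
      · have h1 : Tendsto (fun n : ℕ => (1 + 1/(n+1) : ℝ)) atTop (nhds 1) := by
          have := tendsto_one_div_add_atTop_nhds_zero_nat (𝕜 := ℝ)
          have h2 := tendsto_const_nhds (x := (1:ℝ)) (f := atTop (α := ℕ)) |>.add this
          simpa using h2
        have h3 := (Complex.continuous_ofReal.tendsto 1).comp h1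
        have h4 : Tendsto (fun n : ℕ => ((1 + 1/(n+1) : ℝ) : ℂ)) atTop (nhds ((1:ℝ):ℂ)) :=
          h3.congr (fun n => rfl)
        simpa using h4
      · refine Eventually.of_forall fun n => ?_
        simp only [mem_compl_iff, mem_singleton_iff]
        intro h
        have hre := congrArg Complex.re h
        simp only [Complex.ofReal_re, Complex.one_re] at hre
        have : (1:ℝ)/(n+1) = 0 := by linarith
        have hpos : (0:ℝ) < 1/(n+1) := by positivity
        linarith
    exact htend.frequently ((Eventually.of_forall fun n : ℕ => hreal (1 + 1/((n:ℝ)+1)) (by positivity)).frequently)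

end BDLPaux

/-- Characteristic exponent of the background driving Lévy process of the one-sided tempered
stable distribution: `∫₀^∞ (e^{ivx}−1) α (β+λv) v^{−1−β} e^{−λv} dv
  = α Γ(1−β) (ix)/(λ−ix)^{1−β}`. -/
theorem BDLP_char_exponent (β α lam : ℝ) (hβ0 : 0 < β) (hβ1 : β < 1)
    (hα : 0 < α) (hlam : 0 < lam) (x : ℝ) :
    IntegrableOn (fun v : ℝ =>
        (Complex.exp (Complex.I * x * v) - 1) *
          ((α * (β + lam * v) * v ^ (-1 - β) * Real.exp (-lam * v) : ℝ) : ℂ)) (Ioi 0) ∧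
    ∫ v in Ioi (0 : ℝ),
        (Complex.exp (Complex.I * x * v) - 1) *
          ((α * (β + lam * v) * v ^ (-1 - β) * Real.exp (-lam * v) : ℝ) : ℂ)
      = (α : ℂ) * (Real.Gamma (1 - β) : ℂ) * (Complex.I * x) /
          ((lam : ℂ) - Complex.I * x) ^ ((1 - β : ℝ) : ℂ) := by
  have h1β : (0:ℝ) < 1 - β := by linarith
  set s : ℂ := (lam : ℂ) - Complex.I * x with hs_def
  have hs_re : 0 < s.re := by
    simp only [hs_def, Complex.sub_re, Complex.ofReal_re, Complex.mul_re, Complex.I_re,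
      Complex.I_im, Complex.ofReal_im]
    simpa using hlam
  set f : ℝ → ℂ := fun v =>
    (Complex.exp (Complex.I * x * v) - 1) *
      ((α * (β + lam * v) * v ^ (-1 - β) * Real.exp (-lam * v) : ℝ) : ℂ) with hf_def
  set h : ℝ → ℂ := fun v =>
    (Complex.I * x * α) * (((v ^ (-β) : ℝ) : ℂ) * Complex.exp (-(s * v))) with hh_def
  set G : ℝ → ℂ := fun v =>
    (1 - Complex.exp (Complex.I * x * v)) *
      ((α * v ^ (-β) * Real.exp (-lam * v) : ℝ) : ℂ) with hG_def
  have hexp_bound : ∀ v : ℝ, 0 ≤ v → ‖Complex.exp (Complex.I * x * v) - 1‖ ≤ |x| * v := by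
    intro v hv
    have hb := BDLPaux.norm_exp_I_mul_sub_one_le (x * v)
    rw [abs_mul, _root_.abs_of_nonneg hv] at hb
    have harg : Complex.I * x * v = Complex.I * ((x * v : ℝ) : ℂ) := by push_cast; ring
    rw [harg]
    exact hb
  have hexp_norm : ∀ v : ℝ, ‖Complex.exp (Complex.I * x * v)‖ = 1 := by
    intro v
    rw [Complex.norm_exp]
    have : (Complex.I * x * v).re = 0 := by simp [Complex.mul_re]
    rw [this, Real.exp_zero]
  -- measurability of f
  have hf_meas : AEStronglyMeasurable f (volume.restrict (Ioi 0)) := by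
    rw [hf_def]
    apply ContinuousOn.aestronglyMeasurable ?_ measurableSet_Ioi
    apply ContinuousOn.mul
    · exact ((Complex.continuous_exp.comp
        (continuous_const.mul Complex.continuous_ofReal)).sub continuous_const).continuousOn
    · apply Complex.continuous_ofReal.comp_continuousOn
      apply ContinuousOn.mul ?_ (Real.continuous_exp.comp
        (continuous_const.mul continuous_id)).continuousOn
      apply ContinuousOn.mul (by fun_prop)
      exact fun v hv => (Real.continuousAt_rpow_const v _ (Or.inl (ne_of_gt hv))).continuousWithinAt
  -- integrability of f
  have hg_int : IntegrableOn (fun v : ℝ => (|x| * α) *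
      (β * (v ^ (-β) * Real.exp (-lam * v)) + lam * (v ^ (1-β) * Real.exp (-lam * v))))
      (Ioi 0) := by
    have i1 := BDLPaux.integrableOn_rpow_mul_exp_neg (show (-1:ℝ) < -β by linarith) hlam
    have i2 := BDLPaux.integrableOn_rpow_mul_exp_neg (show (-1:ℝ) < 1 - β by linarith) hlam
    simp only [← neg_mul] at i1 i2
    exact ((i1.const_mul β).add (i2.const_mul lam)).const_mul _
  have hf_int : IntegrableOn f (Ioi 0) := by
    refine Integrable.mono' hg_int hf_meas ?_
    filter_upwards [ae_restrict_mem measurableSet_Ioi] with v hv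
    rw [mem_Ioi] at hv
    have e1 : v ^ (-1-β) = v ^ (-β) * v⁻¹ := by
      rw [show (-1-β:ℝ) = -β + (-1) by ring, Real.rpow_add hv, Real.rpow_neg_one]
    have e2 : v ^ (1-β) = v ^ (-β) * v := by
      rw [show (1-β:ℝ) = -β + 1 by ring, Real.rpow_add hv, Real.rpow_one]
    have hP : (0:ℝ) ≤ v ^ (-β) := Real.rpow_nonneg hv.le _
    have hreal_nonneg : 0 ≤ α * (β + lam * v) * v ^ (-1-β) * Real.exp (-lam * v) := by
      have h1 : (0:ℝ) ≤ β + lam * v := by positivity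
      have h2 : (0:ℝ) ≤ v ^ (-1-β) := Real.rpow_nonneg hv.le _
      have h3 : (0:ℝ) ≤ Real.exp (-lam * v) := Real.exp_nonneg _
      positivity
    rw [hf_def]
    simp only
    rw [norm_mul, Complex.norm_real, Real.norm_eq_abs, _root_.abs_of_nonneg hreal_nonneg]
    calc ‖Complex.exp (Complex.I * x * v) - 1‖ *
          (α * (β + lam * v) * v ^ (-1-β) * Real.exp (-lam * v))
        ≤ (|x| * v) * (α * (β + lam * v) * v ^ (-1-β) * Real.exp (-lam * v)) :=
          mul_le_mul_of_nonneg_right (hexp_bound v hv.le) hreal_nonneg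
      _ = (|x| * α) * (β * (v ^ (-β) * Real.exp (-lam * v))
            + lam * (v ^ (1-β) * Real.exp (-lam * v))) := by
          rw [e1, e2]
          field_simp
  -- integrability of h
  have hh_int : IntegrableOn h (Ioi 0) := by
    have hI := BDLPaux.integrableOn_cpow_mul_exp h1β hs_re
    simp only [show (1 - β - 1 : ℝ) = -β by ring] at hI
    exact hI.const_mul _
  -- derivative of G
  have hG_deriv : ∀ v ∈ Ioi (0:ℝ), HasDerivAt G (f v - h v) v := by
    intro v hv
    rw [mem_Ioi] at hv
    have hA : HasDerivAt (fun y : ℝ => 1 - Complex.exp (Complex.I * x * y))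
        (-(Complex.exp (Complex.I * x * v) * (Complex.I * x))) v := by
      have h0 : HasDerivAt (fun z : ℂ => Complex.I * x * z) (Complex.I * x) ((v:ℝ):ℂ) := by
        simpa using (hasDerivAt_id ((v:ℝ):ℂ)).const_mul (Complex.I * (x:ℂ))
      exact ((h0.cexp).comp_ofReal).const_sub 1
    have hB : HasDerivAt (fun y : ℝ => (α * y ^ (-β) * Real.exp (-lam * y) : ℝ))
        ((α * (-β * v ^ (-β - 1))) * Real.exp (-lam * v)
          + (α * v ^ (-β)) * (Real.exp (-lam * v) * -lam)) v := by
      have hr : HasDerivAt (fun y : ℝ => α * y ^ (-β)) (α * (-β * v ^ (-β - 1))) v :=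
        (Real.hasDerivAt_rpow_const (Or.inl hv.ne')).const_mul α
      have he : HasDerivAt (fun y : ℝ => Real.exp (-lam * y)) (Real.exp (-lam * v) * -lam) v := by
        have h0 : HasDerivAt (fun y : ℝ => -lam * y) (-lam) v := by
          simpa using (hasDerivAt_id v).const_mul (-lam)
        exact h0.exp
      exact hr.mul he
    have hGd := hA.mul hB.ofReal_comp
    have hval : f v - h v =
        -(Complex.exp (Complex.I * x * v) * (Complex.I * x)) *
            ((α * v ^ (-β) * Real.exp (-lam * v) : ℝ) : ℂ)
          + (1 - Complex.exp (Complex.I * x * v)) *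
            (((α * (-β * v ^ (-β - 1))) * Real.exp (-lam * v)
              + (α * v ^ (-β)) * (Real.exp (-lam * v) * -lam) : ℝ) : ℂ) := by
      have hexp_s : Complex.exp (-(s * v)) =
          Complex.exp (Complex.I * x * v) * ((Real.exp (-lam * v) : ℝ) : ℂ) := by
        rw [Complex.ofReal_exp, ← Complex.exp_add]
        congr 1
        rw [hs_def]
        push_cast
        ring
      have e1 : v ^ (-1-β) = v ^ (-β) * v⁻¹ := by
        rw [show (-1-β:ℝ) = -β + (-1) by ring, Real.rpow_add hv, Real.rpow_neg_one]
      have e1' : v ^ (-β-1) = v ^ (-β) * v⁻¹ := by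
        rw [show (-β-1:ℝ) = -β + (-1) by ring, Real.rpow_add hv, Real.rpow_neg_one]
      have hvne : ((v:ℝ):ℂ) ≠ 0 := Complex.ofReal_ne_zero.mpr hv.ne'
      rw [hf_def, hh_def]
      simp only
      rw [hexp_s, e1, e1']
      push_cast
      field_simp
      ring
    rw [hval]
    exact hGd
  have hG0 : G 0 = 0 := by
    rw [hG_def]
    simp
  -- continuity at 0 within Ici 0
  have hcont : ContinuousWithinAt G (Ici 0) 0 := by
    have hz : Tendsto G (nhdsWithin 0 (Ici 0)) (nhds 0) := by
      apply squeeze_zero_norm' (a := fun v => (α * |x|) * (v ^ (1-β) * Real.exp (-lam * v)))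
      · filter_upwards [self_mem_nhdsWithin] with v hv
        rw [mem_Ici] at hv
        rcases eq_or_lt_of_le hv with hv0 | hv0
        · rw [← hv0, hG_def]
          simp [Real.zero_rpow (by linarith : (1:ℝ) - β ≠ 0)]
        · have e2 : v ^ (1-β) = v ^ (-β) * v := by
            rw [show (1-β:ℝ) = -β + 1 by ring, Real.rpow_add hv0, Real.rpow_one]
          have hP : (0:ℝ) ≤ v ^ (-β) := Real.rpow_nonneg hv0.le _
          have hrn : 0 ≤ α * v ^ (-β) * Real.exp (-lam * v) := by positivity
          rw [hG_def]
          simp only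
          rw [norm_mul, Complex.norm_real, Real.norm_eq_abs, _root_.abs_of_nonneg hrn,
            norm_sub_rev]
          calc ‖Complex.exp (Complex.I * x * v) - 1‖ * (α * v ^ (-β) * Real.exp (-lam * v))
              ≤ (|x| * v) * (α * v ^ (-β) * Real.exp (-lam * v)) :=
                mul_le_mul_of_nonneg_right (hexp_bound v hv0.le) hrn
            _ = (α * |x|) * (v ^ (1-β) * Real.exp (-lam * v)) := by rw [e2]; ring
      · have hc : ContinuousWithinAt
            (fun v : ℝ => (α * |x|) * (v ^ (1-β) * Real.exp (-lam * v))) (Ici 0) 0 := by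
          refine ContinuousWithinAt.mul continuousWithinAt_const (ContinuousWithinAt.mul ?_ ?_)
          · exact (Real.continuousAt_rpow_const 0 _ (Or.inr h1β.le)).continuousWithinAt
          · exact (Real.continuous_exp.comp (continuous_const.mul continuous_id)).continuousWithinAt
        have h0v : (α * |x| * ((0:ℝ) ^ (1 - β) * Real.exp (-lam * 0))) = 0 := by
          simp [Real.zero_rpow (show (1:ℝ) - β ≠ 0 by linarith)]
        rw [ContinuousWithinAt, h0v] at hc
        exact hc
    rw [ContinuousWithinAt, hG0]
    exact hz
  -- limit at infinity
  have htop : Tendsto G atTop (nhds 0) := by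
    apply squeeze_zero_norm' (a := fun v => (2 * α) * (v ^ (-β) * Real.exp (-lam * v)))
    · filter_upwards [eventually_gt_atTop 0] with v hv
      have hP : (0:ℝ) ≤ v ^ (-β) := Real.rpow_nonneg hv.le _
      have hrn : 0 ≤ α * v ^ (-β) * Real.exp (-lam * v) := by positivity
      rw [hG_def]
      simp only
      rw [norm_mul, Complex.norm_real, Real.norm_eq_abs, _root_.abs_of_nonneg hrn]
      have h2 : ‖1 - Complex.exp (Complex.I * x * v)‖ ≤ 2 := by
        calc ‖1 - Complex.exp (Complex.I * x * v)‖
            ≤ ‖(1:ℂ)‖ + ‖Complex.exp (Complex.I * x * v)‖ := norm_sub_le _ _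
          _ = 2 := by rw [hexp_norm v, norm_one]; norm_num
      calc ‖1 - Complex.exp (Complex.I * x * v)‖ * (α * v ^ (-β) * Real.exp (-lam * v))
          ≤ 2 * (α * v ^ (-β) * Real.exp (-lam * v)) :=
            mul_le_mul_of_nonneg_right h2 hrn
        _ = (2 * α) * (v ^ (-β) * Real.exp (-lam * v)) := by ring
    · have := (tendsto_rpow_mul_exp_neg_mul_atTop_nhds_zero (-β) lam hlam).const_mul (2 * α)
      simpa using this
  -- integration by parts
  have hΦ_int : IntegrableOn (fun v => f v - h v) (Ioi 0) := hf_int.sub hh_int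
  have hIBP := MeasureTheory.integral_Ioi_of_hasDerivAt_of_tendsto hcont hG_deriv hΦ_int htop
  rw [hG0, sub_zero] at hIBP
  have hsplit : (∫ v in Ioi (0:ℝ), f v)
      = (∫ v in Ioi (0:ℝ), (f v - h v)) + ∫ v in Ioi (0:ℝ), h v := by
    rw [← integral_add hΦ_int hh_int]
    congr 1
    funext v
    ring
  have hh_val : (∫ v in Ioi (0:ℝ), h v)
      = (Complex.I * x * α) * ((Real.Gamma (1-β) : ℂ) * s ^ (-(((1-β):ℝ):ℂ))) := by
    rw [hh_def]
    simp only
    rw [MeasureTheory.integral_const_mul]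
    congr 1
    have hI := BDLPaux.integral_cpow_mul_exp h1β hs_re
    simp only [show (1 - β - 1 : ℝ) = -β by ring] at hI
    exact hI
  refine ⟨hf_int, ?_⟩
  rw [hsplit, hIBP, zero_add, hh_val, Complex.cpow_neg, div_eq_mul_inv]
  ring
end

section
/- Let 0 < β < 1, α > 0, λ > 0, and y > 0. Then ∫₀^∞ ( ∫_{e^t·y}^∞ α·e^{−λs}·s^{−1−β} ds ) dt = ∫_y^∞ α·λ^β·Γ(−β, λx)·x^{−1} dx, both sides being finite; that is, the measure U(dx) = α·λ^β·Γ(−β, λx)·x^{−1} dx on (0,∞) satisfies U((y,∞)) = ∫₀^∞ W((e^t·y, ∞)) dt where W is the one-sided tempered stable Lévy measure. -/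
open MeasureTheory Set

/-- Upper incomplete gamma function `Γ(s,x) = ∫_x^∞ t^{s−1} e^{−t} dt`. -/
noncomputable def upperGamma (s x : ℝ) : ℝ := ∫ t in Ioi x, t ^ (s - 1) * Real.exp (-t)

/-- The integrand of the upper incomplete gamma function is integrable on `(c,∞)`
for `c > 0` and nonpositive exponent. -/
lemma gammaIntegrand_integrableOn {r : ℝ} (hr : r ≤ 0) {c : ℝ} (hc : 0 < c) :
    IntegrableOn (fun t : ℝ => t ^ r * Real.exp (-t)) (Ioi c) := by
  have hmeas : AEStronglyMeasurable (fun t : ℝ => t ^ r * Real.exp (-t))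
      (volume.restrict (Ioi c)) := by
    apply ContinuousOn.aestronglyMeasurable _ measurableSet_Ioi
    apply ContinuousOn.mul
    · exact fun t ht => (Real.continuousAt_rpow_const t r
        (Or.inl (ne_of_gt (lt_trans hc ht)))).continuousWithinAt
    · exact (Real.continuous_exp.comp continuous_neg).continuousOn
  have hbound : IntegrableOn (fun t : ℝ => c ^ r * Real.exp (-(1:ℝ) * t)) (Ioi c) :=
    ((exp_neg_integrableOn_Ioi c one_pos).const_mul _)
  refine Integrable.mono' hbound hmeas ?_
  refine (ae_restrict_iff' measurableSet_Ioi).mpr (ae_of_all _ fun t ht => ?_)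
  have ht0 : 0 < t := lt_trans hc ht
  rw [Real.norm_eq_abs, abs_mul, abs_of_nonneg (Real.rpow_nonneg ht0.le r),
    abs_of_nonneg (Real.exp_pos _).le, neg_one_mul]
  exact mul_le_mul_of_nonneg_right
    (Real.rpow_le_rpow_of_nonpos hc (le_of_lt ht) hr) (Real.exp_pos _).le

/-- Nonnegativity of `upperGamma` for positive lower limit. -/
lemma upperGamma_nonneg (s : ℝ) {c : ℝ} (hc : 0 < c) : 0 ≤ upperGamma s c := by
  apply setIntegral_nonneg measurableSet_Ioi
  intro t ht
  exact mul_nonneg (Real.rpow_nonneg (le_of_lt (lt_trans hc ht)) _) (Real.exp_pos _).le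

/-- Elementary bound `Γ(s,c) ≤ c^{s-1} e^{-c}` for `s ≤ 1`, `c > 0`. -/
lemma upperGamma_le {s c : ℝ} (hs : s ≤ 1) (hc : 0 < c) :
    upperGamma s c ≤ c ^ (s - 1) * Real.exp (-c) := by
  have h1 : upperGamma s c ≤ ∫ t in Ioi c, c ^ (s - 1) * Real.exp (-t) := by
    refine setIntegral_mono_on (gammaIntegrand_integrableOn (by linarith) hc)
      (IntegrableOn.congr_fun ((exp_neg_integrableOn_Ioi c one_pos).const_mul (c ^ (s-1)))
        (fun t _ => by rw [neg_one_mul]) measurableSet_Ioi) measurableSet_Ioi ?_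
    intro t ht
    exact mul_le_mul_of_nonneg_right
      (Real.rpow_le_rpow_of_nonpos hc (le_of_lt ht) (by linarith)) (Real.exp_pos _).le
  calc upperGamma s c ≤ ∫ t in Ioi c, c ^ (s - 1) * Real.exp (-t) := h1
    _ = c ^ (s - 1) * Real.exp (-c) := by
        rw [MeasureTheory.integral_const_mul, integral_exp_neg_Ioi]

lemma upperGamma_antitoneOn {s : ℝ} (hs : s ≤ 1) :
    AntitoneOn (fun x => upperGamma s x) (Ioi (0:ℝ)) := by
  intro x hx x' hx' hxx'
  exact setIntegral_mono_set (gammaIntegrand_integrableOn (by linarith) hx)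
    ((ae_restrict_iff' measurableSet_Ioi).mpr (ae_of_all _ fun t ht =>
      mul_nonneg (Real.rpow_nonneg (le_of_lt (lt_trans hx ht)) _) (Real.exp_pos _).le))
    (HasSubset.Subset.eventuallyLE (Ioi_subset_Ioi hxx'))

/-- Tail of the tempered stable Lévy measure in terms of the incomplete gamma function. -/
lemma tail_eq_upperGamma {β α lam : ℝ} (hβ0 : 0 < β) (hlam : 0 < lam)
    {u : ℝ} (hu : 0 < u) :
    ∫ s in Ioi u, α * Real.exp (-lam * s) * s ^ (-1 - β)
      = α * lam ^ β * upperGamma (-β) (lam * u) := by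
  have key : (∫ s in Ioi u, (lam * s) ^ (-β - 1) * Real.exp (-(lam * s)))
      = lam⁻¹ • ∫ t in Ioi (lam * u), t ^ (-β - 1) * Real.exp (-t) :=
    integral_comp_mul_left_Ioi (fun t => t ^ (-β - 1) * Real.exp (-t)) u hlam
  have hcongr : ∀ s ∈ Ioi u, α * Real.exp (-lam * s) * s ^ (-1 - β)
      = (α * lam ^ (β + 1)) * ((lam * s) ^ (-β - 1) * Real.exp (-(lam * s))) := by
    intro s hs
    have hs0 : 0 < s := lt_trans hu hs
    have he : (-1 - β : ℝ) = -β - 1 := by ring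
    have h1 : lam ^ (β + 1) * lam ^ (-β - 1) = 1 := by
      rw [← Real.rpow_add hlam]; norm_num
    rw [Real.mul_rpow hlam.le hs0.le, he, neg_mul]
    linear_combination (-α) * s ^ (-β - 1 : ℝ) * Real.exp (-(lam * s)) * h1
  rw [setIntegral_congr_fun measurableSet_Ioi hcongr, MeasureTheory.integral_const_mul, key,
    smul_eq_mul]
  simp only [upperGamma]
  have h2 : lam ^ (β + 1) * lam⁻¹ = lam ^ β := by
    rw [Real.rpow_add hlam, Real.rpow_one, mul_assoc, mul_inv_cancel₀ hlam.ne', mul_one]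
  linear_combination α * (∫ t in Ioi (lam * u), t ^ (-β - 1 : ℝ) * Real.exp (-t)) * h2

/-- The Lévy measure `U(dx) = α λ^β Γ(−β,λx) x⁻¹ dx` of the self-decomposable law whose
background driving Lévy process is the one-sided tempered stable process satisfies
`U((y,∞)) = ∫₀^∞ W((e^t y, ∞)) dt`, both sides being finite. -/
theorem selfdecomposable_levy_tail (β α lam y : ℝ) (hβ0 : 0 < β) (hβ1 : β < 1)
    (hα : 0 < α) (hlam : 0 < lam) (hy : 0 < y) :
    IntegrableOn (fun t : ℝ =>
        ∫ s in Ioi (Real.exp t * y), α * Real.exp (-lam * s) * s ^ (-1 - β)) (Ioi 0) ∧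
    IntegrableOn (fun x : ℝ => α * lam ^ β * upperGamma (-β) (lam * x) * x⁻¹) (Ioi y) ∧
    ∫ t in Ioi (0 : ℝ), (∫ s in Ioi (Real.exp t * y), α * Real.exp (-lam * s) * s ^ (-1 - β))
      = ∫ x in Ioi y, α * lam ^ β * upperGamma (-β) (lam * x) * x⁻¹ := by
  set G : ℝ → ℝ := fun t => α * lam ^ β * upperGamma (-β) (lam * (Real.exp t * y)) with hG
  set g : ℝ → ℝ := fun x => α * lam ^ β * upperGamma (-β) (lam * x) * x⁻¹ with hg
  have hety : ∀ t : ℝ, 0 < Real.exp t * y := fun t => mul_pos (Real.exp_pos t) hy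
  -- the inner integral equals G
  have hinner : (fun t : ℝ =>
      ∫ s in Ioi (Real.exp t * y), α * Real.exp (-lam * s) * s ^ (-1 - β)) = G := by
    funext t
    exact tail_eq_upperGamma hβ0 hlam (hety t)
  -- G is integrable on Ioi 0
  have hGint : IntegrableOn G (Ioi (0:ℝ)) := by
    have hmeas : AEStronglyMeasurable G (volume.restrict (Ioi (0:ℝ))) := by
      have hanti : AntitoneOn G (Ioi (0:ℝ)) := by
        intro a ha b hb hab
        have h1 : lam * (Real.exp a * y) ∈ Ioi (0:ℝ) := mul_pos hlam (hety a)
        have h2 : lam * (Real.exp b * y) ∈ Ioi (0:ℝ) := mul_pos hlam (hety b)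
        have h3 : lam * (Real.exp a * y) ≤ lam * (Real.exp b * y) :=
          mul_le_mul_of_nonneg_left
            (mul_le_mul_of_nonneg_right (Real.exp_le_exp.mpr hab) hy.le) hlam.le
        exact mul_le_mul_of_nonneg_left
          (upperGamma_antitoneOn (by linarith : (-β:ℝ) ≤ 1) h1 h2 h3)
          (mul_nonneg hα.le (Real.rpow_nonneg hlam.le β))
      exact (aemeasurable_restrict_of_antitoneOn measurableSet_Ioi hanti).aestronglyMeasurable
    have hbound : IntegrableOn
        (fun t : ℝ => (α * lam ^ β * (lam * y) ^ (-β - 1)) * Real.exp (-(β+1) * t))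
        (Ioi (0:ℝ)) := (exp_neg_integrableOn_Ioi 0 (by linarith)).const_mul _
    refine Integrable.mono' hbound hmeas ?_
    refine (ae_restrict_iff' measurableSet_Ioi).mpr (ae_of_all _ fun t _ => ?_)
    have hc : 0 < lam * (Real.exp t * y) := mul_pos hlam (hety t)
    have hG0 : 0 ≤ G t :=
      mul_nonneg (mul_nonneg hα.le (Real.rpow_nonneg hlam.le β)) (upperGamma_nonneg _ hc)
    rw [Real.norm_eq_abs, abs_of_nonneg hG0]
    have h1 : upperGamma (-β) (lam * (Real.exp t * y))
        ≤ (lam * (Real.exp t * y)) ^ (-β - 1) * Real.exp (-(lam * (Real.exp t * y))) :=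
      upperGamma_le (by linarith) hc
    have h2 : Real.exp (-(lam * (Real.exp t * y))) ≤ 1 := Real.exp_le_one_iff.mpr (by linarith)
    have h3 : (lam * (Real.exp t * y)) ^ (-β - 1 : ℝ)
        = (lam * y) ^ (-β - 1 : ℝ) * Real.exp (-(β+1) * t) := by
      have : lam * (Real.exp t * y) = (lam * y) * Real.exp t := by ring
      rw [this, Real.mul_rpow (mul_pos hlam hy).le (Real.exp_pos t).le,
        Real.rpow_def_of_pos (Real.exp_pos t), Real.log_exp]
      ring_nf
    have hp : (0:ℝ) ≤ (lam * (Real.exp t * y)) ^ (-β - 1 : ℝ) := Real.rpow_nonneg hc.le _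
    have h4 : upperGamma (-β) (lam * (Real.exp t * y))
        ≤ (lam * y) ^ (-β - 1 : ℝ) * Real.exp (-(β+1) * t) := by
      calc upperGamma (-β) (lam * (Real.exp t * y))
          ≤ (lam * (Real.exp t * y)) ^ (-β - 1) * Real.exp (-(lam * (Real.exp t * y))) := h1
        _ ≤ (lam * (Real.exp t * y)) ^ (-β - 1) * 1 := by
            exact mul_le_mul_of_nonneg_left h2 hp
        _ = (lam * y) ^ (-β - 1 : ℝ) * Real.exp (-(β+1) * t) := by rw [mul_one, h3]
    calc G t = α * lam ^ β * upperGamma (-β) (lam * (Real.exp t * y)) := rfl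
      _ ≤ α * lam ^ β * ((lam * y) ^ (-β - 1 : ℝ) * Real.exp (-(β+1) * t)) :=
          mul_le_mul_of_nonneg_left h4 (mul_nonneg hα.le (Real.rpow_nonneg hlam.le β))
      _ = (α * lam ^ β * (lam * y) ^ (-β - 1)) * Real.exp (-(β+1) * t) := by ring
  -- change of variables setup
  have hderiv : ∀ t ∈ Ioi (0:ℝ),
      HasDerivWithinAt (fun t : ℝ => Real.exp t * y) (Real.exp t * y) (Ioi 0) t :=
    fun t _ => ((Real.hasDerivAt_exp t).mul_const y).hasDerivWithinAt
  have hinj : InjOn (fun t : ℝ => Real.exp t * y) (Ioi 0) := by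
    intro a _ b _ h
    have : Real.exp a = Real.exp b := mul_right_cancel₀ hy.ne' h
    exact Real.exp_injective this
  have himage : (fun t : ℝ => Real.exp t * y) '' (Ioi 0) = Ioi y := by
    ext x
    constructor
    · rintro ⟨t, ht, rfl⟩
      have h1 : (1:ℝ) < Real.exp t := by
        have := Real.exp_lt_exp.mpr ht
        rwa [Real.exp_zero] at this
      simpa using (lt_of_le_of_lt (by linarith : y ≤ 1 * y)
        (mul_lt_mul_of_pos_right h1 hy))
    · intro hx
      refine ⟨Real.log (x / y), ?_, ?_⟩
      · exact Real.log_pos ((one_lt_div hy).mpr hx)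
      · have hxy : 0 < x / y := div_pos (lt_trans hy hx) hy
        simp only
        rw [Real.exp_log hxy, div_mul_cancel₀ _ hy.ne']
  -- pointwise identity for the substituted integrand
  have hsub : (fun t : ℝ => |Real.exp t * y| • g (Real.exp t * y)) = G := by
    funext t
    have hx := hety t
    simp only [hg, smul_eq_mul, abs_of_pos hx]
    field_simp
    simp only [hG]; ring_nf
  refine ⟨?_, ?_, ?_⟩
  · rw [hinner]; exact hGint
  · rw [← himage]
    rw [integrableOn_image_iff_integrableOn_abs_deriv_smul measurableSet_Ioi hderiv hinj g]
    rw [hsub]; exact hGint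
  · rw [hinner, ← himage,
      integral_image_eq_integral_abs_deriv_smul measurableSet_Ioi hderiv hinj g, hsub]
end

section
/- Let 0 < β₊ < 1, 0 < β₋ < 1, α₊, α₋ > 0, λ₊, λ₋ > 0, μ ∈ ℝ, and define Ψ : ℝ → ℂ by Ψ(u) = μui + α₊·Γ(−β₊)·((λ₊ − iu)^{β₊} − λ₊^{β₊}) + α₋·Γ(−β₋)·((λ₋ + iu)^{β₋} − λ₋^{β₋}). Fix λ > 0, X₀ ∈ ℝ and ξ ∈ ℝ. Then u ↦ Ψ(u)/u is integrable on the interval between 0 and ξ, and lim_{t→∞} ( e^{−λt}·X₀·ξ·i + ∫_{ξ·e^{−λt}}^{ξ} Ψ(u)/u du ) = ∫₀^{ξ} Ψ(u)/u du. -/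
open MeasureTheory Set Filter Topology intervalIntegral

/-- Auxiliary: differentiability and continuity of `u ↦ (l + c u)^b` for `l > 0` and
purely imaginary `c`. -/
lemma gts_aux_cpow (c : ℂ) (hc : c.re = 0) (l b : ℝ) (hl : 0 < l) :
    DifferentiableAt ℝ (fun u : ℝ => ((l : ℂ) + c * u) ^ (b : ℂ)) 0 ∧
      Continuous (fun u : ℝ => ((l : ℂ) + c * u) ^ (b : ℂ)) := by
  have hsp : ∀ u : ℝ, ((l : ℂ) + c * (u : ℂ)) ∈ Complex.slitPlane := by
    intro u
    rw [Complex.mem_slitPlane_iff]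
    left
    simp [Complex.add_re, Complex.mul_re, hc, hl]
  constructor
  · -- differentiability via composition with ofReal
    have hg : DifferentiableAt ℂ (fun z : ℂ => ((l : ℂ) + c * z) ^ (b : ℂ)) (0 : ℂ) := by
      apply DifferentiableAt.cpow
      · exact (differentiableAt_const _).add ((differentiableAt_fun_id).const_mul c)
      · exact differentiableAt_const _
      · simpa using hsp 0
    have hg2 : DifferentiableAt ℂ (fun z : ℂ => ((l : ℂ) + c * z) ^ (b : ℂ)) (((0:ℝ) : ℂ)) := by
      simpa using hg
    have hof : DifferentiableAt ℝ (fun u : ℝ => (u : ℂ)) 0 :=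
      Complex.ofRealCLM.differentiableAt
    exact DifferentiableAt.comp (𝕜 := ℝ) (0 : ℝ) (hg2.restrictScalars ℝ) hof
  · rw [continuous_iff_continuousAt]
    intro x
    exact ContinuousAt.cpow (by fun_prop) continuousAt_const (hsp x)

/-- Convergence of the log characteristic function of the Ornstein–Uhlenbeck type process
driven by a GTS Lévy process to the stationary log characteristic function
`φ(ξ) = ∫₀^ξ Ψ(u)/u du`, where `Ψ` is the GTS characteristic exponent. -/
theorem OU_GTS_stationary_limit (βp βm αp αm lamp lamm μ : ℝ)
    (hβp0 : 0 < βp) (hβp1 : βp < 1) (hβm0 : 0 < βm) (hβm1 : βm < 1)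
    (hαp : 0 < αp) (hαm : 0 < αm) (hlamp : 0 < lamp) (hlamm : 0 < lamm)
    (Ψ : ℝ → ℂ)
    (hΨ : ∀ u : ℝ, Ψ u
      = (μ * u : ℂ) * Complex.I
        + (αp : ℂ) * (Real.Gamma (-βp) : ℂ) *
            (((lamp : ℂ) - Complex.I * u) ^ (βp : ℂ) - (lamp : ℂ) ^ (βp : ℂ))
        + (αm : ℂ) * (Real.Gamma (-βm) : ℂ) *
            (((lamm : ℂ) + Complex.I * u) ^ (βm : ℂ) - (lamm : ℂ) ^ (βm : ℂ)))
    (lam X₀ ξ : ℝ) (hlam : 0 < lam) :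
    IntervalIntegrable (fun u : ℝ => Ψ u / (u : ℂ)) volume 0 ξ ∧
    Tendsto (fun t : ℝ =>
        (Real.exp (-lam * t) * X₀ * ξ : ℂ) * Complex.I
          + ∫ u in (ξ * Real.exp (-lam * t))..ξ, Ψ u / (u : ℂ))
      atTop (𝓝 (∫ u in (0 : ℝ)..ξ, Ψ u / (u : ℂ))) := by
  classical
  have hauxp := gts_aux_cpow (-Complex.I) (by simp) lamp βp hlamp
  have hauxm := gts_aux_cpow Complex.I (by simp) lamm βm hlamm
  have heqp : (fun u : ℝ => ((lamp : ℂ) + (-Complex.I) * u) ^ (βp : ℂ))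
      = fun u : ℝ => ((lamp : ℂ) - Complex.I * u) ^ (βp : ℂ) := by
    funext u; ring_nf
  have hΨ0 : Ψ 0 = 0 := by rw [hΨ]; simp
  -- continuity of Ψ
  have hΨcont : Continuous Ψ := by
    have : Continuous (fun u : ℝ =>
        (μ * u : ℂ) * Complex.I
        + (αp : ℂ) * (Real.Gamma (-βp) : ℂ) *
            (((lamp : ℂ) - Complex.I * u) ^ (βp : ℂ) - (lamp : ℂ) ^ (βp : ℂ))
        + (αm : ℂ) * (Real.Gamma (-βm) : ℂ) *
            (((lamm : ℂ) + Complex.I * u) ^ (βm : ℂ) - (lamm : ℂ) ^ (βm : ℂ))) := by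
      apply Continuous.add
      apply Continuous.add
      · exact ((continuous_const.mul Complex.continuous_ofReal).mul continuous_const)
      · exact continuous_const.mul ((heqp ▸ hauxp.2).sub continuous_const)
      · exact continuous_const.mul ((hauxm.2).sub continuous_const)
    exact this.congr fun u => (hΨ u).symm
  -- differentiability of Ψ at 0
  have hΨdiff : DifferentiableAt ℝ Ψ 0 := by
    have hexp : DifferentiableAt ℝ (fun u : ℝ =>
        (μ * u : ℂ) * Complex.I
        + (αp : ℂ) * (Real.Gamma (-βp) : ℂ) *
            (((lamp : ℂ) - Complex.I * u) ^ (βp : ℂ) - (lamp : ℂ) ^ (βp : ℂ))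
        + (αm : ℂ) * (Real.Gamma (-βm) : ℂ) *
            (((lamm : ℂ) + Complex.I * u) ^ (βm : ℂ) - (lamm : ℂ) ^ (βm : ℂ))) 0 := by
      apply DifferentiableAt.add
      apply DifferentiableAt.add
      · exact (Complex.ofRealCLM.differentiableAt.const_mul _).mul_const _
      · exact ((heqp ▸ hauxp.1).sub_const _).const_mul _
      · exact ((hauxm.1).sub_const _).const_mul _
    exact hexp.congr_of_eventuallyEq (Filter.Eventually.of_forall hΨ)
  obtain ⟨c, hc⟩ : ∃ c, HasDerivAt Ψ c 0 := ⟨_, hΨdiff.hasDerivAt⟩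
  set f : ℝ → ℂ := fun u => Ψ u / (u : ℂ) with hf
  set F : ℝ → ℂ := Function.update f 0 c with hFdef
  -- F is continuous
  have hslope : ∀ u : ℝ, u ≠ 0 → slope Ψ 0 u = f u := by
    intro u hu
    simp [slope, hΨ0, hf, div_eq_inv_mul, Complex.real_smul]
  have hFcont : Continuous F := by
    rw [continuous_iff_continuousAt]
    intro x
    by_cases hx : x = 0
    · subst hx
      rw [hFdef, continuousAt_update_same]
      have := hasDerivAt_iff_tendsto_slope.mp hc
      refine this.congr' ?_
      filter_upwards [self_mem_nhdsWithin] with u hu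
      exact hslope u hu
    · have hfc : ContinuousAt f x := by
        exact (hΨcont.continuousAt).div
          (Complex.continuous_ofReal.continuousAt) (by simpa using hx)
      refine hfc.congr ?_
      filter_upwards [isOpen_ne.mem_nhds hx] with u hu
      rw [hFdef, Function.update_of_ne hu]
  have hFint : ∀ a b : ℝ, IntervalIntegrable F volume a b := fun a b =>
    hFcont.intervalIntegrable a b
  -- f equals F almost everywhere
  have haeq : f =ᵐ[(volume : Measure ℝ)] F := by
    rw [Filter.EventuallyEq, ae_iff]
    refine measure_mono_null ?_ (measure_singleton (0 : ℝ))
    intro x hx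
    simp only [mem_setOf_eq] at hx
    simp only [mem_singleton_iff]
    by_contra h
    exact hx (by rw [hFdef, Function.update_of_ne h])
  have hfint : ∀ a b : ℝ, IntervalIntegrable f volume a b := fun a b =>
    (hFint a b).congr_ae ((haeq.symm).filter_mono (ae_mono Measure.restrict_le_self))
  have hIeq : ∀ a b : ℝ, (∫ u in a..b, f u) = ∫ u in a..b, F u := fun a b =>
    intervalIntegral.integral_congr_ae (haeq.mono fun x hx _ => hx)
  refine ⟨hfint 0 ξ, ?_⟩
  set G : ℝ → ℂ := fun x => ∫ u in (0 : ℝ)..x, F u with hG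
  have hGcont : Continuous G := intervalIntegral.continuous_primitive hFint 0
  have hG0 : G 0 = 0 := intervalIntegral.integral_same
  have hE : Tendsto (fun t : ℝ => Real.exp (-lam * t)) atTop (𝓝 0) := by
    apply Real.tendsto_exp_atBot.comp
    exact Tendsto.const_mul_atTop_of_neg (neg_neg_iff_pos.mpr hlam) tendsto_id
  have hrw : ∀ t : ℝ, (∫ u in (ξ * Real.exp (-lam * t))..ξ, f u)
      = (∫ u in (0 : ℝ)..ξ, F u) - G (ξ * Real.exp (-lam * t)) := by
    intro t
    rw [hIeq, hG]
    exact (intervalIntegral.integral_interval_sub_left (hFint 0 ξ)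
      (hFint 0 (ξ * Real.exp (-lam * t)))).symm
  have term1 : Tendsto (fun t : ℝ =>
      (Real.exp (-lam * t) * X₀ * ξ : ℂ) * Complex.I) atTop (𝓝 0) := by
    have h1 : Tendsto (fun t : ℝ => ((Real.exp (-lam * t) : ℝ) : ℂ)) atTop (𝓝 0) := by
      simpa [-Complex.ofReal_exp, Function.comp_def] using (Complex.continuous_ofReal.tendsto 0).comp hE
    have h2 := ((h1.mul_const (X₀ : ℂ)).mul_const (ξ : ℂ)).mul_const Complex.I
    simpa [-Complex.ofReal_exp] using h2
  have term2 : Tendsto (fun t : ℝ => G (ξ * Real.exp (-lam * t))) atTop (𝓝 0) := by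
    rw [← hG0]
    apply (hGcont.tendsto 0).comp
    simpa using hE.const_mul ξ
  have hmain : Tendsto (fun t : ℝ =>
      (Real.exp (-lam * t) * X₀ * ξ : ℂ) * Complex.I
        + ((∫ u in (0 : ℝ)..ξ, F u) - G (ξ * Real.exp (-lam * t)))) atTop
      (𝓝 ((0 : ℂ) + ((∫ u in (0 : ℝ)..ξ, F u) - 0))) :=
    term1.add (tendsto_const_nhds.sub term2)
  simp only [zero_add, sub_zero] at hmain
  rw [show (∫ u in (0 : ℝ)..ξ, Ψ u / (u : ℂ)) = ∫ u in (0 : ℝ)..ξ, F u from hIeq 0 ξ]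
  exact Tendsto.congr (fun t => by rw [hrw t]) hmain
end

section
/- Let 0 < β₊ < 1, 0 < β₋ < 1, α₊, α₋ > 0, λ₊, λ₋ > 0, μ ∈ ℝ, and define Ψ : ℝ → ℂ by Ψ(ξ) = μξi + α₊·Γ(−β₊)·((λ₊ − iξ)^{β₊} − λ₊^{β₊}) + α₋·Γ(−β₋)·((λ₋ + iξ)^{β₋} − λ₋^{β₋}). Then for every real ξ with |ξ| < min(λ₊, λ₋), Ψ(ξ) = Σ_{j=1}^∞ κ_j·(iξ)^j/j!, where κ₁ = μ + α₊·Γ(1−β₊)/λ₊^{1−β₊} − α₋·Γ(1−β₋)/λ₋^{1−β₋} and, for k ≥ 2, κ_k = α₊·Γ(k−β₊)/λ₊^{k−β₊} + (−1)^k·α₋·Γ(k−β₋)/λ₋^{k−β₋}, the series converging absolutely. -/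
open MeasureTheory Set

section GTSAux

open Finset Complex

/-- Iterated derivative of `w ↦ (λ + w)^β` on the slit-plane region. -/
lemma GTS_iteratedDeriv (lam β : ℝ) (n : ℕ) :
    ∀ z : ℂ, (lam : ℂ) + z ∈ Complex.slitPlane →
      iteratedDeriv n (fun w : ℂ => ((lam : ℂ) + w) ^ (β : ℂ)) z
        = (∏ j ∈ Finset.range n, ((β : ℂ) - j)) * ((lam : ℂ) + z) ^ ((β : ℂ) - n) := by
  induction n with
  | zero => intro z hz; simp
  | succ n ih =>
    intro z hz
    have hU : IsOpen {w : ℂ | (lam : ℂ) + w ∈ Complex.slitPlane} :=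
      Complex.isOpen_slitPlane.preimage (by fun_prop)
    have hev : iteratedDeriv n (fun w : ℂ => ((lam : ℂ) + w) ^ (β : ℂ))
        =ᶠ[nhds z] fun w =>
          (∏ j ∈ Finset.range n, ((β : ℂ) - j)) * ((lam : ℂ) + w) ^ ((β : ℂ) - n) := by
      filter_upwards [hU.mem_nhds hz] with w hw using ih w hw
    have hd : HasDerivAt (fun w : ℂ =>
          (∏ j ∈ Finset.range n, ((β : ℂ) - j)) * ((lam : ℂ) + w) ^ ((β : ℂ) - n))
        ((∏ j ∈ Finset.range n, ((β : ℂ) - j)) *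
          (((β : ℂ) - n) * ((lam : ℂ) + z) ^ ((β : ℂ) - n - 1) * 1)) z :=
      (((hasDerivAt_id z).const_add ((lam : ℂ))).cpow_const hz).const_mul _
    rw [iteratedDeriv_succ, hev.deriv_eq, hd.deriv, Finset.prod_range_succ]
    push_cast
    rw [show (β : ℂ) - ((n : ℂ) + 1) = (β : ℂ) - n - 1 by ring]
    ring

/-- Binomial-type expansion of `(λ + y)^β` for `‖y‖ < λ`. -/
lemma GTS_hasSum_cpow (lam β : ℝ) (hlam : 0 < lam) (y : ℂ) (hy : ‖y‖ < lam) :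
    HasSum (fun n : ℕ => (∏ j ∈ Finset.range n, ((β : ℂ) - j)) / (n.factorial : ℂ)
        * (lam : ℂ) ^ ((β : ℂ) - n) * y ^ n) (((lam : ℂ) + y) ^ (β : ℂ)) := by
  set f : ℂ → ℂ := fun w => ((lam : ℂ) + w) ^ (β : ℂ) with hf
  set R : ℝ := (‖y‖ + lam) / 2 with hRdef
  have hR0 : 0 < R := by positivity
  have hyR : ‖y‖ < R := by rw [hRdef]; linarith
  have hRlam : R < lam := by rw [hRdef]; linarith
  have hmem : ∀ z : ℂ, z ∈ Metric.closedBall (0 : ℂ) R → (lam : ℂ) + z ∈ Complex.slitPlane := by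
    intro z hz
    rw [Metric.mem_closedBall, dist_zero_right] at hz
    have h1 : |z.re| ≤ ‖z‖ := Complex.abs_re_le_norm z
    refine Or.inl ?_
    simp only [Complex.add_re, Complex.ofReal_re]
    have : -R ≤ z.re := by
      have := abs_le.mp h1
      linarith [this.1]
    linarith
  have hdiff : DifferentiableOn ℂ f (Metric.closedBall (0 : ℂ) R.toNNReal) := by
    intro z hz
    have hz' : z ∈ Metric.closedBall (0 : ℂ) R := by
      rwa [Real.coe_toNNReal R hR0.le] at hz
    exact ((((hasDerivAt_id z).const_add ((lam : ℂ))).cpow_const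
      (hmem z hz')).differentiableAt).differentiableWithinAt
  have hps := hdiff.hasFPowerSeriesOnBall (Real.toNNReal_pos.mpr hR0)
  have hyball : y ∈ Metric.eball (0 : ℂ) (R.toNNReal : ENNReal) := by
    rw [Metric.emetric_ball_nnreal, Metric.mem_ball, dist_zero_right,
      Real.coe_toNNReal R hR0.le]
    exact hyR
  have hs := hps.hasSum_iteratedFDeriv hyball
  rw [zero_add] at hs
  have key : ∀ n : ℕ, (iteratedFDeriv ℂ n f 0 : (Fin n → ℂ) → ℂ) (fun _ => y)
      = y ^ n * iteratedDeriv n f 0 := by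
    intro n
    have h := (iteratedFDeriv ℂ n f 0).map_smul_univ (fun _ : Fin n => y) (fun _ => 1)
    simp only [smul_eq_mul, mul_one, Finset.prod_const, Finset.card_univ, Fintype.card_fin] at h
    rw [h]; rfl
  have hslit : (lam : ℂ) + 0 ∈ Complex.slitPlane := by
    refine Or.inl ?_
    simp [hlam]
  refine hs.congr_fun fun n => ?_
  rw [key n, GTS_iteratedDeriv lam β n 0 hslit, add_zero, smul_eq_mul]
  ring

lemma GTS_Gamma_ne (β : ℝ) (hβ0 : 0 < β) (hβ1 : β < 1) (n : ℕ) : (n : ℝ) - β ≠ 0 := by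
  rcases Nat.eq_zero_or_pos n with h | h
  · simp only [h, Nat.cast_zero, zero_sub, ne_eq, neg_eq_zero]
    linarith
  · have h1 : (1 : ℝ) ≤ n := by exact_mod_cast h
    intro hc
    linarith [sub_eq_zero.mp hc]

lemma GTS_Gamma_prod (β : ℝ) (hβ0 : 0 < β) (hβ1 : β < 1) (n : ℕ) :
    Real.Gamma ((n : ℝ) - β)
      = (-1 : ℝ) ^ n * (∏ j ∈ Finset.range n, (β - j)) * Real.Gamma (-β) := by
  induction n with
  | zero => simp
  | succ n ih =>
    have hrec := Real.Gamma_add_one (GTS_Gamma_ne β hβ0 hβ1 n)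
    have hcast : ((n + 1 : ℕ) : ℝ) - β = ((n : ℝ) - β) + 1 := by push_cast; ring
    rw [hcast, hrec, ih, Finset.prod_range_succ, pow_succ]
    ring

lemma GTS_Gamma_prod' (β : ℝ) (hβ0 : 0 < β) (hβ1 : β < 1) (n : ℕ) :
    (∏ j ∈ Finset.range n, (β - (j : ℝ))) * Real.Gamma (-β)
      = (-1 : ℝ) ^ n * Real.Gamma ((n : ℝ) - β) := by
  induction n with
  | zero => simp
  | succ n ih =>
    have hrec := Real.Gamma_add_one (GTS_Gamma_ne β hβ0 hβ1 n)
    have hcast : ((n + 1 : ℕ) : ℝ) - β = ((n : ℝ) - β) + 1 := by push_cast; ring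
    rw [Finset.prod_range_succ, hcast, hrec]
    linear_combination (β - (n : ℝ)) * ih

lemma GTS_prod_le (β : ℝ) (hβ0 : 0 < β) (hβ1 : β < 1) (n : ℕ) :
    |∏ j ∈ Finset.range n, (β - j)| ≤ (n.factorial : ℝ) := by
  induction n with
  | zero => simp
  | succ n ih =>
    rw [Finset.prod_range_succ, abs_mul]
    have h1 : |β - (n : ℝ)| ≤ ((n : ℝ) + 1) := by
      rw [abs_le]
      constructor <;> nlinarith [Nat.cast_nonneg (α := ℝ) n]
    calc |∏ j ∈ Finset.range n, (β - j)| * |β - (n : ℝ)|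
        ≤ (n.factorial : ℝ) * ((n : ℝ) + 1) := by
          apply mul_le_mul ih h1 (abs_nonneg _) (Nat.cast_nonneg _)
      _ = ((n + 1).factorial : ℝ) := by
          rw [Nat.factorial_succ]; push_cast; ring

lemma GTS_term (β lam : ℝ) (hβ0 : 0 < β) (hβ1 : β < 1) (hlam : 0 < lam) (n : ℕ) :
    (Real.Gamma (-β) : ℂ) * (∏ j ∈ Finset.range n, ((β : ℂ) - j)) * (lam : ℂ) ^ ((β : ℂ) - n)
        * (-1 : ℂ) ^ n
      = ((Real.Gamma ((n : ℝ) - β) / lam ^ ((n : ℝ) - β) : ℝ) : ℂ) := by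
  have h1 : (lam : ℂ) ^ ((β : ℂ) - n) = ((lam ^ ((n : ℝ) - β) : ℝ) : ℂ)⁻¹ := by
    rw [Complex.ofReal_cpow hlam.le, ← Complex.cpow_neg]
    norm_num
  have h2 : (∏ j ∈ Finset.range n, ((β : ℂ) - j))
      = ((∏ j ∈ Finset.range n, (β - (j : ℝ)) : ℝ) : ℂ) := by
    push_cast
    rfl
  rw [h1, h2, Complex.ofReal_div, GTS_Gamma_prod β hβ0 hβ1 n]
  push_cast
  ring

lemma GTS_term' (β lam : ℝ) (hβ0 : 0 < β) (hβ1 : β < 1) (hlam : 0 < lam) (n : ℕ) :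
    (Real.Gamma (-β) : ℂ) * (∏ j ∈ Finset.range n, ((β : ℂ) - j)) * (lam : ℂ) ^ ((β : ℂ) - n)
      = (-1 : ℂ) ^ n * ((Real.Gamma ((n : ℝ) - β) / lam ^ ((n : ℝ) - β) : ℝ) : ℂ) := by
  have h1 : (lam : ℂ) ^ ((β : ℂ) - n) = ((lam ^ ((n : ℝ) - β) : ℝ) : ℂ)⁻¹ := by
    rw [Complex.ofReal_cpow hlam.le, ← Complex.cpow_neg]
    norm_num
  have h2 : (∏ j ∈ Finset.range n, ((β : ℂ) - j))
      = ((∏ j ∈ Finset.range n, (β - (j : ℝ)) : ℝ) : ℂ) := by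
    push_cast
    rfl
  have h3c : ((∏ j ∈ Finset.range n, (β - (j : ℝ)) : ℝ) : ℂ) * (Real.Gamma (-β) : ℂ)
      = (-1 : ℂ) ^ n * (Real.Gamma ((n : ℝ) - β) : ℂ) := by
    exact_mod_cast congrArg (Complex.ofReal) (GTS_Gamma_prod' β hβ0 hβ1 n)
  rw [h1, h2, Complex.ofReal_div]
  linear_combination ((lam ^ ((n : ℝ) - β) : ℝ) : ℂ)⁻¹ * h3c

lemma GTS_summable_aux (β lam : ℝ) (hβ0 : 0 < β) (hβ1 : β < 1) (hlam : 0 < lam)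
    (y : ℂ) (hy : ‖y‖ < lam) (C : ℂ) :
    Summable (fun n : ℕ => ‖C * ((∏ j ∈ Finset.range n, ((β : ℂ) - j)) / (n.factorial : ℂ)
      * (lam : ℂ) ^ ((β : ℂ) - n) * y ^ n)‖) := by
  have hr : ‖y‖ / lam < 1 := (div_lt_one hlam).2 hy
  have hr0 : 0 ≤ ‖y‖ / lam := by positivity
  refine Summable.of_nonneg_of_le (fun n => norm_nonneg _) (fun n => ?_)
    ((summable_geometric_of_lt_one hr0 hr).mul_left (‖C‖ * lam ^ β))
  have hcpow : ‖(lam : ℂ) ^ ((β : ℂ) - (n : ℕ))‖ = lam ^ (β - (n : ℝ)) := by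
    rw [Complex.norm_cpow_eq_rpow_re_of_pos hlam]
    norm_num
  have hprod : ‖(∏ j ∈ Finset.range n, ((β : ℂ) - j))‖ ≤ (n.factorial : ℝ) := by
    have h2 : (∏ j ∈ Finset.range n, ((β : ℂ) - j))
        = ((∏ j ∈ Finset.range n, (β - (j : ℝ)) : ℝ) : ℂ) := by push_cast; rfl
    rw [h2, Complex.norm_real, Real.norm_eq_abs]
    exact GTS_prod_le β hβ0 hβ1 n
  rw [norm_mul, norm_mul, norm_mul, norm_div, norm_pow, hcpow]
  have hfact : (0 : ℝ) < (n.factorial : ℝ) := by positivity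
  have hlamn : lam ^ (β - (n : ℝ)) = lam ^ β / lam ^ n := by
    rw [Real.rpow_sub hlam, Real.rpow_natCast]
  have hq : ‖(∏ j ∈ Finset.range n, ((β : ℂ) - j))‖ / ‖((n.factorial : ℕ) : ℂ)‖ ≤ 1 := by
    rw [Complex.norm_natCast, div_le_one hfact]
    exact hprod
  calc ‖C‖ * (‖(∏ j ∈ Finset.range n, ((β : ℂ) - j))‖ / ‖((n.factorial : ℕ) : ℂ)‖
        * lam ^ (β - (n : ℝ)) * ‖y‖ ^ n)
      = (‖(∏ j ∈ Finset.range n, ((β : ℂ) - j))‖ / ‖((n.factorial : ℕ) : ℂ)‖)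
        * (‖C‖ * (lam ^ β / lam ^ n) * ‖y‖ ^ n) := by rw [hlamn]; ring
    _ ≤ 1 * (‖C‖ * (lam ^ β / lam ^ n) * ‖y‖ ^ n) := by
        apply mul_le_mul_of_nonneg_right hq
        have : (0:ℝ) < lam ^ n := by positivity
        positivity
    _ = ‖C‖ * lam ^ β * (‖y‖ / lam) ^ n := by
        rw [one_mul, div_pow]
        ring

end GTSAux

/-- Cumulant expansion of the GTS characteristic exponent: for `|ξ| < min(λ₊, λ₋)`,
`Ψ(ξ) = Σ_{j≥1} κ_j (iξ)^j / j!`, converging absolutely, where the `κ_k` are the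
cumulants of the GTS distribution. -/
theorem GTS_cumulant_series (βp βm αp αm lamp lamm μ : ℝ)
    (hβp0 : 0 < βp) (hβp1 : βp < 1) (hβm0 : 0 < βm) (hβm1 : βm < 1)
    (hαp : 0 < αp) (hαm : 0 < αm) (hlamp : 0 < lamp) (hlamm : 0 < lamm)
    (Ψ : ℝ → ℂ)
    (hΨ : ∀ ξ : ℝ, Ψ ξ
      = (μ * ξ : ℂ) * Complex.I
        + (αp : ℂ) * (Real.Gamma (-βp) : ℂ) *
            (((lamp : ℂ) - Complex.I * ξ) ^ (βp : ℂ) - (lamp : ℂ) ^ (βp : ℂ))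
        + (αm : ℂ) * (Real.Gamma (-βm) : ℂ) *
            (((lamm : ℂ) + Complex.I * ξ) ^ (βm : ℂ) - (lamm : ℂ) ^ (βm : ℂ)))
    (κ : ℕ → ℝ)
    (hκ1 : κ 1 = μ + αp * Real.Gamma (1 - βp) / lamp ^ (1 - βp)
        - αm * Real.Gamma (1 - βm) / lamm ^ (1 - βm))
    (hκk : ∀ k : ℕ, 2 ≤ k →
      κ k = αp * Real.Gamma ((k : ℝ) - βp) / lamp ^ ((k : ℝ) - βp)
        + (-1 : ℝ) ^ k * αm * Real.Gamma ((k : ℝ) - βm) / lamm ^ ((k : ℝ) - βm)) :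
    ∀ ξ : ℝ, |ξ| < min lamp lamm →
      Summable (fun k : ℕ =>
        ‖(κ (k + 1) : ℂ) * (Complex.I * ξ) ^ (k + 1) / ((k + 1).factorial : ℂ)‖) ∧
      Ψ ξ = ∑' k : ℕ,
          (κ (k + 1) : ℂ) * (Complex.I * ξ) ^ (k + 1) / ((k + 1).factorial : ℂ) := by
  intro ξ hξ
  have hξp : |ξ| < lamp := lt_of_lt_of_le hξ (min_le_left _ _)
  have hξm : |ξ| < lamm := lt_of_lt_of_le hξ (min_le_right _ _)
  have hnI : ‖Complex.I * (ξ : ℂ)‖ = |ξ| := by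
    simp [Complex.norm_real]
  have hnIp : ‖-(Complex.I * (ξ : ℂ))‖ = |ξ| := by rw [norm_neg]; exact hnI
  set Ap : ℕ → ℂ := fun n => ((αp : ℂ) * (Real.Gamma (-βp) : ℂ)) *
      ((∏ j ∈ Finset.range n, ((βp : ℂ) - j)) / (n.factorial : ℂ)
        * (lamp : ℂ) ^ ((βp : ℂ) - n) * (-(Complex.I * ξ)) ^ n) with hApdef
  set Am : ℕ → ℂ := fun n => ((αm : ℂ) * (Real.Gamma (-βm) : ℂ)) *
      ((∏ j ∈ Finset.range n, ((βm : ℂ) - j)) / (n.factorial : ℂ)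
        * (lamm : ℂ) ^ ((βm : ℂ) - n) * (Complex.I * ξ) ^ n) with hAmdef
  set B : ℕ → ℂ := fun n => if n = 1 then (μ * ξ : ℂ) * Complex.I else 0 with hBdef
  set K : ℂ := (αp : ℂ) * (Real.Gamma (-βp) : ℂ) * (lamp : ℂ) ^ (βp : ℂ)
      + (αm : ℂ) * (Real.Gamma (-βm) : ℂ) * (lamm : ℂ) ^ (βm : ℂ) with hKdef
  set C0 : ℕ → ℂ := fun n => if n = 0 then K else 0 with hC0def
  set G : ℕ → ℂ := fun n => Ap n + Am n + B n - C0 n with hGdef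
  have hp := GTS_hasSum_cpow lamp βp hlamp (-(Complex.I * ξ)) (by rw [hnIp]; exact hξp)
  have hm := GTS_hasSum_cpow lamm βm hlamm (Complex.I * ξ) (by rw [hnI]; exact hξm)
  rw [← sub_eq_add_neg] at hp
  have hG : HasSum G (Ψ ξ) := by
    have h1 : HasSum Ap (((αp : ℂ) * (Real.Gamma (-βp) : ℂ)) *
        ((lamp : ℂ) - Complex.I * ξ) ^ (βp : ℂ)) := hp.mul_left _
    have h2 : HasSum Am (((αm : ℂ) * (Real.Gamma (-βm) : ℂ)) *
        ((lamm : ℂ) + Complex.I * ξ) ^ (βm : ℂ)) := hm.mul_left _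
    have h3 : HasSum B ((μ * ξ : ℂ) * Complex.I) := hasSum_ite_eq 1 _
    have h4 : HasSum C0 K := hasSum_ite_eq 0 _
    have h5 := ((h1.add h2).add h3).sub h4
    refine (congrArg (HasSum G) ?_).mpr h5
    rw [hΨ ξ, hKdef]
    ring
  have hG0 : G 0 = 0 := by
    simp only [hGdef, hApdef, hAmdef, hBdef, hC0def, hKdef]
    norm_num
  have hterm : ∀ k : ℕ, G (k + 1)
      = (κ (k + 1) : ℂ) * (Complex.I * ξ) ^ (k + 1) / ((k + 1).factorial : ℂ) := by
    intro k
    rcases Nat.eq_zero_or_pos k with rfl | hk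
    · have tp := GTS_term βp lamp hβp0 hβp1 hlamp 1
      have tm := GTS_term' βm lamm hβm0 hβm1 hlamm 1
      show G 1 = (κ 1 : ℂ) * (Complex.I * ξ) ^ 1 / ((Nat.factorial 1 : ℕ) : ℂ)
      simp only [hGdef, hApdef, hAmdef, hBdef, hC0def, if_pos rfl,
        if_neg (one_ne_zero : (1 : ℕ) ≠ 0), sub_zero]
      rw [hκ1, neg_pow]
      push_cast at tp tm ⊢
      simp only [Nat.factorial_one, Nat.cast_one]
      linear_combination ((αp : ℂ) * (Complex.I * ξ)) * tp
        + ((αm : ℂ) * (Complex.I * ξ)) * tm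
    · have tp := GTS_term βp lamp hβp0 hβp1 hlamp (k + 1)
      have tm := GTS_term' βm lamm hβm0 hβm1 hlamm (k + 1)
      have hκ' := hκk (k + 1) (by omega)
      simp only [hGdef, hApdef, hAmdef, hBdef, hC0def,
        if_neg (by omega : ¬ (k + 1 = 1)), if_neg (Nat.succ_ne_zero k), sub_zero, add_zero]
      rw [hκ', neg_pow]
      push_cast at tp tm ⊢
      linear_combination ((αp : ℂ) * (Complex.I * ξ) ^ (k + 1)
            * (((k + 1).factorial : ℕ) : ℂ)⁻¹) * tp
        + ((αm : ℂ) * (Complex.I * ξ) ^ (k + 1) * (((k + 1).factorial : ℕ) : ℂ)⁻¹) * tm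
  have hsp := GTS_summable_aux βp lamp hβp0 hβp1 hlamp (-(Complex.I * ξ))
      (by rw [hnIp]; exact hξp) ((αp : ℂ) * (Real.Gamma (-βp) : ℂ))
  have hsm := GTS_summable_aux βm lamm hβm0 hβm1 hlamm (Complex.I * ξ)
      (by rw [hnI]; exact hξm) ((αm : ℂ) * (Real.Gamma (-βm) : ℂ))
  have hsB : Summable (fun n : ℕ => ‖B n‖) := by
    apply (hasSum_ite_eq 1 ‖(μ * ξ : ℂ) * Complex.I‖).summable.congr
    intro n
    simp only [hBdef]
    split <;> simp
  have hsC : Summable (fun n : ℕ => ‖C0 n‖) := by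
    apply (hasSum_ite_eq 0 ‖K‖).summable.congr
    intro n
    simp only [hC0def]
    split <;> simp
  have hsG : Summable (fun n : ℕ => ‖G n‖) := by
    refine Summable.of_nonneg_of_le (fun n => norm_nonneg _) (fun n => ?_)
      (((hsp.add hsm).add hsB).add hsC)
    calc ‖G n‖ ≤ ‖Ap n + Am n + B n‖ + ‖C0 n‖ := norm_sub_le _ _
      _ ≤ (‖Ap n + Am n‖ + ‖B n‖) + ‖C0 n‖ := by gcongr; exact norm_add_le _ _
      _ ≤ ((‖Ap n‖ + ‖Am n‖) + ‖B n‖) + ‖C0 n‖ := by gcongr; exact norm_add_le _ _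
  constructor
  · exact ((summable_nat_add_iff 1).2 hsG).congr fun k => by rw [hterm k]
  · have hshift : HasSum (fun k : ℕ => G (k + 1)) (Ψ ξ - ∑ i ∈ Finset.range 1, G i) :=
      (hasSum_nat_add_iff' 1).2 hG
    rw [Finset.sum_range_one, hG0, sub_zero] at hshift
    have hT : HasSum (fun k : ℕ =>
        (κ (k + 1) : ℂ) * (Complex.I * ξ) ^ (k + 1) / ((k + 1).factorial : ℂ)) (Ψ ξ) :=
      hshift.congr_fun fun k => (hterm k).symm
    exact hT.tsum_eq.symm
end

section
/- Let 0 < β₊ < 1, 0 < β₋ < 1, α₊, α₋ > 0, λ₊, λ₋ > 0, μ ∈ ℝ, and define Ψ : ℝ → ℂ by Ψ(u) = μui + α₊·Γ(−β₊)·((λ₊ − iu)^{β₊} − λ₊^{β₊}) + α₋·Γ(−β₋)·((λ₋ + iu)^{β₋} − λ₋^{β₋}), with cumulants κ₁ = μ + α₊·Γ(1−β₊)/λ₊^{1−β₊} − α₋·Γ(1−β₋)/λ₋^{1−β₋} and κ_k = α₊·Γ(k−β₊)/λ₊^{k−β₊} + (−1)^k·α₋·Γ(k−β₋)/λ₋^{k−β₋}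 for k ≥ 2. Then for every real ξ with |ξ| < min(λ₊, λ₋), the function u ↦ Ψ(u)/u is integrable on the interval between 0 and ξ and ∫₀^{ξ} Ψ(u)/u du = Σ_{k=1}^∞ (κ_k/k)·(iξ)^k/k!, the series converging absolutely; i.e., the k-th cumulant of the stationary Ornstein–Uhlenbeck law with GTS background driving Lévy process is κ_k/k. -/
open MeasureTheory Set intervalIntegral

section OUGTSaux

lemma taylor_cpow (lam β : ℝ) (hlam : 0 < lam) (a : ℂ) (ha : ‖a‖ = 1) {z : ℂ}
    (hz : ‖z‖ < lam) :
    HasSum (fun n : ℕ => (n.factorial : ℂ)⁻¹ *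
      ((∏ j ∈ Finset.range n, ((β : ℂ) - j)) * a ^ n * (lam : ℂ) ^ ((β : ℂ) - n)) * z ^ n)
      (((lam : ℂ) + a * z) ^ (β : ℂ)) := by
  have hre : ∀ w : ℂ, w ∈ Metric.ball (0:ℂ) lam → 0 < ((lam:ℂ) + a * w).re := by
    intro w hw
    rw [Metric.mem_ball, dist_zero_right] at hw
    have h1 : ‖a * w‖ < lam := by rw [norm_mul, ha, one_mul]; exact hw
    have h2 : |(a*w).re| ≤ ‖a*w‖ := Complex.abs_re_le_norm _
    simp only [Complex.add_re, Complex.ofReal_re]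
    have := neg_abs_le ((a*w).re)
    linarith
  have hderiv : ∀ (s : ℂ) (w : ℂ), 0 < ((lam:ℂ) + a*w).re →
      HasDerivAt (fun z => ((lam:ℂ) + a*z) ^ s) (s * ((lam:ℂ)+a*w) ^ (s-1) * a) w := by
    intro s w hw
    have h1 : HasDerivAt (fun z : ℂ => (lam:ℂ) + a*z) a w := by
      simpa using ((hasDerivAt_id w).const_mul a).const_add (lam:ℂ)
    exact h1.cpow_const (Or.inl hw)
  set f : ℂ → ℂ := fun z => ((lam:ℂ) + a * z) ^ (β:ℂ) with hf
  have hiter : ∀ n : ℕ, Set.EqOn (iteratedDeriv n f)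
      (fun w => (∏ j ∈ Finset.range n, ((β:ℂ) - j)) * a ^ n * ((lam:ℂ) + a*w) ^ ((β:ℂ) - n))
      (Metric.ball (0:ℂ) lam) := by
    intro n
    induction n with
    | zero => intro w hw; simp [f]
    | succ n ih =>
      intro w hw
      rw [iteratedDeriv_succ]
      have hev : iteratedDeriv n f =ᶠ[nhds w]
          (fun w => (∏ j ∈ Finset.range n, ((β:ℂ) - j)) * a ^ n *
            ((lam:ℂ) + a*w) ^ ((β:ℂ) - n)) :=
        Filter.eventuallyEq_of_mem (Metric.isOpen_ball.mem_nhds hw) ih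
      rw [hev.deriv_eq]
      have hd := ((hderiv ((β:ℂ) - n) w (hre w hw)).const_mul
        ((∏ j ∈ Finset.range n, ((β:ℂ) - j)) * a ^ n)).deriv
      rw [hd, Finset.prod_range_succ,
        show ((n+1:ℕ):ℂ) = (n:ℂ)+1 by push_cast; ring,
        show (β:ℂ) - ((n:ℂ)+1) = (β:ℂ) - n - 1 by ring]
      ring
  have hdiff : DifferentiableOn ℂ f (Metric.ball 0 lam) := fun w hw =>
    ((hderiv (β:ℂ) w (hre w hw)).differentiableAt.differentiableWithinAt)
  have hz' : z ∈ Metric.ball (0:ℂ) lam := by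
    rw [Metric.mem_ball, dist_zero_right]; exact hz
  have h0 : (0:ℂ) ∈ Metric.ball (0:ℂ) lam := by
    rw [Metric.mem_ball, dist_self]; exact hlam
  have H := Complex.hasSum_taylorSeries_on_ball hdiff hz'
  convert H using 2 with n
  · rfl
  rw [hiter n h0]
  simp [smul_eq_mul]
  ring

lemma prodGamma (β : ℝ) (hβ0 : 0 < β) (hβ1 : β < 1) :
    ∀ n : ℕ, Real.Gamma (-β) * ∏ j ∈ Finset.range n, (β - j)
      = (-1)^n * Real.Gamma ((n : ℝ) - β) := by
  intro n
  induction n with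
  | zero => simp
  | succ n ih =>
    have hne : (n : ℝ) - β ≠ 0 := by
      rcases Nat.eq_zero_or_pos n with h | h
      · simp [h]; linarith
      · have : (1:ℝ) ≤ n := by exact_mod_cast h
        exact sub_ne_zero.mpr (by linarith)
    have hG : Real.Gamma (((n:ℝ) - β) + 1) = ((n:ℝ) - β) * Real.Gamma ((n:ℝ) - β) :=
      Real.Gamma_add_one hne
    rw [Finset.prod_range_succ, ← mul_assoc, ih,
      show ((n+1:ℕ):ℝ) - β = ((n:ℝ) - β) + 1 by push_cast; ring, hG, pow_succ]
    ring

lemma ratioSummable (α lam β : ℝ) (hα : 0 < α) (hlam : 0 < lam) (hβ0 : 0 < β)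
    (hβ1 : β < 1) (r : ℝ) (hr0 : 0 ≤ r) (hr : r < lam) :
    Summable (fun k : ℕ =>
      α * Real.Gamma (((k:ℝ)+1) - β) / lam ^ (((k:ℝ)+1) - β) / ((k+1).factorial : ℝ) * r ^ k) := by
  set A : ℕ → ℝ := fun k =>
    α * Real.Gamma (((k:ℝ)+1) - β) / lam ^ (((k:ℝ)+1) - β) / ((k+1).factorial : ℝ) * r ^ k with hA
  have hApos : ∀ k, 0 ≤ A k := by
    intro k
    have hG : 0 < Real.Gamma (((k:ℝ)+1) - β) := Real.Gamma_pos_of_pos (by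
      have : (0:ℝ) ≤ k := Nat.cast_nonneg k
      linarith)
    have : (0:ℝ) < lam ^ (((k:ℝ)+1) - β) := Real.rpow_pos_of_pos hlam _
    positivity
  have hstep : ∀ k : ℕ, A (k+1) = A k * (((k:ℝ)+1 - β) / ((k:ℝ)+2) * (r / lam)) := by
    intro k
    have hG : Real.Gamma ((((k:ℕ)+1:ℝ)+1) - β) = (((k:ℝ)+1) - β) * Real.Gamma (((k:ℝ)+1) - β) := by
      rw [show ((((k:ℕ)+1:ℝ))+1) - β = (((k:ℝ)+1) - β) + 1 by push_cast; ring]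
      exact Real.Gamma_add_one (ne_of_gt (by have : (0:ℝ) ≤ k := Nat.cast_nonneg k; linarith))
    have hpow : lam ^ ((((k:ℕ)+1:ℝ))+1 - β) = lam ^ (((k:ℝ)+1) - β) * lam := by
      rw [show (((k:ℕ)+1:ℝ))+1 - β = (((k:ℝ)+1) - β) + 1 by push_cast; ring,
        Real.rpow_add hlam, Real.rpow_one]
    have hfact : (((k+1)+1).factorial : ℝ) = ((k:ℝ)+2) * ((k+1).factorial : ℝ) := by
      rw [Nat.factorial_succ]; push_cast; ring
    simp only [hA]
    push_cast
    rw [hG, hpow, hfact, pow_succ]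
    have h1 : lam ^ (((k:ℝ)+1) - β) ≠ 0 := ne_of_gt (Real.rpow_pos_of_pos hlam _)
    have h2 : ((k+1).factorial : ℝ) ≠ 0 := by positivity
    field_simp
  apply summable_of_ratio_norm_eventually_le (r := r / lam)
    (by rw [div_lt_one hlam]; exact hr)
  filter_upwards with k
  rw [Real.norm_of_nonneg (hApos _), Real.norm_of_nonneg (hApos _), hstep]
  have h1 : ((k:ℝ)+1 - β) / ((k:ℝ)+2) ≤ 1 := by
    rw [div_le_one (by positivity)]
    linarith
  have h2 : 0 ≤ (r / lam) := by positivity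
  have h3 : 0 ≤ ((k:ℝ)+1 - β) / ((k:ℝ)+2) :=
    div_nonneg (by have : (0:ℝ) ≤ k := Nat.cast_nonneg k; linarith) (by positivity)
  calc A k * (((k:ℝ)+1 - β) / ((k:ℝ)+2) * (r / lam))
      ≤ A k * (1 * (r / lam)) := by
        apply mul_le_mul_of_nonneg_left _ (hApos k)
        exact mul_le_mul_of_nonneg_right h1 h2
    _ = r / lam * A k := by ring

lemma hasSum_shift {f : ℕ → ℂ} {S : ℂ} (h : HasSum f S) :
    HasSum (fun k => f (k+1)) (S - f 0) := by
  refine (hasSum_nat_add_iff 1).mpr ?_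
  simpa [Finset.sum_range_one] using h

lemma coeff_eq (α lam β : ℝ) (hlam : 0 < lam) (hβ0 : 0 < β) (hβ1 : β < 1)
    (s : ℝ) (n : ℕ) (u : ℝ) :
    (α : ℂ) * (Real.Gamma (-β) : ℂ) * ((n.factorial : ℂ)⁻¹ *
      ((∏ j ∈ Finset.range n, ((β : ℂ) - j)) * ((s:ℂ) * Complex.I) ^ n *
        (lam : ℂ) ^ ((β : ℂ) - n)) * (u : ℂ) ^ n)
    = ((((-s)^n * (α * Real.Gamma ((n:ℝ) - β) / lam ^ ((n:ℝ) - β))) : ℝ) : ℂ)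
        * Complex.I ^ n * (u : ℂ) ^ n / (n.factorial : ℂ) := by
  have hprod : (Real.Gamma (-β) : ℂ) * (∏ j ∈ Finset.range n, ((β:ℂ) - j))
      = ((-1:ℂ))^n * ((Real.Gamma ((n:ℝ) - β) : ℝ) : ℂ) := by
    exact_mod_cast congrArg (fun x : ℝ => (x : ℂ)) (prodGamma β hβ0 hβ1 n)
  have hpow : (lam:ℂ) ^ ((β:ℂ) - (n:ℕ)) = ((((lam ^ ((n:ℝ) - β) : ℝ))⁻¹ : ℝ) : ℂ) := by
    rw [show ((β:ℂ) - (n:ℕ)) = (((β - (n:ℝ)) : ℝ) : ℂ) by push_cast; ring,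
      ← Complex.ofReal_cpow hlam.le,
      show β - (n:ℝ) = -((n:ℝ) - β) by ring,
      Real.rpow_neg hlam.le]
  have hneg : ((-1:ℂ))^n * ((s:ℂ))^n = (((-s)^n : ℝ) : ℂ) := by
    push_cast
    rw [← mul_pow]
    ring_nf
  rw [mul_pow, hpow]
  calc (α : ℂ) * (Real.Gamma (-β) : ℂ) * ((n.factorial : ℂ)⁻¹ *
      ((∏ j ∈ Finset.range n, ((β : ℂ) - j)) * ((s:ℂ)^n * Complex.I ^ n) *
        ((((lam ^ ((n:ℝ) - β) : ℝ))⁻¹ : ℝ) : ℂ)) * (u : ℂ) ^ n)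
      = (α : ℂ) * ((Real.Gamma (-β) : ℂ) * (∏ j ∈ Finset.range n, ((β : ℂ) - j)))
        * ((s:ℂ)^n * Complex.I ^ n) * ((((lam ^ ((n:ℝ) - β) : ℝ))⁻¹ : ℝ) : ℂ)
        * (u : ℂ) ^ n * (n.factorial : ℂ)⁻¹ := by ring
    _ = (α : ℂ) * (((-1:ℂ))^n * ((s:ℂ))^n) * ((Real.Gamma ((n:ℝ) - β) : ℝ) : ℂ)
        * Complex.I ^ n * ((((lam ^ ((n:ℝ) - β) : ℝ))⁻¹ : ℝ) : ℂ)
        * (u : ℂ) ^ n * (n.factorial : ℂ)⁻¹ := by rw [hprod]; ring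
    _ = ((((-s)^n * (α * Real.Gamma ((n:ℝ) - β) / lam ^ ((n:ℝ) - β))) : ℝ) : ℂ)
        * Complex.I ^ n * (u : ℂ) ^ n / (n.factorial : ℂ) := by
        rw [hneg]
        push_cast
        ring

end OUGTSaux

set_option maxHeartbeats 2000000 in
/-- Cumulants of the stationary Ornstein–Uhlenbeck law with GTS background driving Lévy
process: for `|ξ| < min(λ₊, λ₋)`, `∫₀^ξ Ψ(u)/u du = Σ_{k≥1} (κ_k/k) (iξ)^k / k!`,
converging absolutely, where the `κ_k` are the cumulants of the GTS distribution. -/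
theorem OU_GTS_cumulant_series (βp βm αp αm lamp lamm μ : ℝ)
    (hβp0 : 0 < βp) (hβp1 : βp < 1) (hβm0 : 0 < βm) (hβm1 : βm < 1)
    (hαp : 0 < αp) (hαm : 0 < αm) (hlamp : 0 < lamp) (hlamm : 0 < lamm)
    (Ψ : ℝ → ℂ)
    (hΨ : ∀ u : ℝ, Ψ u
      = (μ * u : ℂ) * Complex.I
        + (αp : ℂ) * (Real.Gamma (-βp) : ℂ) *
            (((lamp : ℂ) - Complex.I * u) ^ (βp : ℂ) - (lamp : ℂ) ^ (βp : ℂ))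
        + (αm : ℂ) * (Real.Gamma (-βm) : ℂ) *
            (((lamm : ℂ) + Complex.I * u) ^ (βm : ℂ) - (lamm : ℂ) ^ (βm : ℂ)))
    (κ : ℕ → ℝ)
    (hκ1 : κ 1 = μ + αp * Real.Gamma (1 - βp) / lamp ^ (1 - βp)
        - αm * Real.Gamma (1 - βm) / lamm ^ (1 - βm))
    (hκk : ∀ k : ℕ, 2 ≤ k →
      κ k = αp * Real.Gamma ((k : ℝ) - βp) / lamp ^ ((k : ℝ) - βp)
        + (-1 : ℝ) ^ k * αm * Real.Gamma ((k : ℝ) - βm) / lamm ^ ((k : ℝ) - βm)) :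
    ∀ ξ : ℝ, |ξ| < min lamp lamm →
      IntervalIntegrable (fun u : ℝ => Ψ u / (u : ℂ)) volume 0 ξ ∧
      Summable (fun k : ℕ =>
        ‖((κ (k + 1) / ((k : ℝ) + 1) : ℝ) : ℂ) * (Complex.I * ξ) ^ (k + 1) /
          ((k + 1).factorial : ℂ)‖) ∧
      ∫ u in (0 : ℝ)..ξ, Ψ u / (u : ℂ)
        = ∑' k : ℕ,
            ((κ (k + 1) / ((k : ℝ) + 1) : ℝ) : ℂ) * (Complex.I * ξ) ^ (k + 1) /
              ((k + 1).factorial : ℂ) := by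
  intro ξ hξ
  have hξp : |ξ| < lamp := lt_of_lt_of_le hξ (min_le_left _ _)
  have hξm : |ξ| < lamm := lt_of_lt_of_le hξ (min_le_right _ _)
  -- the key HasSum for Ψ
  have key : ∀ u : ℝ, |u| < min lamp lamm →
      HasSum (fun k : ℕ => ((κ (k+1) : ℝ) : ℂ) * Complex.I ^ (k+1) * (u:ℂ) ^ (k+1)
        / ((k+1).factorial : ℂ)) (Ψ u) := by
    intro u hu
    have hup : ‖(u:ℂ)‖ < lamp := by
      rw [Complex.norm_real, Real.norm_eq_abs]; exact lt_of_lt_of_le hu (min_le_left _ _)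
    have hum : ‖(u:ℂ)‖ < lamm := by
      rw [Complex.norm_real, Real.norm_eq_abs]; exact lt_of_lt_of_le hu (min_le_right _ _)
    have hp := (taylor_cpow lamp βp hlamp (((-1:ℝ):ℂ) * Complex.I) (by simp) hup).mul_left
      ((αp:ℂ) * (Real.Gamma (-βp) : ℂ))
    have hm := (taylor_cpow lamm βm hlamm (((1:ℝ):ℂ) * Complex.I) (by simp) hum).mul_left
      ((αm:ℂ) * (Real.Gamma (-βm) : ℂ))
    have hsum := hp.add hm
    have h2 := hasSum_shift hsum
    have hμ : HasSum (fun k : ℕ => if k = 0 then ((μ:ℂ) * (u:ℂ) * Complex.I) else 0)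
        ((μ:ℂ) * (u:ℂ) * Complex.I) := hasSum_ite_eq 0 _
    have H := h2.add hμ
    convert H using 1
    · funext k
      show _ = _ + _
      rw [coeff_eq αp lamp βp hlamp hβp0 hβp1 (-1) (k+1) u,
        coeff_eq αm lamm βm hlamm hβm0 hβm1 1 (k+1) u]
      rcases Nat.eq_zero_or_pos k with rfl | hk
      · rw [if_pos rfl, hκ1]
        norm_num
        push_cast
        ring
      · rw [if_neg (by omega), hκk (k+1) (by omega)]
        push_cast
        rw [neg_neg, one_pow, one_mul]
        ring
    · rw [hΨ u]
      have hb1 : ((lamp:ℂ) + ((-1:ℝ):ℂ) * Complex.I * (u:ℂ)) = (lamp : ℂ) - Complex.I * u := by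
        push_cast; ring
      have hb2 : ((lamm:ℂ) + ((1:ℝ):ℂ) * Complex.I * (u:ℂ)) = (lamm : ℂ) + Complex.I * u := by
        push_cast; ring
      rw [hb1, hb2]
      simp only [Nat.factorial_zero, Nat.cast_one, inv_one, Finset.prod_range_zero, pow_zero,
        Nat.cast_zero, sub_zero, one_mul, mul_one]
      push_cast
      ring
  -- membership bound
  have humem : ∀ v : ℝ, v ∈ Set.uIoc (0:ℝ) ξ → |v| ≤ |ξ| := by
    intro v hv
    rw [Set.mem_uIoc] at hv
    rcases hv with ⟨h1, h2⟩ | ⟨h1, h2⟩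
    · rw [abs_of_pos h1, abs_of_nonneg (le_trans h1.le h2)]; exact h2
    · rw [abs_of_nonpos h2, abs_of_neg (lt_of_lt_of_le h1 h2)]; linarith
  -- positivity facts
  have hΓp : ∀ k : ℕ, 0 < Real.Gamma (((k:ℝ)+1) - βp) := fun k =>
    Real.Gamma_pos_of_pos (by have : (0:ℝ) ≤ k := Nat.cast_nonneg k; linarith)
  have hΓm : ∀ k : ℕ, 0 < Real.Gamma (((k:ℝ)+1) - βm) := fun k =>
    Real.Gamma_pos_of_pos (by have : (0:ℝ) ≤ k := Nat.cast_nonneg k; linarith)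
  have hLp : ∀ k : ℕ, (0:ℝ) < lamp ^ (((k:ℝ)+1) - βp) := fun k => Real.rpow_pos_of_pos hlamp _
  have hLm : ∀ k : ℕ, (0:ℝ) < lamm ^ (((k:ℝ)+1) - βm) := fun k => Real.rpow_pos_of_pos hlamm _
  -- the bound sequence
  set bnd : ℕ → ℝ := fun k =>
    αp * Real.Gamma (((k:ℝ)+1) - βp) / lamp ^ (((k:ℝ)+1) - βp) / ((k+1).factorial : ℝ) * |ξ|^k
    + αm * Real.Gamma (((k:ℝ)+1) - βm) / lamm ^ (((k:ℝ)+1) - βm) / ((k+1).factorial : ℝ) * |ξ|^k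
    + (if k = 0 then |μ| else 0) with hbnd_def
  have hbnd : Summable bnd :=
    ((ratioSummable αp lamp βp hαp hlamp hβp0 hβp1 |ξ| (abs_nonneg ξ) hξp).add
      (ratioSummable αm lamm βm hαm hlamm hβm0 hβm1 |ξ| (abs_nonneg ξ) hξm)).add
      ((hasSum_ite_eq 0 |μ|).summable)
  -- real bound on the coefficients
  have hFb' : ∀ (k : ℕ) (v : ℝ), |v| ≤ |ξ| →
      |κ (k+1)| * |v|^k / ((k+1).factorial : ℝ) ≤ bnd k := by
    intro k v hv
    have hfpos : (0:ℝ) < ((k+1).factorial : ℝ) := by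
      exact_mod_cast Nat.factorial_pos (k+1)
    have hvk : |v|^k ≤ |ξ|^k := pow_le_pow_left₀ (abs_nonneg v) hv k
    have hκb : |κ (k+1)| ≤ αp * Real.Gamma (((k:ℝ)+1) - βp) / lamp ^ (((k:ℝ)+1) - βp)
        + αm * Real.Gamma (((k:ℝ)+1) - βm) / lamm ^ (((k:ℝ)+1) - βm)
        + (if k = 0 then |μ| else 0) := by
      have hA : (0:ℝ) < αp * Real.Gamma (((k:ℝ)+1) - βp) / lamp ^ (((k:ℝ)+1) - βp) := by
        have := hΓp k; have := hLp k; positivity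
      have hB : (0:ℝ) < αm * Real.Gamma (((k:ℝ)+1) - βm) / lamm ^ (((k:ℝ)+1) - βm) := by
        have := hΓm k; have := hLm k; positivity
      rcases Nat.eq_zero_or_pos k with rfl | hk
      · rw [if_pos rfl]
        have e0 : ((0:ℕ):ℝ) + 1 = 1 := by norm_num
        rw [e0] at hA hB ⊢
        rw [hκ1]
        have t1 := abs_add_le (μ + αp * Real.Gamma (1 - βp) / lamp ^ (1 - βp))
          (-(αm * Real.Gamma (1 - βm) / lamm ^ (1 - βm)))
        have t2 := abs_add_le μ (αp * Real.Gamma (1 - βp) / lamp ^ (1 - βp))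
        rw [abs_neg] at t1
        rw [abs_of_pos hA] at t2
        rw [abs_of_pos hB] at t1
        rw [sub_eq_add_neg]
        linarith
      · rw [if_neg (by omega), hκk (k+1) (by omega)]
        have ecast : ((k+1:ℕ):ℝ) = (k:ℝ) + 1 := by push_cast; ring
        rw [ecast]
        have t1 := abs_add_le (αp * Real.Gamma (((k:ℝ)+1) - βp) / lamp ^ (((k:ℝ)+1) - βp))
          ((-1:ℝ) ^ (k+1) * αm * Real.Gamma (((k:ℝ)+1) - βm) / lamm ^ (((k:ℝ)+1) - βm))
        have t3 : |(-1:ℝ) ^ (k+1) * αm * Real.Gamma (((k:ℝ)+1) - βm) / lamm ^ (((k:ℝ)+1) - βm)|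
            = αm * Real.Gamma (((k:ℝ)+1) - βm) / lamm ^ (((k:ℝ)+1) - βm) := by
          rw [show (-1:ℝ) ^ (k+1) * αm * Real.Gamma (((k:ℝ)+1) - βm) / lamm ^ (((k:ℝ)+1) - βm)
            = (-1:ℝ) ^ (k+1) * (αm * Real.Gamma (((k:ℝ)+1) - βm) / lamm ^ (((k:ℝ)+1) - βm)) by
              ring, abs_mul, abs_pow, abs_neg, abs_one, one_pow, one_mul, abs_of_pos hB]
        rw [abs_of_pos hA] at t1
        rw [t3] at t1
        linarith
    have hnn : (0:ℝ) ≤ |v|^k / ((k+1).factorial : ℝ) := by positivity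
    calc |κ (k+1)| * |v|^k / ((k+1).factorial : ℝ)
        ≤ (αp * Real.Gamma (((k:ℝ)+1) - βp) / lamp ^ (((k:ℝ)+1) - βp)
            + αm * Real.Gamma (((k:ℝ)+1) - βm) / lamm ^ (((k:ℝ)+1) - βm)
            + (if k = 0 then |μ| else 0)) * |ξ|^k / ((k+1).factorial : ℝ) := by
          apply div_le_div_of_nonneg_right ?_ hfpos.le |>.trans_eq rfl
          apply mul_le_mul hκb hvk (by positivity) ?_
          have hA := hΓp k; have := hLp k; have hB := hΓm k; have := hLm k
          have : 0 ≤ (if k = 0 then |μ| else 0) := by split <;> positivity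
          positivity
      _ ≤ bnd k := by
          rw [hbnd_def]
          have h1 : (0:ℝ) < ((k+1).factorial : ℝ) := hfpos
          rcases Nat.eq_zero_or_pos k with rfl | hk
          · simp only [if_pos rfl, pow_zero, mul_one]
            rw [show ((0+1:ℕ).factorial : ℝ) = 1 by norm_num]
            ring_nf
            linarith [abs_nonneg μ]
          · simp only [if_neg (by omega : ¬ k = 0), add_zero]
            ring_nf
            exact le_rfl
  -- continuity of Ψ
  have hΨcont : Continuous Ψ := by
    have hΨfun : Ψ = fun u : ℝ =>
      (μ * u : ℂ) * Complex.I
        + (αp : ℂ) * (Real.Gamma (-βp) : ℂ) *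
            (((lamp : ℂ) - Complex.I * u) ^ (βp : ℂ) - (lamp : ℂ) ^ (βp : ℂ))
        + (αm : ℂ) * (Real.Gamma (-βm) : ℂ) *
            (((lamm : ℂ) + Complex.I * u) ^ (βm : ℂ) - (lamm : ℂ) ^ (βm : ℂ)) := funext hΨ
    rw [hΨfun]
    have c1 : Continuous fun u : ℝ => ((lamp : ℂ) - Complex.I * u) ^ (βp : ℂ) := by
      apply Continuous.cpow
        (continuous_const.sub (continuous_const.mul Complex.continuous_ofReal)) continuous_const
      intro x
      rw [Complex.mem_slitPlane_iff]
      left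
      simpa [Complex.sub_re, Complex.mul_re] using hlamp
    have c2 : Continuous fun u : ℝ => ((lamm : ℂ) + Complex.I * u) ^ (βm : ℂ) := by
      apply Continuous.cpow
        (continuous_const.add (continuous_const.mul Complex.continuous_ofReal)) continuous_const
      intro x
      rw [Complex.mem_slitPlane_iff]
      left
      simpa [Complex.add_re, Complex.mul_re] using hlamm
    exact (((continuous_const.mul Complex.continuous_ofReal).mul continuous_const).add
      (continuous_const.mul (c1.sub continuous_const))).add
      (continuous_const.mul (c2.sub continuous_const))
  have hne : ∀ᵐ v : ℝ ∂(volume : Measure ℝ), v ≠ 0 := by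
    have h : {v : ℝ | ¬ v ≠ 0} = {0} := by ext v; simp
    rw [MeasureTheory.ae_iff, h]
    exact measure_singleton 0
  have hkey_div : ∀ v : ℝ, v ≠ 0 → |v| ≤ |ξ| →
      HasSum (fun k : ℕ => ((κ (k+1) : ℝ) : ℂ) * Complex.I ^ (k+1) * (v:ℂ) ^ k
        / ((k+1).factorial : ℂ)) (Ψ v / (v:ℂ)) := by
    intro v hv0 hvle
    have h := (key v (lt_of_le_of_lt hvle hξ)).div_const (v:ℂ)
    have hvne : (v:ℂ) ≠ 0 := Complex.ofReal_ne_zero.mpr hv0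
    have hfun : (fun k : ℕ => (((κ (k+1) : ℝ) : ℂ) * Complex.I ^ (k+1) * (v:ℂ) ^ (k+1)
        / ((k+1).factorial : ℂ)) / (v:ℂ))
        = fun k : ℕ => ((κ (k+1) : ℝ) : ℂ) * Complex.I ^ (k+1) * (v:ℂ) ^ k
          / ((k+1).factorial : ℂ) := by
      funext k
      have hfne : ((k+1).factorial : ℂ) ≠ 0 :=
        Nat.cast_ne_zero.mpr (Nat.factorial_ne_zero (k+1))
      rw [pow_succ]
      field_simp
      ring
    rwa [hfun] at h
  have hnormF : ∀ (k : ℕ) (v : ℝ),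
      ‖((κ (k+1) : ℝ) : ℂ) * Complex.I ^ (k+1) * (v:ℂ) ^ k / ((k+1).factorial : ℂ)‖
        = |κ (k+1)| * |v|^k / ((k+1).factorial : ℝ) := by
    intro k v
    simp [norm_div, norm_mul, norm_pow, Complex.norm_I, Complex.norm_real,
      Real.norm_eq_abs, Complex.norm_natCast]
  -- integrability
  have hInt : IntervalIntegrable (fun u : ℝ => Ψ u / (u : ℂ)) volume 0 ξ := by
    have hconst : IntervalIntegrable (fun _ : ℝ => (∑' k, bnd k : ℝ)) volume 0 ξ :=
      intervalIntegrable_const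
    rw [intervalIntegrable_iff] at hconst ⊢
    refine Integrable.mono' hconst ?_ ?_
    · exact (hΨcont.measurable.div Complex.measurable_ofReal).aestronglyMeasurable
    · filter_upwards [ae_restrict_mem measurableSet_uIoc, ae_restrict_of_ae hne]
        with v hv1 hv0
      have hvle := humem v hv1
      have hs := hkey_div v hv0 hvle
      have hsn : Summable (fun k : ℕ => ‖((κ (k+1) : ℝ) : ℂ) * Complex.I ^ (k+1) * (v:ℂ) ^ k
          / ((k+1).factorial : ℂ)‖) := by
        refine Summable.of_nonneg_of_le (fun k => norm_nonneg _) (fun k => ?_) hbnd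
        rw [hnormF]
        exact hFb' k v hvle
      rw [← hs.tsum_eq]
      refine le_trans (norm_tsum_le_tsum_norm hsn) (Summable.tsum_le_tsum (fun k => ?_) hsn hbnd)
      rw [hnormF]
      exact hFb' k v hvle
  -- summability of the series of norms
  have hSummable : Summable (fun k : ℕ =>
      ‖((κ (k + 1) / ((k : ℝ) + 1) : ℝ) : ℂ) * (Complex.I * ξ) ^ (k + 1) /
        ((k + 1).factorial : ℂ)‖) := by
    refine Summable.of_nonneg_of_le (fun k => norm_nonneg _) (fun k => ?_) (hbnd.mul_right |ξ|)
    have e1 : ‖((κ (k + 1) / ((k : ℝ) + 1) : ℝ) : ℂ) * (Complex.I * ξ) ^ (k + 1) /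
        ((k + 1).factorial : ℂ)‖
        = |κ (k+1)| / ((k:ℝ)+1) * |ξ|^(k+1) / ((k+1).factorial : ℝ) := by
      have hk0 : (0:ℝ) < (k:ℝ)+1 := by positivity
      simp [norm_div, norm_mul, norm_pow, Complex.norm_I, Complex.norm_real,
        Real.norm_eq_abs, Complex.norm_natCast, abs_div, abs_of_pos hk0]
      rw [show ((k:ℂ)+1) = ((k+1:ℕ):ℂ) by push_cast; ring, Complex.norm_natCast]
      push_cast
      ring
    rw [e1, pow_succ]
    have h2 : |κ (k+1)| / ((k:ℝ)+1) ≤ |κ (k+1)| :=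
      div_le_self (abs_nonneg _) (by have : (0:ℝ) ≤ k := Nat.cast_nonneg k; linarith)
    have hfpos : (0:ℝ) < ((k+1).factorial : ℝ) := by exact_mod_cast Nat.factorial_pos (k+1)
    calc |κ (k+1)| / ((k:ℝ)+1) * (|ξ|^k * |ξ|) / ((k+1).factorial : ℝ)
        ≤ |κ (k+1)| * (|ξ|^k * |ξ|) / ((k+1).factorial : ℝ) := by gcongr
      _ = |κ (k+1)| * |ξ|^k / ((k+1).factorial : ℝ) * |ξ| := by ring
      _ ≤ bnd k * |ξ| := mul_le_mul_of_nonneg_right (hFb' k ξ le_rfl) (abs_nonneg ξ)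
  -- termwise integration
  have HSI : HasSum (fun k : ℕ => ∫ v in (0:ℝ)..ξ,
      (((κ (k+1) : ℝ) : ℂ) * Complex.I ^ (k+1) * (v:ℂ) ^ k / ((k+1).factorial : ℂ)))
      (∫ v in (0:ℝ)..ξ, Ψ v / (v:ℂ)) := by
    apply intervalIntegral.hasSum_integral_of_dominated_convergence
      (bound := fun k (_ : ℝ) => bnd k)
    · intro k
      exact ((continuous_const.mul (Complex.continuous_ofReal.pow k)).div_const
        _).aestronglyMeasurable
    · intro k
      filter_upwards with v hv
      rw [hnormF]
      exact hFb' k v (humem v hv)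
    · exact Filter.Eventually.of_forall (fun v _ => hbnd)
    · exact intervalIntegrable_const
    · filter_upwards [hne] with v hv0 hv
      exact hkey_div v hv0 (humem v hv)
  refine ⟨hInt, hSummable, ?_⟩
  rw [← HSI.tsum_eq]
  refine tsum_congr fun k => ?_
  have hfe : (fun v : ℝ => ((κ (k+1) : ℝ) : ℂ) * Complex.I ^ (k+1) * (v:ℂ) ^ k
      / ((k+1).factorial : ℂ))
      = fun v : ℝ => (((κ (k+1) : ℝ) : ℂ) * Complex.I ^ (k+1) / ((k+1).factorial : ℂ))
        * (((v^k : ℝ)) : ℂ) := by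
    funext v
    push_cast
    ring
  rw [hfe, intervalIntegral.integral_const_mul, intervalIntegral.integral_ofReal, integral_pow]
  have hk1 : ((k:ℂ)+1) ≠ 0 := by
    exact_mod_cast Nat.succ_ne_zero k
  have hfne : ((k+1).factorial : ℂ) ≠ 0 := Nat.cast_ne_zero.mpr (Nat.factorial_ne_zero (k+1))
  rw [zero_pow (Nat.succ_ne_zero k)]
  push_cast [mul_pow]
  field_simp
  ring
end
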